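/- arXiv:2308.15598 — 6 statements merged into one kernel-verified Lean document; each statement's English description precedes it below -/
import Mathlib

section
/- Let A ∈ ℕ^{d×n} be a matrix of rank d whose row span contains the all-ones vector (1,…,1), and let M_A ⊆ Δ_{n−1} be the associated toric model. If p ∈ Δ_{n−1} maximizes the function u ↦ D_{M_A}(u) over Δ_{n−1}, then |supp(p)| ≤ d. -/
open scoped BigOperators Pointwise

attribute [local instance] Classical.propDecidable

def simplex (ι : Type*) [Fintype ι] : Set (ι → ℝ) :=
  {p | (∀ i, 0 ≤ p i) ∧ ∑ i, p i = 1}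

noncomputable def KL {ι : Type*} [Fintype ι] (p q : ι → ℝ) : EReal :=
  if ∀ i, q i = 0 → p i = 0 then (((∑ i, p i * Real.log (p i / q i)) : ℝ) : EReal) else ⊤

noncomputable def divFrom {ι : Type*} [Fintype ι] (M : Set (ι → ℝ)) (p : ι → ℝ) : EReal :=
  ⨅ q ∈ M, KL p q

noncomputable def EA {κ ι : Type*} [Fintype κ] [Fintype ι] (A : Matrix κ ι ℕ) : Set (ι → ℝ) :=
  {p | ∃ θ : κ → ℝ, ∀ j, p j =
    Real.exp (∑ i, θ i * (A i j : ℝ)) / ∑ l, Real.exp (∑ i, θ i * (A i l : ℝ))}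

section Aux

variable {d n : ℕ} (A : Matrix (Fin d) (Fin n) ℕ)

lemma EA_pos (hn : 0 < n) {q : Fin n → ℝ} (hq : q ∈ EA A) : ∀ j, 0 < q j := by
  obtain ⟨θ, hθ⟩ := hq
  intro j
  rw [hθ j]
  have : Nonempty (Fin n) := ⟨⟨0, hn⟩⟩
  exact div_pos (Real.exp_pos _) (Finset.sum_pos (fun l _ => Real.exp_pos _)
    Finset.univ_nonempty)

lemma EA_sum_one (hn : 0 < n) {q : Fin n → ℝ} (hq : q ∈ EA A) : ∑ j, q j = 1 := by
  obtain ⟨θ, hθ⟩ := hq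
  have : Nonempty (Fin n) := ⟨⟨0, hn⟩⟩
  have hZ : 0 < ∑ l, Real.exp (∑ i, θ i * (A i l : ℝ)) :=
    Finset.sum_pos (fun l _ => Real.exp_pos _) Finset.univ_nonempty
  simp only [hθ]
  rw [← Finset.sum_div, div_self hZ.ne']

lemma KL_eq_of_pos {ι : Type*} [Fintype ι] (u q : ι → ℝ) (hq : ∀ i, 0 < q i) :
    KL u q = (((∑ i, u i * Real.log (u i / q i)) : ℝ) : EReal) := by
  rw [KL, if_pos]
  intro i hi
  exact absurd hi (hq i).ne'

lemma gibbs {ι : Type*} [Fintype ι] {u q : ι → ℝ} (hu : u ∈ simplex ι)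
    (hqpos : ∀ i, 0 < q i) (hqsum : ∑ i, q i = 1) :
    0 ≤ ∑ i, u i * Real.log (u i / q i) := by
  have key : ∀ i, u i - q i ≤ u i * Real.log (u i / q i) := by
    intro i
    rcases eq_or_lt_of_le (hu.1 i) with h0 | hpos
    · simp [← h0, (hqpos i).le]
    · have h1 : Real.log (q i / u i) ≤ q i / u i - 1 :=
        Real.log_le_sub_one_of_pos (div_pos (hqpos i) hpos)
      have h2 : Real.log (u i / q i) = - Real.log (q i / u i) := by
        rw [← Real.log_inv, inv_div]
      rw [h2]
      have := mul_le_mul_of_nonneg_left h1 hpos.le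
      have h3 : u i * (q i / u i - 1) = q i - u i := by
        field_simp
      nlinarith
  calc (0 : ℝ) = ∑ i, (u i - q i) := by rw [Finset.sum_sub_distrib, hu.2, hqsum]; ring
  _ ≤ _ := Finset.sum_le_sum (fun i _ => key i)

/-- Lower bound for KL at points of the closure. -/
lemma KL_closure_ge (hn : 0 < n) (u : Fin n → ℝ) {q : Fin n → ℝ}
    (hq : q ∈ closure (EA A)) : divFrom (EA A) u ≤ KL u q := by
  by_cases hc : ∀ i, q i = 0 → u i = 0
  · -- get a sequence
    obtain ⟨x, hxmem, hxlim⟩ := mem_closure_iff_seq_limit.mp hq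
    have hxpos : ∀ k j, 0 < x k j := fun k => EA_pos A hn (hxmem k)
    have hKLk : ∀ k, KL u (x k) = (((∑ i, u i * Real.log (u i / x k i)) : ℝ) : EReal) :=
      fun k => KL_eq_of_pos u (x k) (hxpos k)
    have hKLq : KL u q = (((∑ i, u i * Real.log (u i / q i)) : ℝ) : EReal) := by
      rw [KL, if_pos hc]
    have htend : Filter.Tendsto (fun k => ∑ i, u i * Real.log (u i / x k i))
        Filter.atTop (nhds (∑ i, u i * Real.log (u i / q i))) := by
      apply tendsto_finset_sum
      intro i _
      by_cases hui : u i = 0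
      · simp only [hui, zero_mul]
        exact tendsto_const_nhds
      · have hqi : q i ≠ 0 := fun h => hui (hc i h)
        have hxi : Filter.Tendsto (fun k => x k i) Filter.atTop (nhds (q i)) :=
          ((continuous_apply i).continuousAt).tendsto.comp hxlim
        have hcont : ContinuousAt (fun t : ℝ => u i * Real.log (u i / t)) (q i) := by
          apply ContinuousAt.mul continuousAt_const
          apply (Real.continuousAt_log (div_ne_zero hui hqi)).comp
          exact ContinuousAt.div continuousAt_const continuousAt_id hqi
        exact hcont.tendsto.comp hxi
    have htendE : Filter.Tendsto (fun k => ((((∑ i, u i * Real.log (u i / x k i)) : ℝ)) : EReal))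
        Filter.atTop (nhds (((∑ i, u i * Real.log (u i / q i) : ℝ)) : EReal)) :=
      EReal.tendsto_coe.mpr htend
    rw [hKLq]
    apply ge_of_tendsto htendE
    filter_upwards with k
    rw [← hKLk k]
    exact iInf₂_le (x k) (hxmem k)
  · rw [KL, if_neg hc]
    exact le_top

lemma divFrom_closure_ge (hn : 0 < n) (u : Fin n → ℝ) :
    divFrom (EA A) u ≤ divFrom (closure (EA A)) u :=
  le_iInf₂ (fun q hq => KL_closure_ge A hn u hq)

/-- Key decomposition of the KL sum against an exponential family member. -/
lemma sum_log_decomp (hn : 0 < n) (θ : Fin d → ℝ) {q : Fin n → ℝ}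
    (hq : ∀ j, q j = Real.exp (∑ i, θ i * (A i j : ℝ)) /
      ∑ l, Real.exp (∑ i, θ i * (A i l : ℝ))) (u : Fin n → ℝ) :
    ∑ j, u j * Real.log (u j / q j) =
      ∑ j, u j * Real.log (u j) - (∑ i, θ i * ∑ j, u j * (A i j : ℝ)) +
      (∑ j, u j) * Real.log (∑ l, Real.exp (∑ i, θ i * (A i l : ℝ))) := by
  have : Nonempty (Fin n) := ⟨⟨0, hn⟩⟩
  set Z := ∑ l, Real.exp (∑ i, θ i * (A i l : ℝ)) with hZdef
  have hZ : 0 < Z := Finset.sum_pos (fun l _ => Real.exp_pos _) Finset.univ_nonempty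
  have hlogq : ∀ j, Real.log (q j) = (∑ i, θ i * (A i j : ℝ)) - Real.log Z := by
    intro j
    rw [hq j, Real.log_div (Real.exp_ne_zero _) hZ.ne', Real.log_exp]
  have hterm : ∀ j, u j * Real.log (u j / q j) =
      u j * Real.log (u j) - u j * (∑ i, θ i * (A i j : ℝ)) + u j * Real.log Z := by
    intro j
    by_cases hu : u j = 0
    · simp [hu]
    · have hqj : q j ≠ 0 := by
        rw [hq j]
        exact (div_pos (Real.exp_pos _) hZ).ne'
      rw [Real.log_div hu hqj, hlogq j]
      ring
  rw [Finset.sum_congr rfl (fun j _ => hterm j)]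
  have hswap : ∑ j, u j * (∑ i, θ i * (A i j : ℝ)) = ∑ i, θ i * ∑ j, u j * (A i j : ℝ) := by
    simp only [Finset.mul_sum]
    rw [Finset.sum_comm]
    exact Finset.sum_congr rfl (fun i _ => Finset.sum_congr rfl (fun j _ => by ring))
  rw [Finset.sum_add_distrib, Finset.sum_sub_distrib, hswap, ← Finset.sum_mul]

end Aux

section Main

variable {d n : ℕ} (A : Matrix (Fin d) (Fin n) ℕ)

lemma entropy_le (hn : 0 < n) {M : Set (Fin n → ℝ)} (hM : M = closure (EA A))
    {p u : Fin n → ℝ} (hp : p ∈ simplex (Fin n)) (hu : u ∈ simplex (Fin n))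
    (hmom : ∀ i, ∑ j, u j * (A i j : ℝ) = ∑ j, p j * (A i j : ℝ))
    (hmax : ∀ w ∈ simplex (Fin n), divFrom M w ≤ divFrom M p) :
    ∑ j, u j * Real.log (u j) ≤ ∑ j, p j * Real.log (p j) := by
  by_contra hcon
  push_neg at hcon
  set c : ℝ := (∑ j, u j * Real.log (u j)) - ∑ j, p j * Real.log (p j) with hcdef
  have hc : 0 < c := by simp only [hcdef]; linarith
  -- the uniform distribution witnesses finiteness
  set q0 : Fin n → ℝ := fun j => Real.exp (∑ i, (0 : Fin d → ℝ) i * (A i j : ℝ)) /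
      ∑ l, Real.exp (∑ i, (0 : Fin d → ℝ) i * (A i l : ℝ)) with hq0def
  have hq0 : q0 ∈ EA A := ⟨0, fun j => rfl⟩
  have hq0M : q0 ∈ M := hM ▸ subset_closure hq0
  set D := divFrom M p with hDdef
  have hDtop : D ≠ ⊤ := by
    have h1 : D ≤ KL p q0 := iInf₂_le q0 hq0M
    rw [KL_eq_of_pos p q0 (EA_pos A hn hq0)] at h1
    exact (h1.trans_lt (EReal.coe_lt_top _)).ne
  have hEAp_nonneg : (0 : EReal) ≤ divFrom (EA A) p := by
    apply le_iInf₂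
    intro q hq
    rw [KL_eq_of_pos p q (EA_pos A hn hq)]
    exact_mod_cast gibbs hp (EA_pos A hn hq) (EA_sum_one A hn hq)
  have hDEA : D ≤ divFrom (EA A) p := by
    apply le_iInf₂
    intro q hq
    exact iInf₂_le q (hM ▸ subset_closure hq)
  have hDbot : D ≠ ⊥ := by
    have : (0 : EReal) ≤ D := by
      rw [hDdef, hM]
      exact le_trans hEAp_nonneg (divFrom_closure_ge A hn p)
    exact fun h => by simp [h] at this
  -- pointwise identity
  have hident : ∀ q ∈ EA A, KL u q = KL p q + (c : EReal) := by
    intro q hq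
    obtain ⟨θ, hθ⟩ := hq
    have hqE : q ∈ EA A := ⟨θ, hθ⟩
    rw [KL_eq_of_pos u q (EA_pos A hn hqE), KL_eq_of_pos p q (EA_pos A hn hqE),
      ← EReal.coe_add, EReal.coe_eq_coe_iff]
    rw [sum_log_decomp A hn θ hθ u, sum_log_decomp A hn θ hθ p]
    have h1 : (∑ i, θ i * ∑ j, u j * (A i j : ℝ)) = ∑ i, θ i * ∑ j, p j * (A i j : ℝ) :=
      Finset.sum_congr rfl (fun i _ => by rw [hmom i])
    rw [h1, hu.2, hp.2, hcdef]
    ring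
  have hstep : divFrom (EA A) p + (c : EReal) ≤ divFrom (EA A) u := by
    apply le_iInf₂
    intro q hq
    rw [hident q hq]
    exact add_le_add_left (iInf₂_le q hq) _
  have hchain : D + (c : EReal) ≤ D := by
    calc D + (c : EReal) ≤ divFrom (EA A) p + (c : EReal) := add_le_add_left hDEA _
    _ ≤ divFrom (EA A) u := hstep
    _ ≤ divFrom (closure (EA A)) u := divFrom_closure_ge A hn u
    _ = divFrom M u := by rw [hM]
    _ ≤ D := hmax u hu
  have hx : ((D.toReal : ℝ) : EReal) = D := EReal.coe_toReal hDtop hDbot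
  rw [← hx, ← EReal.coe_add, EReal.coe_le_coe_iff] at hchain
  linarith

end Main


/-- If `A ∈ ℕ^{d×n}` has rank `d` and its row span contains the all-ones vector,
and `p` maximizes the divergence from the toric model `M_A` over the simplex, then
`|supp(p)| ≤ d`. -/
theorem stmt1 {d n : ℕ} (A : Matrix (Fin d) (Fin n) ℕ)
    (hrank : (A.map (Nat.cast : ℕ → ℝ)).rank = d)
    (hone : ∃ c : Fin d → ℝ, ∀ j, ∑ i, c i * (A i j : ℝ) = 1)
    (M : Set (Fin n → ℝ)) (hM : M = closure (EA A))
    (p : Fin n → ℝ) (hp : p ∈ simplex (Fin n))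
    (hmax : ∀ u ∈ simplex (Fin n), divFrom M u ≤ divFrom M p) :
    (Function.support p).ncard ≤ d := by
  by_contra hcard
  push_neg at hcard
  classical
  set S : Finset (Fin n) := Finset.univ.filter (fun j => p j ≠ 0) with hSdef
  have hsupp : Function.support p = ↑S := by
    ext j; simp [hSdef, Function.mem_support]
  rw [hsupp, Set.ncard_coe_finset] at hcard
  have hScard : 0 < S.card := lt_of_le_of_lt (Nat.zero_le d) hcard
  have hS : S.Nonempty := Finset.card_pos.mp hScard
  have hn : 0 < n := (hS.choose).pos
  have hpS : ∀ j ∈ S, 0 < p j := by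
    intro j hj
    simp only [hSdef, Finset.mem_filter] at hj
    exact (hp.1 j).lt_of_ne (Ne.symm hj.2)
  clear_value S
  -- linear algebra: find a nonzero kernel vector supported in S
  set B : Matrix (Fin d) {x // x ∈ S} ℝ := fun i j => (A i (j : Fin n) : ℝ) with hBdef
  have hninj : ¬ Function.Injective B.mulVecLin := by
    intro hinj
    have hle := LinearMap.finrank_le_finrank_of_injective hinj
    rw [Module.finrank_pi, Module.finrank_pi, Fintype.card_coe, Fintype.card_fin] at hle
    omega
  rw [← LinearMap.ker_eq_bot] at hninj
  obtain ⟨w, hwker, hw0⟩ := Submodule.ne_bot_iff _ |>.mp hninj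
  set v : Fin n → ℝ := fun j => if h : j ∈ S then w ⟨j, h⟩ else 0 with hvdef
  have hvS : ∀ j, j ∉ S → v j = 0 := fun j hj => dif_neg hj
  have hAv : ∀ i, ∑ j, v j * (A i j : ℝ) = 0 := by
    intro i
    have h1 : ∑ j, v j * (A i j : ℝ) = ∑ j ∈ S, v j * (A i j : ℝ) :=
      (Finset.sum_subset (Finset.subset_univ S)
        (fun j _ hj => by rw [hvS j hj, zero_mul])).symm
    have h2 : ∑ j ∈ S, v j * (A i j : ℝ) = ∑ j : {x // x ∈ S}, v j * (A i (j : Fin n) : ℝ) :=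
      (Finset.sum_coe_sort S _).symm
    have h3 : ∑ j : {x // x ∈ S}, v j * (A i (j : Fin n) : ℝ)
        = ∑ j : {x // x ∈ S}, B i j * w j := by
      apply Finset.sum_congr rfl
      intro j _
      rw [hvdef]
      simp only [dif_pos j.2, hBdef]
      ring
    have h4 : B.mulVecLin w i = 0 := by rw [hwker]; rfl
    rw [h1, h2, h3]
    rw [Matrix.mulVecLin_apply, Matrix.mulVec, dotProduct] at h4
    exact h4
  obtain ⟨c, hc⟩ := hone
  have hvsum : ∑ j, v j = 0 := by
    have h1 : ∑ j, v j = ∑ j, v j * ∑ i, c i * (A i j : ℝ) :=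
      Finset.sum_congr rfl (fun j _ => by rw [hc j, mul_one])
    have h2 : ∑ j, v j * ∑ i, c i * (A i j : ℝ) = ∑ i, c i * ∑ j, v j * (A i j : ℝ) := by
      simp only [Finset.mul_sum]
      rw [Finset.sum_comm]
      exact Finset.sum_congr rfl (fun i _ => Finset.sum_congr rfl (fun j _ => by ring))
    rw [h1, h2]
    simp [hAv]
  obtain ⟨j1, hj1⟩ : ∃ j : {x // x ∈ S}, w j ≠ 0 := Function.ne_iff.mp hw0
  have hvj0 : v (j1 : Fin n) ≠ 0 := by rw [hvdef]; simpa [dif_pos j1.2] using hj1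
  clear_value v
  -- choose epsilon
  obtain ⟨ε, hεpos, hb⟩ : ∃ ε : ℝ, 0 < ε ∧ ∀ j, ε * |v j| ≤ p j / 2 := by
    have hεpos : 0 < S.inf' hS (fun j => p j / (2 * (|v j| + 1))) := by
      rw [Finset.lt_inf'_iff]
      intro j hj
      have := hpS j hj
      positivity
    refine ⟨S.inf' hS (fun j => p j / (2 * (|v j| + 1))), hεpos, ?_⟩
    intro j
    by_cases hj : j ∈ S
    · have h1 : S.inf' hS (fun j => p j / (2 * (|v j| + 1))) ≤ p j / (2 * (|v j| + 1)) :=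
        Finset.inf'_le _ hj
      have h2 : (0:ℝ) ≤ |v j| := abs_nonneg _
      have h3 : 0 < p j := hpS j hj
      rw [le_div_iff₀ (by positivity)] at h1
      nlinarith
    · rw [hvS j hj]
      simp only [abs_zero, mul_zero]
      have := hp.1 j
      linarith
  set pp : Fin n → ℝ := fun j => p j + ε * v j with hppdef
  set pm : Fin n → ℝ := fun j => p j - ε * v j with hpmdef
  clear_value pp pm
  have habs : ∀ j, ε * v j ≤ ε * |v j| ∧ -(ε * |v j|) ≤ ε * v j := by
    intro j
    constructor
    · exact mul_le_mul_of_nonneg_left (le_abs_self _) hεpos.le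
    · rw [← mul_neg]
      exact mul_le_mul_of_nonneg_left (neg_abs_le _) hεpos.le
  have hppnn : ∀ j, 0 ≤ pp j := by
    intro j; have h1 := hb j; have h2 := (habs j).2; have := hp.1 j
    simp only [hppdef]; linarith
  have hpmnn : ∀ j, 0 ≤ pm j := by
    intro j; have h1 := hb j; have h2 := (habs j).1; have := hp.1 j
    simp only [hpmdef]; linarith
  have hvsum' : ∑ j, ε * v j = 0 := by rw [← Finset.mul_sum, hvsum, mul_zero]
  have hppmem : pp ∈ simplex (Fin n) := by
    refine ⟨hppnn, ?_⟩
    simp only [hppdef]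
    rw [Finset.sum_add_distrib, hp.2, hvsum']
    ring
  have hpmmem : pm ∈ simplex (Fin n) := by
    refine ⟨hpmnn, ?_⟩
    simp only [hpmdef]
    rw [Finset.sum_sub_distrib, hp.2, hvsum']
    ring
  have hAv' : ∀ i, ∑ j, (ε * v j) * (A i j : ℝ) = 0 := by
    intro i
    have : ∑ j, (ε * v j) * (A i j : ℝ) = ε * ∑ j, v j * (A i j : ℝ) := by
      rw [Finset.mul_sum]
      exact Finset.sum_congr rfl (fun j _ => by ring)
    rw [this, hAv, mul_zero]
  have hmomp : ∀ i, ∑ j, pp j * (A i j : ℝ) = ∑ j, p j * (A i j : ℝ) := by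
    intro i
    simp only [hppdef]
    have : ∀ j, (p j + ε * v j) * (A i j : ℝ) = p j * A i j + (ε * v j) * A i j :=
      fun j => by ring
    rw [Finset.sum_congr rfl (fun j _ => this j), Finset.sum_add_distrib, hAv' i, add_zero]
  have hmomm : ∀ i, ∑ j, pm j * (A i j : ℝ) = ∑ j, p j * (A i j : ℝ) := by
    intro i
    simp only [hpmdef]
    have : ∀ j, (p j - ε * v j) * (A i j : ℝ) = p j * A i j - (ε * v j) * A i j :=
      fun j => by ring
    rw [Finset.sum_congr rfl (fun j _ => this j), Finset.sum_sub_distrib, hAv' i, sub_zero]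
  have hent1 := entropy_le A hn hM hp hppmem hmomp hmax
  have hent2 := entropy_le A hn hM hp hpmmem hmomm hmax
  -- strict convexity contradiction
  have hconv : ∀ j, 2 * (p j * Real.log (p j)) ≤
      pp j * Real.log (pp j) + pm j * Real.log (pm j) := by
    intro j
    have h := Real.convexOn_mul_log.2 (Set.mem_Ici.mpr (hppnn j)) (Set.mem_Ici.mpr (hpmnn j))
      (by norm_num : (0:ℝ) ≤ 1/2) (by norm_num : (0:ℝ) ≤ 1/2) (by norm_num)
    have heq : (1/2 : ℝ) • pp j + (1/2 : ℝ) • pm j = p j := by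
      simp only [smul_eq_mul, hppdef, hpmdef]; ring
    rw [heq] at h
    have h2 : p j * Real.log (p j) ≤
        1/2 * (pp j * Real.log (pp j)) + 1/2 * (pm j * Real.log (pm j)) := by
      simpa using h
    linarith
  have hstrict : 2 * (p (j1 : Fin n) * Real.log (p (j1 : Fin n))) <
      pp (j1 : Fin n) * Real.log (pp (j1 : Fin n)) + pm (j1 : Fin n) * Real.log (pm (j1 : Fin n)) := by
    have hne : pp (j1 : Fin n) ≠ pm (j1 : Fin n) := by
      simp only [hppdef, hpmdef]
      intro h
      have : ε * v (j1 : Fin n) = 0 := by linarith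
      exact hvj0 (by
        rcases mul_eq_zero.mp this with h' | h'
        · exact absurd h' hεpos.ne'
        · exact h')
    have h := Real.strictConvexOn_mul_log.2 (Set.mem_Ici.mpr (hppnn _)) (Set.mem_Ici.mpr (hpmnn _))
      hne (by norm_num : (0:ℝ) < 1/2) (by norm_num : (0:ℝ) < 1/2) (by norm_num)
    have heq : (1/2 : ℝ) • pp (j1 : Fin n) + (1/2 : ℝ) • pm (j1 : Fin n) = p (j1 : Fin n) := by
      simp only [smul_eq_mul, hppdef, hpmdef]; ring
    rw [heq] at h
    have h2 : p (j1 : Fin n) * Real.log (p (j1 : Fin n)) <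
        1/2 * (pp (j1 : Fin n) * Real.log (pp (j1 : Fin n))) +
        1/2 * (pm (j1 : Fin n) * Real.log (pm (j1 : Fin n))) := by
      simpa using h
    linarith
  have hsum : ∑ j, 2 * (p j * Real.log (p j)) <
      ∑ j, (pp j * Real.log (pp j) + pm j * Real.log (pm j)) :=
    Finset.sum_lt_sum (fun j _ => hconv j) ⟨(j1 : Fin n), Finset.mem_univ _, hstrict⟩
  rw [Finset.sum_add_distrib, ← Finset.mul_sum] at hsum
  linarith
end

section
/- Let L ⊆ ℝⁿ be an affine subspace with L ∩ relint(Δ_{n−1}) ≠ ∅, and let M = L ∩ Δ_{n−1} be the corresponding linear model. Then the maximum over p ∈ Δ_{n−1} of D_M(p) = inf_{q∈M} D(p‖q) is attained: there exist an extreme point q* of M and an extreme point p* of the logarithmic Voronoi cell Q_{q*} = {u ∈ Δ_{n−1} : D(u‖q*) = D_M(u)} such that D(p*‖q*) = sup_{p∈Δ_{n−1}} D_M(p). -/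
open scoped BigOperators Pointwise

attribute [local instance] Classical.propDecidable

noncomputable def vtx {n : ℕ} (j : Fin n) : Fin n → ℝ := fun i => if i = j then 1 else 0

lemma vtx_mem_simplex {n : ℕ} (j : Fin n) : vtx j ∈ simplex (Fin n) := by
  constructor
  · intro i; unfold vtx; split <;> norm_num
  · simp [vtx]

lemma pos_of_mem_intrinsicInterior {n : ℕ} {x : Fin n → ℝ}
    (hx : x ∈ intrinsicInterior ℝ (simplex (Fin n))) (i : Fin n) : 0 < x i := by
  have hxs : x ∈ simplex (Fin n) := intrinsicInterior_subset hx
  rcases lt_or_eq_of_le (hxs.1 i) with h | h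
  · exact h
  exfalso
  rw [mem_intrinsicInterior] at hx
  obtain ⟨y, hy, hyx⟩ := hx
  obtain ⟨ε, hε, hball⟩ := Metric.isOpen_iff.mp isOpen_interior y hy
  have hev : vtx i ∈ affineSpan ℝ (simplex (Fin n)) :=
    subset_affineSpan ℝ _ (vtx_mem_simplex i)
  haveI : Nonempty (affineSpan ℝ (simplex (Fin n))) := ⟨⟨vtx i, hev⟩⟩
  set e : affineSpan ℝ (simplex (Fin n)) := ⟨vtx i, hev⟩ with he
  set d : ℝ := dist x (vtx i) with hdd
  have hd : 0 ≤ d := dist_nonneg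
  set t : ℝ := ε / (2 * (d + 1)) with ht
  have htpos : 0 < t := by positivity
  set z : affineSpan ℝ (simplex (Fin n)) := AffineMap.lineMap e y (1 + t) with hzdef
  have hzc : (z : Fin n → ℝ) = AffineMap.lineMap (vtx i) x (1 + t) := by
    have h2 := (affineSpan ℝ (simplex (Fin n))).subtype.apply_lineMap e y (1 + t)
    simp only [AffineSubspace.subtype_apply] at h2
    rw [hzdef, h2, hyx]
  have hz : z ∈ Metric.ball y ε := by
    rw [Metric.mem_ball]
    rw [Subtype.dist_eq, hzc, hyx]
    have hlm : (AffineMap.lineMap (vtx i) x (1 + t) : Fin n → ℝ) - x = t • (x - vtx i) := by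
      rw [AffineMap.lineMap_apply_module]
      module
    rw [dist_eq_norm, hlm, norm_smul]
    have : ‖x - vtx i‖ = d := by rw [hdd, dist_eq_norm]
    rw [this, Real.norm_eq_abs, abs_of_pos htpos]
    have h2 : t * (d + 1) = ε / 2 := by
      rw [ht]; field_simp
    nlinarith
  have hzmem : (z : Fin n → ℝ) ∈ simplex (Fin n) := Set.mem_preimage.mp (interior_subset (hball hz))
  have hzi : (z : Fin n → ℝ) i = -t := by
    rw [hzc, AffineMap.lineMap_apply_module]
    simp [vtx, ← h]
  have := hzmem.1 i
  rw [hzi] at this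
  linarith

lemma KL_vtx_of_ne {n : ℕ} (j : Fin n) (q : Fin n → ℝ) (hq : q j ≠ 0) :
    KL (vtx j) q = ((-Real.log (q j) : ℝ) : EReal) := by
  unfold KL
  rw [if_pos]
  · norm_cast
    rw [Finset.sum_eq_single j]
    · norm_num [vtx]
    · intro b _ hb; simp [vtx, hb]
    · simp
  · intro i hi
    unfold vtx
    by_cases hij : i = j
    · exact absurd (hij ▸ hi) hq
    · simp [hij]

lemma KL_vtx_of_eq {n : ℕ} (j : Fin n) (q : Fin n → ℝ) (hq : q j = 0) :
    KL (vtx j) q = ⊤ := by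
  unfold KL
  rw [if_neg]
  push_neg
  exact ⟨j, hq, by simp [vtx]⟩

lemma vtx_extreme {n : ℕ} (j : Fin n) {C : Set (Fin n → ℝ)} (hC : C ⊆ simplex (Fin n))
    (hv : vtx j ∈ C) : vtx j ∈ Set.extremePoints ℝ C := by
  rw [mem_extremePoints]
  refine ⟨hv, ?_⟩
  intro x1 h1 x2 h2 hseg
  obtain ⟨a, b, ha, hb, hab, habx⟩ := hseg
  have hx1 := hC h1
  have hx2 := hC h2
  have key : ∀ i, i ≠ j → x1 i = 0 ∧ x2 i = 0 := by
    intro i hij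
    have hzero : a * x1 i + b * x2 i = 0 := by
      have := congrFun habx i
      simpa [vtx, hij] using this
    constructor <;> nlinarith [hx1.1 i, hx2.1 i]
  have hx1j : x1 j = 1 := by
    have : ∑ i, x1 i = x1 j :=
      Finset.sum_eq_single j (fun b _ hb => (key b hb).1) (by simp)
    rw [← this, hx1.2]
  have hx2j : x2 j = 1 := by
    have : ∑ i, x2 i = x2 j :=
      Finset.sum_eq_single j (fun b _ hb => (key b hb).2) (by simp)
    rw [← this, hx2.2]
  constructor
  · funext i
    by_cases hij : i = j
    · subst hij; simp [vtx, hx1j]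
    · simp [vtx, hij, (key i hij).1]
  · funext i
    by_cases hij : i = j
    · subst hij; simp [vtx, hx2j]
    · simp [vtx, hij, (key i hij).2]

/-- For a linear model `M = L ∩ Δ_{n−1}` (with `L` an affine subspace meeting the
relative interior of the simplex), the maximum divergence from `M` is attained at an extreme
point of the logarithmic Voronoi cell of an extreme point of `M`. -/
theorem stmt3 {n : ℕ} (L : AffineSubspace ℝ (Fin n → ℝ))
    (hL : ((L : Set (Fin n → ℝ)) ∩ intrinsicInterior ℝ (simplex (Fin n))).Nonempty)
    (M : Set (Fin n → ℝ)) (hM : M = (L : Set (Fin n → ℝ)) ∩ simplex (Fin n)) :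
    ∃ qs ∈ Set.extremePoints ℝ M,
      ∃ ps ∈ Set.extremePoints ℝ {u | u ∈ simplex (Fin n) ∧ KL u qs = divFrom M u},
        KL ps qs = ⨆ p ∈ simplex (Fin n), divFrom M p := by
  obtain ⟨q0, hq0L, hq0i⟩ := hL
  have hq0pos := pos_of_mem_intrinsicInterior hq0i
  have hq0s : q0 ∈ simplex (Fin n) := intrinsicInterior_subset hq0i
  have hq0M : q0 ∈ M := hM ▸ ⟨hq0L, hq0s⟩
  have hMne : M.Nonempty := ⟨q0, hq0M⟩
  have hLclosed : IsClosed (L : Set (Fin n → ℝ)) := L.closed_of_finiteDimensional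
  have hscpt : IsCompact (simplex (Fin n)) := isCompact_stdSimplex ℝ (Fin n)
  have hMcpt : IsCompact M := by
    rw [hM]; exact hscpt.inter_left hLclosed
  have hMclosed : IsClosed M := hM ▸ hLclosed.inter (isClosed_stdSimplex ℝ (Fin n))
  have hMconv : Convex ℝ M := hM ▸ L.convex.inter (convex_stdSimplex ℝ (Fin n))
  have hMsub : M ⊆ simplex (Fin n) := hM ▸ Set.inter_subset_right
  haveI hn : Nonempty (Fin n) := by
    rcases Nat.eq_zero_or_pos n with rfl | h
    · exfalso; have := hq0s.2; simp at this
    · exact ⟨⟨0, h⟩⟩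
  have hmax : ∀ j, ∃ m ∈ M, ∀ q ∈ M, q j ≤ m j := by
    intro j
    obtain ⟨m, hm, hmm⟩ := hMcpt.exists_isMaxOn hMne ((continuous_apply j).continuousOn)
    exact ⟨m, hm, fun q hq => hmm hq⟩
  choose w hwM hwmax using hmax
  have hwpos : ∀ j, 0 < w j j := fun j => lt_of_lt_of_le (hq0pos j) (hwmax j q0 hq0M)
  obtain ⟨j0, -, hj0min⟩ := Finset.exists_min_image Finset.univ (fun j => w j j)
    ⟨Classical.arbitrary _, Finset.mem_univ _⟩
  set l : (Fin n → ℝ) →L[ℝ] ℝ := ContinuousLinearMap.proj j0 with hl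
  set F : Set (Fin n → ℝ) := {q ∈ M | ∀ y ∈ M, l y ≤ l q} with hF
  have hexp : IsExposed ℝ M F := fun _ => ⟨l, rfl⟩
  have hFne : F.Nonempty := ⟨w j0, hwM j0, fun y hy => hwmax j0 y hy⟩
  have hFcpt : IsCompact F := hMcpt.of_isClosed_subset (hexp.isClosed hMclosed) hexp.subset
  obtain ⟨qs, hqsF⟩ := hFcpt.extremePoints_nonempty hFne
  have hqsM : qs ∈ Set.extremePoints ℝ M :=
    hexp.isExtreme.extremePoints_subset_extremePoints hqsF
  have hqsFm : qs ∈ F := extremePoints_subset hqsF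
  have hqsMm : qs ∈ M := hqsFm.1
  have hqsmax : ∀ q ∈ M, q j0 ≤ qs j0 := fun q hq => hqsFm.2 q hq
  have hqspos : 0 < qs j0 := lt_of_lt_of_le (hq0pos j0) (hqsmax q0 hq0M)
  set A : ℝ := -Real.log (qs j0) with hA
  have hKL1 : KL (vtx j0) qs = (A : EReal) := KL_vtx_of_ne j0 qs (ne_of_gt hqspos)
  have hdiv1 : divFrom M (vtx j0) = (A : EReal) := by
    apply le_antisymm
    · exact hKL1 ▸ iInf₂_le qs hqsMm
    · apply le_iInf₂
      intro q hq
      by_cases h0 : q j0 = 0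
      · rw [KL_vtx_of_eq j0 q h0]; exact le_top
      · rw [KL_vtx_of_ne j0 q h0]
        have hqpos : 0 < q j0 := lt_of_le_of_ne ((hMsub hq).1 j0) (Ne.symm h0)
        exact EReal.coe_le_coe_iff.mpr (neg_le_neg (Real.log_le_log hqpos (hqsmax q hq)))
  have hq_eq : qs j0 = w j0 j0 := le_antisymm (hwmax j0 qs hqsMm) (hqsmax (w j0) (hwM j0))
  have hlogA : ∀ i, -Real.log (w i i) ≤ A := by
    intro i
    apply neg_le_neg
    apply Real.log_le_log (hq_eq ▸ hqspos)
    rw [hq_eq]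
    exact hj0min i (Finset.mem_univ i)
  have hub : ∀ p ∈ simplex (Fin n), divFrom M p ≤ (A : EReal) := by
    intro p hp
    set qb : Fin n → ℝ := ∑ j, p j • w j with hqb
    have hqbM : qb ∈ M := hMconv.sum_mem (fun j _ => hp.1 j) hp.2 (fun j _ => hwM j)
    have hqble : ∀ i, p i * w i i ≤ qb i := by
      intro i
      have hqbi : qb i = ∑ j, p j * w j i := by simp [hqb]
      rw [hqbi]
      exact Finset.single_le_sum (f := fun j => p j * w j i)
        (fun j _ => mul_nonneg (hp.1 j) ((hMsub (hwM j)).1 i)) (Finset.mem_univ i)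
    have hsupp : ∀ i, qb i = 0 → p i = 0 := by
      intro i hi
      by_contra hpi
      have hpi' : 0 < p i := lt_of_le_of_ne (hp.1 i) (Ne.symm hpi)
      have := hqble i
      nlinarith [hwpos i]
    calc divFrom M p ≤ KL p qb := iInf₂_le qb hqbM
      _ ≤ (A : EReal) := by
          unfold KL
          rw [if_pos hsupp, EReal.coe_le_coe_iff]
          calc ∑ i, p i * Real.log (p i / qb i) ≤ ∑ i, p i * A := by
                apply Finset.sum_le_sum
                intro i _
                by_cases hpi : p i = 0
                · simp [hpi]
                have hpip : 0 < p i := lt_of_le_of_ne (hp.1 i) (Ne.symm hpi)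
                have hpw : 0 < p i * w i i := mul_pos hpip (hwpos i)
                have hqbpos : 0 < qb i := lt_of_lt_of_le hpw (hqble i)
                apply mul_le_mul_of_nonneg_left _ (hp.1 i)
                calc Real.log (p i / qb i)
                    ≤ Real.log (p i / (p i * w i i)) := by
                      apply Real.log_le_log (div_pos hpip hqbpos)
                      exact div_le_div_of_nonneg_left (le_of_lt hpip) hpw (hqble i)
                  _ = -Real.log (w i i) := by
                      have : p i / (p i * w i i) = (w i i)⁻¹ := by
                        rw [div_mul_eq_div_div, div_self (ne_of_gt hpip), one_div]
                      rw [this, Real.log_inv]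
                  _ ≤ A := hlogA i
            _ = A := by rw [← Finset.sum_mul, hp.2, one_mul]
  have hsup : (⨆ p ∈ simplex (Fin n), divFrom M p) = (A : EReal) := by
    apply le_antisymm
    · exact iSup₂_le hub
    · exact hdiv1 ▸ le_iSup₂ (f := fun p _ => divFrom M p) (vtx j0) (vtx_mem_simplex j0)
  refine ⟨qs, hqsM, vtx j0, ?_, ?_⟩
  · exact vtx_extreme j0 (fun u hu => hu.1) ⟨vtx_mem_simplex j0, hKL1.trans hdiv1.symm⟩
  · rw [hKL1, hsup]
end

section
/- Let a > b > 0 and let M = {(a·x + 1/4, b·x + 1/4, −b·x + 1/4, −a·x + 1/4) : x ∈ ℝ} ∩ Δ_3 be the one-dimensional linear model in Δ_3. Then sup_{p∈Δ_3} inf_{q∈M} D(p‖q) = log(4a/(a+b)), and the set of points achieving this supremum is exactly {(0,1,0,0), (0,0,1,0)}. -/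
open scoped BigOperators Pointwise

attribute [local instance] Classical.propDecidable

set_option maxHeartbeats 1000000

private lemma log2_lt (a b : ℝ) (hb : 0 < b) (hab : b < a) :
    Real.log 2 < Real.log (4*a/(a+b)) := by
  apply Real.log_lt_log (by norm_num)
  rw [lt_div_iff₀ (by linarith)]
  linarith

lemma term_le {pi qi ci : ℝ} (hpi : 0 ≤ pi) (hci : 0 < ci) (hqi : ci ≤ qi) :
    pi * Real.log (pi/qi) ≤ pi * Real.log (pi/ci) := by
  rcases hpi.eq_or_lt with h | h
  · simp [← h]
  · refine mul_le_mul_of_nonneg_left ?_ hpi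
    have hq : 0 < qi := hci.trans_le hqi
    apply Real.log_le_log (by positivity)
    gcongr

lemma term_le_log2 {pi qi : ℝ} (hpi : 0 ≤ pi) (hqi : pi/2 ≤ qi) :
    pi * Real.log (pi/qi) ≤ pi * Real.log 2 := by
  rcases hpi.eq_or_lt with h | h
  · simp [← h]
  · have h2 : pi / (pi/2) = 2 := by field_simp
    calc pi * Real.log (pi/qi) ≤ pi * Real.log (pi/(pi/2)) :=
          term_le hpi (by linarith) hqi
      _ = pi * Real.log 2 := by rw [h2]

lemma caseII (a b : ℝ) (hb : 0 < b) (hab : b < a)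
    (p0 p1 p2 p3 : ℝ) (h0 : 0 ≤ p0) (h1 : 0 ≤ p1) (h2 : 0 ≤ p2) (h3 : 0 ≤ p3)
    (hsum : p0 + p1 + p2 + p3 = 1)
    (hc : b * (p1 + p2) < a * (p1 - p2)) :
    ∃ x : ℝ,
      0 ≤ a * x + 1/4 ∧ 0 ≤ b * x + 1/4 ∧ 0 ≤ -b * x + 1/4 ∧ 0 ≤ -a * x + 1/4 ∧
      (a * x + 1/4 = 0 → p0 = 0) ∧ (b * x + 1/4 = 0 → p1 = 0) ∧
      (-b * x + 1/4 = 0 → p2 = 0) ∧ (-a * x + 1/4 = 0 → p3 = 0) ∧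
      p0 * Real.log (p0/(a * x + 1/4)) + p1 * Real.log (p1/(b * x + 1/4))
        + p2 * Real.log (p2/(-b * x + 1/4)) + p3 * Real.log (p3/(-a * x + 1/4))
        ≤ Real.log (4*a/(a+b)) ∧
      (¬(p0 = 0 ∧ p1 = 1 ∧ p2 = 0 ∧ p3 = 0) →
        p0 * Real.log (p0/(a * x + 1/4)) + p1 * Real.log (p1/(b * x + 1/4))
        + p2 * Real.log (p2/(-b * x + 1/4)) + p3 * Real.log (p3/(-a * x + 1/4))
        < Real.log (4*a/(a+b))) := by
  have ha : 0 < a := hb.trans hab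
  have ha' : a ≠ 0 := ne_of_gt ha
  have hapb : 0 < a + b := by linarith
  have hamb : 0 < a - b := by linarith
  have hp12 : p2 < p1 := by nlinarith
  have hp1 : 0 < p1 := lt_of_le_of_lt h2 hp12
  have hmu : 0 < p1 + p2 := by linarith
  have hp3 : p3 = 1 - p0 - p1 - p2 := by linarith
  subst hp3
  obtain ⟨L, hLdef⟩ : ∃ L:ℝ, L = Real.log (4*a/(a+b)) := ⟨_, rfl⟩
  rw [← hLdef]
  obtain ⟨x, hxdef⟩ : ∃ x:ℝ, x = (2*(p0+p1+p2) - 1)/(4*a) := ⟨_, rfl⟩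
  refine ⟨x, ?_⟩
  have eq0 : a * x + 1/4 = (p0+p1+p2)/2 := by rw [hxdef]; field_simp; ring
  have eq3 : -a * x + 1/4 = (1-p0-p1-p2)/2 := by rw [hxdef]; field_simp; ring
  have d1 : b * x + 1/4
      = (p1+p2)*(a+b)/(4*a) + ((a+b)*p0 + (a-b)*(1-p0-p1-p2))/(4*a) := by
    rw [hxdef]; field_simp; ring
  have d2 : -b * x + 1/4
      = (p1+p2)*(a-b)/(4*a) + ((a-b)*p0 + (a+b)*(1-p0-p1-p2))/(4*a) := by
    rw [hxdef]; field_simp; ring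
  have hrem1 : 0 ≤ ((a+b)*p0 + (a-b)*(1-p0-p1-p2))/(4*a) := by
    apply div_nonneg _ (by linarith)
    nlinarith [mul_nonneg hapb.le h0, mul_nonneg hamb.le h3]
  have hrem2 : 0 ≤ ((a-b)*p0 + (a+b)*(1-p0-p1-p2))/(4*a) := by
    apply div_nonneg _ (by linarith)
    nlinarith [mul_nonneg hamb.le h0, mul_nonneg hapb.le h3]
  have hc1 : 0 < (p1+p2)*(a+b)/(4*a) := by positivity
  have hc2 : 0 < (p1+p2)*(a-b)/(4*a) := by positivity
  have hq1 : (p1+p2)*(a+b)/(4*a) ≤ b * x + 1/4 := by rw [d1]; linarith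
  have hq2 : (p1+p2)*(a-b)/(4*a) ≤ -b * x + 1/4 := by rw [d2]; linarith
  have hq1pos : 0 < b * x + 1/4 := lt_of_lt_of_le hc1 hq1
  have hq2pos : 0 < -b * x + 1/4 := lt_of_lt_of_le hc2 hq2
  have ht0 : p0 * Real.log (p0/(a * x + 1/4)) ≤ p0 * Real.log 2 := by
    rw [eq0]; exact term_le_log2 h0 (by linarith)
  have ht3 : (1-p0-p1-p2) * Real.log ((1-p0-p1-p2)/(-a * x + 1/4))
      ≤ (1-p0-p1-p2) * Real.log 2 := by
    rw [eq3]; exact term_le_log2 h3 (by linarith)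
  have ht1 : p1 * Real.log (p1/(b * x + 1/4))
      ≤ p1 * Real.log (p1/(p1+p2)) + p1 * L := by
    have t := term_le h1 hc1 hq1
    have harg : p1/((p1+p2)*(a+b)/(4*a)) = (p1/(p1+p2)) * (4*a/(a+b)) := by
      field_simp
    rw [harg, Real.log_mul (by positivity) (by positivity), mul_add] at t
    rw [hLdef]; exact t
  have ht2 : p2 * Real.log (p2/(-b * x + 1/4))
      ≤ p2 * Real.log (p2*(a+b)/((p1+p2)*(a-b))) + p2 * L := by
    rcases h2.eq_or_lt with h | h
    · simp [← h]
    · have t := term_le h2 hc2 hq2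
      have harg : p2/((p1+p2)*(a-b)/(4*a))
          = (p2*(a+b)/((p1+p2)*(a-b))) * (4*a/(a+b)) := by
        field_simp
      rw [harg, Real.log_mul (by positivity) (by positivity), mul_add] at t
      rw [hLdef]; exact t
  have hlog2 : Real.log 2 < L := hLdef ▸ log2_lt a b hb hab
  have hf1 : p1 * Real.log (p1/(p1+p2)) ≤ 0 := by
    have hl : Real.log (p1/(p1+p2)) ≤ 0 :=
      Real.log_nonpos (by positivity) (by rw [div_le_one hmu]; linarith)
    have := mul_le_mul_of_nonneg_left hl h1
    simpa using this
  have hargue : p2*(a+b) < (p1+p2)*(a-b) := by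
    have k1 : 0 ≤ p2*(a-b) := mul_nonneg h2 hamb.le
    nlinarith [k1, hc]
  have hf2 : p2 * Real.log (p2*(a+b)/((p1+p2)*(a-b))) ≤ 0 := by
    rcases h2.eq_or_lt with h | h
    · simp [← h]
    · have hl : Real.log (p2*(a+b)/((p1+p2)*(a-b))) < 0 := by
        apply Real.log_neg (by positivity)
        rw [div_lt_one (by positivity)]; exact hargue
      have := mul_le_mul_of_nonneg_left hl.le h2
      simpa using this
  have hf2s : 0 < p2 → p2 * Real.log (p2*(a+b)/((p1+p2)*(a-b))) < 0 := by
    intro hpos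
    have hl : Real.log (p2*(a+b)/((p1+p2)*(a-b))) < 0 := by
      apply Real.log_neg (by positivity)
      rw [div_lt_one (by positivity)]; exact hargue
    exact mul_neg_of_pos_of_neg hpos hl
  have hmul0 : p0 * Real.log 2 ≤ p0 * L := mul_le_mul_of_nonneg_left hlog2.le h0
  have hmul3 : (1-p0-p1-p2) * Real.log 2 ≤ (1-p0-p1-p2) * L :=
    mul_le_mul_of_nonneg_left hlog2.le h3
  refine ⟨by rw [eq0]; linarith, hq1pos.le, hq2pos.le, by rw [eq3]; linarith,
    by rw [eq0]; intro h; linarith, fun h => absurd h hq1pos.ne',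
    fun h => absurd h hq2pos.ne', by rw [eq3]; intro h; linarith, ?_, ?_⟩
  · linarith
  · intro hne
    have hcase : 0 < p0 + (1-p0-p1-p2) ∨ 0 < p2 := by
      by_contra hcon
      push_neg at hcon
      exact hne ⟨by linarith [hcon.1, hcon.2], by linarith [hcon.1, hcon.2],
        by linarith [hcon.2], by linarith [hcon.1, hcon.2]⟩
    rcases hcase with hpos | hpos
    · have : (p0 + (1-p0-p1-p2)) * Real.log 2 < (p0 + (1-p0-p1-p2)) * L :=
        mul_lt_mul_of_pos_left hlog2 hpos
      linarith
    · have := hf2s hpos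
      linarith

lemma caseI (a b : ℝ) (hb : 0 < b) (hab : b < a)
    (p0 p1 p2 p3 : ℝ) (h0 : 0 ≤ p0) (h1 : 0 ≤ p1) (h2 : 0 ≤ p2) (h3 : 0 ≤ p3)
    (hsum : p0 + p1 + p2 + p3 = 1)
    (hcA : a * (p1 - p2) ≤ b * (p1 + p2)) (hcB : a * (p2 - p1) ≤ b * (p1 + p2)) :
    ∃ x : ℝ,
      0 ≤ a * x + 1/4 ∧ 0 ≤ b * x + 1/4 ∧ 0 ≤ -b * x + 1/4 ∧ 0 ≤ -a * x + 1/4 ∧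
      (a * x + 1/4 = 0 → p0 = 0) ∧ (b * x + 1/4 = 0 → p1 = 0) ∧
      (-b * x + 1/4 = 0 → p2 = 0) ∧ (-a * x + 1/4 = 0 → p3 = 0) ∧
      p0 * Real.log (p0/(a * x + 1/4)) + p1 * Real.log (p1/(b * x + 1/4))
        + p2 * Real.log (p2/(-b * x + 1/4)) + p3 * Real.log (p3/(-a * x + 1/4))
        ≤ Real.log 2 := by
  have ha : 0 < a := hb.trans hab
  have ha' : a ≠ 0 := ne_of_gt ha
  have hb' : b ≠ 0 := ne_of_gt hb
  have hapb : 0 < a + b := by linarith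
  have hamb : 0 < a - b := by linarith
  have hp3 : p3 = 1 - p0 - p1 - p2 := by linarith
  subst hp3
  obtain ⟨x, hxdef⟩ : ∃ x:ℝ, x = (2*p0+p1+p2-1)/(4*a) + (p1-p2)/(4*b) := ⟨_, rfl⟩
  refine ⟨x, ?_⟩
  have eq0 : a * x + 1/4 = p0/2 + (b*(p1+p2) + a*(p1-p2))/(4*b) := by
    rw [hxdef]; field_simp; ring
  have eq3 : -a * x + 1/4 = (1-p0-p1-p2)/2 + (b*(p1+p2) - a*(p1-p2))/(4*b) := by
    rw [hxdef]; field_simp; ring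
  have eq1 : b * x + 1/4 = p1/2 + (b*(2*p0+p1+p2-1) + a*(1-p1-p2))/(4*a) := by
    rw [hxdef]; field_simp; ring
  have eq2 : -b * x + 1/4 = p2/2 + (-(b*(2*p0+p1+p2-1)) + a*(1-p1-p2))/(4*a) := by
    rw [hxdef]; field_simp; ring
  have hr0 : 0 ≤ (b*(p1+p2) + a*(p1-p2))/(4*b) := by
    apply div_nonneg _ (by linarith); linarith
  have hr3 : 0 ≤ (b*(p1+p2) - a*(p1-p2))/(4*b) := by
    apply div_nonneg _ (by linarith); linarith
  have hr1 : 0 ≤ (b*(2*p0+p1+p2-1) + a*(1-p1-p2))/(4*a) := by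
    apply div_nonneg _ (by linarith)
    nlinarith [mul_nonneg hapb.le h0, mul_nonneg hamb.le h3]
  have hr2 : 0 ≤ (-(b*(2*p0+p1+p2-1)) + a*(1-p1-p2))/(4*a) := by
    apply div_nonneg _ (by linarith)
    nlinarith [mul_nonneg hamb.le h0, mul_nonneg hapb.le h3]
  have ht0 : p0 * Real.log (p0/(a * x + 1/4)) ≤ p0 * Real.log 2 := by
    rw [eq0]; exact term_le_log2 h0 (by linarith)
  have ht1 : p1 * Real.log (p1/(b * x + 1/4)) ≤ p1 * Real.log 2 := by
    rw [eq1]; exact term_le_log2 h1 (by linarith)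
  have ht2 : p2 * Real.log (p2/(-b * x + 1/4)) ≤ p2 * Real.log 2 := by
    rw [eq2]; exact term_le_log2 h2 (by linarith)
  have ht3 : (1-p0-p1-p2) * Real.log ((1-p0-p1-p2)/(-a * x + 1/4))
      ≤ (1-p0-p1-p2) * Real.log 2 := by
    rw [eq3]; exact term_le_log2 h3 (by linarith)
  refine ⟨by rw [eq0]; linarith, by rw [eq1]; linarith, by rw [eq2]; linarith,
    by rw [eq3]; linarith,
    by rw [eq0]; intro h; linarith, by rw [eq1]; intro h; linarith,
    by rw [eq2]; intro h; linarith, by rw [eq3]; intro h; linarith, by linarith⟩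

private lemma exists_wit (a b : ℝ) (hb : 0 < b) (hab : b < a)
    (p0 p1 p2 p3 : ℝ) (h0 : 0 ≤ p0) (h1 : 0 ≤ p1) (h2 : 0 ≤ p2) (h3 : 0 ≤ p3)
    (hsum : p0 + p1 + p2 + p3 = 1) :
    ∃ x : ℝ,
      0 ≤ a * x + 1/4 ∧ 0 ≤ b * x + 1/4 ∧ 0 ≤ -b * x + 1/4 ∧ 0 ≤ -a * x + 1/4 ∧
      (a * x + 1/4 = 0 → p0 = 0) ∧ (b * x + 1/4 = 0 → p1 = 0) ∧
      (-b * x + 1/4 = 0 → p2 = 0) ∧ (-a * x + 1/4 = 0 → p3 = 0) ∧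
      p0 * Real.log (p0/(a * x + 1/4)) + p1 * Real.log (p1/(b * x + 1/4))
        + p2 * Real.log (p2/(-b * x + 1/4)) + p3 * Real.log (p3/(-a * x + 1/4))
        ≤ Real.log (4*a/(a+b)) ∧
      (¬(p0 = 0 ∧ p1 = 1 ∧ p2 = 0 ∧ p3 = 0) → ¬(p0 = 0 ∧ p1 = 0 ∧ p2 = 1 ∧ p3 = 0) →
        p0 * Real.log (p0/(a * x + 1/4)) + p1 * Real.log (p1/(b * x + 1/4))
        + p2 * Real.log (p2/(-b * x + 1/4)) + p3 * Real.log (p3/(-a * x + 1/4))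
        < Real.log (4*a/(a+b))) := by
  by_cases hA : b * (p1 + p2) < a * (p1 - p2)
  · obtain ⟨x, n0, n1, n2, n3, s0, s1, s2, s3, hle, hlt⟩ :=
      caseII a b hb hab p0 p1 p2 p3 h0 h1 h2 h3 hsum hA
    exact ⟨x, n0, n1, n2, n3, s0, s1, s2, s3, hle, fun h _ => hlt h⟩
  by_cases hB : b * (p1 + p2) < a * (p2 - p1)
  · obtain ⟨x, n0, n1, n2, n3, s0, s1, s2, s3, hle, hlt⟩ :=
      caseII a b hb hab p3 p2 p1 p0 h3 h2 h1 h0 (by linarith) (by linarith)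
    have E0 : a * -x + 1/4 = -a * x + 1/4 := by ring
    have E1 : b * -x + 1/4 = -b * x + 1/4 := by ring
    have E2 : -b * -x + 1/4 = b * x + 1/4 := by ring
    have E3 : -a * -x + 1/4 = a * x + 1/4 := by ring
    refine ⟨-x, ?_, ?_, ?_, ?_, ?_, ?_, ?_, ?_, ?_, ?_⟩
    · rw [E0]; exact n3
    · rw [E1]; exact n2
    · rw [E2]; exact n1
    · rw [E3]; exact n0
    · rw [E0]; exact s3
    · rw [E1]; exact s2
    · rw [E2]; exact s1
    · rw [E3]; exact s0
    · rw [E0, E1, E2, E3]; linarith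
    · intro hne2 hne3
      rw [E0, E1, E2, E3]
      have := hlt (by tauto)
      linarith
  · obtain ⟨x, n0, n1, n2, n3, s0, s1, s2, s3, hle⟩ :=
      caseI a b hb hab p0 p1 p2 p3 h0 h1 h2 h3 hsum (le_of_not_gt hA) (le_of_not_gt hB)
    have hl2 := log2_lt a b hb hab
    exact ⟨x, n0, n1, n2, n3, s0, s1, s2, s3, by linarith, fun _ _ => by linarith⟩

private lemma vec_ext {v w : Fin 4 → ℝ} (h0 : v 0 = w 0) (h1 : v 1 = w 1)
    (h2 : v 2 = w 2) (h3 : v 3 = w 3) : v = w := by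
  funext i; fin_cases i <;> assumption


private lemma divFrom_le_main (a b : ℝ) (hb : 0 < b) (hab : b < a)
    (M : Set (Fin 4 → ℝ))
    (hM : M = {p | ∃ x : ℝ,
        p = ![a * x + 1/4, b * x + 1/4, -b * x + 1/4, -a * x + 1/4]} ∩ simplex (Fin 4))
    (p : Fin 4 → ℝ) (hp : p ∈ simplex (Fin 4)) :
    divFrom M p ≤ ((Real.log (4 * a / (a + b)) : ℝ) : EReal) ∧
      (p ≠ ![0, 1, 0, 0] → p ≠ ![0, 0, 1, 0] →
        divFrom M p < ((Real.log (4 * a / (a + b)) : ℝ) : EReal)) := by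
  obtain ⟨hpos, hsum1⟩ := hp
  rw [Fin.sum_univ_four] at hsum1
  obtain ⟨x, n0, n1, n2, n3, s0, s1, s2, s3, hle, hlt⟩ :=
    exists_wit a b hb hab (p 0) (p 1) (p 2) (p 3) (hpos 0) (hpos 1) (hpos 2) (hpos 3) hsum1
  set q : Fin 4 → ℝ := ![a * x + 1/4, b * x + 1/4, -b * x + 1/4, -a * x + 1/4] with hqdef
  have hq0 : q 0 = a * x + 1/4 := rfl
  have hq1 : q 1 = b * x + 1/4 := rfl
  have hq2 : q 2 = -b * x + 1/4 := rfl
  have hq3 : q 3 = -a * x + 1/4 := rfl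
  have hqM : q ∈ M := by
    rw [hM]
    refine ⟨⟨x, rfl⟩, fun i => ?_, ?_⟩
    · fin_cases i
      · exact n0
      · exact n1
      · exact n2
      · exact n3
    · rw [Fin.sum_univ_four, hq0, hq1, hq2, hq3]; ring
  have hsupp : ∀ i, q i = 0 → p i = 0 := by
    intro i
    fin_cases i
    · exact s0
    · exact s1
    · exact s2
    · exact s3
  have hKL : KL p q
      = ((p 0 * Real.log (p 0/(a * x + 1/4)) + p 1 * Real.log (p 1/(b * x + 1/4))
        + p 2 * Real.log (p 2/(-b * x + 1/4)) + p 3 * Real.log (p 3/(-a * x + 1/4)) : ℝ)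
          : EReal) := by
    simp only [KL, if_pos hsupp]
    congr 1
    rw [Fin.sum_univ_four, hq0, hq1, hq2, hq3]
  have hmono : divFrom M p ≤ KL p q := by
    simp only [divFrom]
    exact iInf₂_le q hqM
  constructor
  · refine hmono.trans ?_
    rw [hKL]
    exact EReal.coe_le_coe_iff.mpr hle
  · intro hne2 hne3
    have c2 : ¬(p 0 = 0 ∧ p 1 = 1 ∧ p 2 = 0 ∧ p 3 = 0) := by
      rintro ⟨e0, e1, e2, e3⟩
      exact hne2 (vec_ext (by simp [e0]) (by simp [e1]) (by simp [e2]) (by simp [e3]))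
    have c3 : ¬(p 0 = 0 ∧ p 1 = 0 ∧ p 2 = 1 ∧ p 3 = 0) := by
      rintro ⟨e0, e1, e2, e3⟩
      exact hne3 (vec_ext (by simp [e0]) (by simp [e1]) (by simp [e2]) (by simp [e3]))
    refine lt_of_le_of_lt (hmono.trans (le_of_eq hKL)) ?_
    exact EReal.coe_lt_coe_iff.mpr (hlt c2 c3)

private lemma val_e2 (a b : ℝ) (hb : 0 < b) (hab : b < a)
    (M : Set (Fin 4 → ℝ))
    (hM : M = {p | ∃ x : ℝ,
        p = ![a * x + 1/4, b * x + 1/4, -b * x + 1/4, -a * x + 1/4]} ∩ simplex (Fin 4)) :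
    divFrom M ![0, 1, 0, 0] = ((Real.log (4 * a / (a + b)) : ℝ) : EReal) := by
  have ha : 0 < a := hb.trans hab
  have ha' : a ≠ 0 := ne_of_gt ha
  have hapb : 0 < a + b := by linarith
  have hamb : 0 < a - b := by linarith
  apply le_antisymm
  · set q : Fin 4 → ℝ := ![a * (1/(4*a)) + 1/4, b * (1/(4*a)) + 1/4,
      -b * (1/(4*a)) + 1/4, -a * (1/(4*a)) + 1/4] with hqdef
    have v0 : a * (1/(4*a)) + 1/4 = 1/2 := by field_simp; ring
    have v1 : b * (1/(4*a)) + 1/4 = (a+b)/(4*a) := by field_simp; ring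
    have v2 : -b * (1/(4*a)) + 1/4 = (a-b)/(4*a) := by field_simp; ring
    have v3 : -a * (1/(4*a)) + 1/4 = 0 := by field_simp; ring
    have hq0 : q 0 = a * (1/(4*a)) + 1/4 := rfl
    have hq1 : q 1 = b * (1/(4*a)) + 1/4 := rfl
    have hq2 : q 2 = -b * (1/(4*a)) + 1/4 := rfl
    have hq3 : q 3 = -a * (1/(4*a)) + 1/4 := rfl
    have hv1pos : 0 < b * (1/(4*a)) + 1/4 := by rw [v1]; positivity
    have hqM : q ∈ M := by
      rw [hM]
      refine ⟨⟨1/(4*a), rfl⟩, fun i => ?_, ?_⟩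
      · fin_cases i
        · show (0:ℝ) ≤ a * (1/(4*a)) + 1/4
          rw [v0]; norm_num
        · exact hv1pos.le
        · show (0:ℝ) ≤ -b * (1/(4*a)) + 1/4
          rw [v2]; positivity
        · show (0:ℝ) ≤ -a * (1/(4*a)) + 1/4
          rw [v3]
      · rw [Fin.sum_univ_four, hq0, hq1, hq2, hq3]; ring
    have hsupp : ∀ i, q i = 0 → (![(0:ℝ), 1, 0, 0]) i = 0 := by
      intro i
      fin_cases i
      · intro _; rfl
      · intro h; exact absurd h hv1pos.ne'
      · intro _; rfl
      · intro _; rfl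
    have hKL : KL ![(0:ℝ), 1, 0, 0] q = ((Real.log (4 * a / (a + b)) : ℝ) : EReal) := by
      simp only [KL, if_pos hsupp]
      congr 1
      rw [Fin.sum_univ_four, hq1, v1]
      have hlog : Real.log (1 / ((a+b)/(4*a))) = Real.log (4*a/(a+b)) := by
        rw [one_div, inv_div]
      simp [hlog]
    have hmono : divFrom M ![(0:ℝ), 1, 0, 0] ≤ KL ![(0:ℝ), 1, 0, 0] q := by
      simp only [divFrom]
      exact iInf₂_le q hqM
    rw [hKL] at hmono
    exact hmono
  · refine le_iInf₂ fun q hq => ?_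
    rw [hM] at hq
    obtain ⟨⟨x, rfl⟩, hqs⟩ := hq
    have hx0 : 0 ≤ a * x + 1/4 := by simpa using hqs.1 0
    have hx3 : 0 ≤ -a * x + 1/4 := by simpa using hqs.1 3
    have hbxle : b * x ≤ b * (1/(4*a)) := by
      have hx : x ≤ 1/(4*a) := by
        rw [le_div_iff₀ (by positivity)]
        nlinarith
      exact mul_le_mul_of_nonneg_left hx hb.le
    have hbxge : -(b * (1/(4*a))) ≤ b * x := by
      have hx : -(1/(4*a)) ≤ x := by
        rw [neg_le, le_div_iff₀ (by positivity)]
        nlinarith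
      nlinarith [mul_le_mul_of_nonneg_left hx hb.le]
    have hbsmall : b * (1/(4*a)) < 1/4 := by
      rw [mul_one_div, div_lt_iff₀ (by positivity)]
      linarith
    have h1pos : 0 < b * x + 1/4 := by linarith
    have h1le : b * x + 1/4 ≤ (a+b)/(4*a) := by
      have : b * (1/(4*a)) + 1/4 = (a+b)/(4*a) := by field_simp; ring
      linarith
    have hsupp : ∀ i, (![a * x + 1/4, b * x + 1/4, -b * x + 1/4, -a * x + 1/4]) i = 0
        → (![(0:ℝ), 1, 0, 0]) i = 0 := by
      intro i
      fin_cases i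
      · intro _; rfl
      · intro h; exact absurd h (by simpa using h1pos.ne')
      · intro _; rfl
      · intro _; rfl
    simp only [KL, if_pos hsupp]
    rw [EReal.coe_le_coe_iff]
    rw [Fin.sum_univ_four]
    have hL : Real.log (4*a/(a+b)) = - Real.log ((a+b)/(4*a)) := by
      rw [← Real.log_inv, inv_div]
    have hlogle : Real.log (b * x + 1/4) ≤ Real.log ((a+b)/(4*a)) :=
      Real.log_le_log h1pos h1le
    have hone : Real.log (1 / (b * x + 1/4)) = - Real.log (b * x + 1/4) := by
      rw [one_div, Real.log_inv]
    have hsum4 : ![(0:ℝ), 1, 0, 0] 0 * Real.log (![(0:ℝ), 1, 0, 0] 0 / ![a * x + 1/4, b * x + 1/4, -b * x + 1/4, -a * x + 1/4] 0)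
        + ![(0:ℝ), 1, 0, 0] 1 * Real.log (![(0:ℝ), 1, 0, 0] 1 / ![a * x + 1/4, b * x + 1/4, -b * x + 1/4, -a * x + 1/4] 1)
        + ![(0:ℝ), 1, 0, 0] 2 * Real.log (![(0:ℝ), 1, 0, 0] 2 / ![a * x + 1/4, b * x + 1/4, -b * x + 1/4, -a * x + 1/4] 2)
        + ![(0:ℝ), 1, 0, 0] 3 * Real.log (![(0:ℝ), 1, 0, 0] 3 / ![a * x + 1/4, b * x + 1/4, -b * x + 1/4, -a * x + 1/4] 3)
        = Real.log (1/(b * x + 1/4)) := by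
      norm_num <;> simp
    rw [hsum4, hone, hL]
    linarith [hlogle]

private lemma val_e3 (a b : ℝ) (hb : 0 < b) (hab : b < a)
    (M : Set (Fin 4 → ℝ))
    (hM : M = {p | ∃ x : ℝ,
        p = ![a * x + 1/4, b * x + 1/4, -b * x + 1/4, -a * x + 1/4]} ∩ simplex (Fin 4)) :
    divFrom M ![0, 0, 1, 0] = ((Real.log (4 * a / (a + b)) : ℝ) : EReal) := by
  have ha : 0 < a := hb.trans hab
  have ha' : a ≠ 0 := ne_of_gt ha
  have hapb : 0 < a + b := by linarith
  have hamb : 0 < a - b := by linarith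
  apply le_antisymm
  · set q : Fin 4 → ℝ := ![a * (-(1/(4*a))) + 1/4, b * (-(1/(4*a))) + 1/4,
      -b * (-(1/(4*a))) + 1/4, -a * (-(1/(4*a))) + 1/4] with hqdef
    have v0 : a * (-(1/(4*a))) + 1/4 = 0 := by field_simp; ring
    have v1 : b * (-(1/(4*a))) + 1/4 = (a-b)/(4*a) := by field_simp; ring
    have v2 : -b * (-(1/(4*a))) + 1/4 = (a+b)/(4*a) := by field_simp; ring
    have v3 : -a * (-(1/(4*a))) + 1/4 = 1/2 := by field_simp; ring
    have hq0 : q 0 = a * (-(1/(4*a))) + 1/4 := rfl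
    have hq1 : q 1 = b * (-(1/(4*a))) + 1/4 := rfl
    have hq2 : q 2 = -b * (-(1/(4*a))) + 1/4 := rfl
    have hq3 : q 3 = -a * (-(1/(4*a))) + 1/4 := rfl
    have hv2pos : 0 < -b * (-(1/(4*a))) + 1/4 := by rw [v2]; positivity
    have hqM : q ∈ M := by
      rw [hM]
      refine ⟨⟨-(1/(4*a)), rfl⟩, fun i => ?_, ?_⟩
      · fin_cases i
        · show (0:ℝ) ≤ a * (-(1/(4*a))) + 1/4
          rw [v0]
        · show (0:ℝ) ≤ b * (-(1/(4*a))) + 1/4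
          rw [v1]; positivity
        · exact hv2pos.le
        · show (0:ℝ) ≤ -a * (-(1/(4*a))) + 1/4
          rw [v3]; norm_num
      · rw [Fin.sum_univ_four, hq0, hq1, hq2, hq3]; ring
    have hsupp : ∀ i, q i = 0 → (![(0:ℝ), 0, 1, 0]) i = 0 := by
      intro i
      fin_cases i
      · intro _; rfl
      · intro _; rfl
      · intro h; exact absurd h hv2pos.ne'
      · intro _; rfl
    have hKL : KL ![(0:ℝ), 0, 1, 0] q = ((Real.log (4 * a / (a + b)) : ℝ) : EReal) := by
      simp only [KL, if_pos hsupp]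
      congr 1
      rw [Fin.sum_univ_four, hq2, v2]
      have hlog : Real.log (1 / ((a+b)/(4*a))) = Real.log (4*a/(a+b)) := by
        rw [one_div, inv_div]
      simp [hlog]
    have hmono : divFrom M ![(0:ℝ), 0, 1, 0] ≤ KL ![(0:ℝ), 0, 1, 0] q := by
      simp only [divFrom]
      exact iInf₂_le q hqM
    rw [hKL] at hmono
    exact hmono
  · refine le_iInf₂ fun q hq => ?_
    rw [hM] at hq
    obtain ⟨⟨x, rfl⟩, hqs⟩ := hq
    have hx0 : 0 ≤ a * x + 1/4 := by simpa using hqs.1 0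
    have hx3 : 0 ≤ -a * x + 1/4 := by simpa using hqs.1 3
    have hxle : x ≤ 1/(4*a) := by
      rw [le_div_iff₀ (by positivity)]
      nlinarith
    have hxge : -(1/(4*a)) ≤ x := by
      rw [neg_le, le_div_iff₀ (by positivity)]
      nlinarith
    have hbsmall : b * (1/(4*a)) < 1/4 := by
      rw [mul_one_div, div_lt_iff₀ (by positivity)]
      linarith
    have hup := mul_le_mul_of_nonneg_left hxle hb.le
    have hdn := mul_le_mul_of_nonneg_left hxge hb.le
    have h2pos : 0 < -b * x + 1/4 := by nlinarith
    have h2le : -b * x + 1/4 ≤ (a+b)/(4*a) := by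
      have veq : b * (1/(4*a)) + 1/4 = (a+b)/(4*a) := by field_simp; ring
      nlinarith
    have hsupp : ∀ i, (![a * x + 1/4, b * x + 1/4, -b * x + 1/4, -a * x + 1/4]) i = 0
        → (![(0:ℝ), 0, 1, 0]) i = 0 := by
      intro i
      fin_cases i
      · intro _; rfl
      · intro _; rfl
      · intro h; exact absurd h (by simpa using h2pos.ne')
      · intro _; rfl
    simp only [KL, if_pos hsupp]
    rw [EReal.coe_le_coe_iff]
    rw [Fin.sum_univ_four]
    have hL : Real.log (4*a/(a+b)) = - Real.log ((a+b)/(4*a)) := by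
      rw [← Real.log_inv, inv_div]
    have hlogle : Real.log (-b * x + 1/4) ≤ Real.log ((a+b)/(4*a)) :=
      Real.log_le_log h2pos h2le
    have hone : Real.log (1 / (-b * x + 1/4)) = - Real.log (-b * x + 1/4) := by
      rw [one_div, Real.log_inv]
    have hsum4 : ![(0:ℝ), 0, 1, 0] 0 * Real.log (![(0:ℝ), 0, 1, 0] 0 / ![a * x + 1/4, b * x + 1/4, -b * x + 1/4, -a * x + 1/4] 0)
        + ![(0:ℝ), 0, 1, 0] 1 * Real.log (![(0:ℝ), 0, 1, 0] 1 / ![a * x + 1/4, b * x + 1/4, -b * x + 1/4, -a * x + 1/4] 1)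
        + ![(0:ℝ), 0, 1, 0] 2 * Real.log (![(0:ℝ), 0, 1, 0] 2 / ![a * x + 1/4, b * x + 1/4, -b * x + 1/4, -a * x + 1/4] 2)
        + ![(0:ℝ), 0, 1, 0] 3 * Real.log (![(0:ℝ), 0, 1, 0] 3 / ![a * x + 1/4, b * x + 1/4, -b * x + 1/4, -a * x + 1/4] 3)
        = Real.log (1/(-b * x + 1/4)) := by
      norm_num <;> simp
    rw [hsum4, hone, hL]
    linarith [hlogle]


/-- For the one-dimensional linear model
`M = {(ax+1/4, bx+1/4, −bx+1/4, −ax+1/4)} ∩ Δ_3` with `a > b > 0`, the maximum divergence is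
`log(4a/(a+b))`, attained exactly at `(0,1,0,0)` and `(0,0,1,0)`. -/
theorem stmt4 (a b : ℝ) (hb : 0 < b) (hab : b < a)
    (M : Set (Fin 4 → ℝ))
    (hM : M = {p | ∃ x : ℝ,
        p = ![a * x + 1/4, b * x + 1/4, -b * x + 1/4, -a * x + 1/4]} ∩ simplex (Fin 4)) :
    (⨆ p ∈ simplex (Fin 4), divFrom M p) = ((Real.log (4 * a / (a + b)) : ℝ) : EReal) ∧
    {p | p ∈ simplex (Fin 4) ∧ divFrom M p = ((Real.log (4 * a / (a + b)) : ℝ) : EReal)}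
      = {![0, 1, 0, 0], ![0, 0, 1, 0]} := by

  have hle := divFrom_le_main a b hb hab M hM
  have he2 : (![0, 1, 0, 0] : Fin 4 → ℝ) ∈ simplex (Fin 4) := by
    constructor
    · intro i; fin_cases i <;> norm_num
    · simp [Fin.sum_univ_four]
  have he3 : (![0, 0, 1, 0] : Fin 4 → ℝ) ∈ simplex (Fin 4) := by
    constructor
    · intro i; fin_cases i <;> norm_num
    · simp [Fin.sum_univ_four]
  have hv2 := val_e2 a b hb hab M hM
  have hv3 := val_e3 a b hb hab M hM
  constructor
  · apply le_antisymm
    · exact iSup₂_le fun p hp => (hle p hp).1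
    · exact le_iSup₂_of_le ![0, 1, 0, 0] he2 hv2.ge
  · ext p
    simp only [Set.mem_setOf_eq, Set.mem_insert_iff, Set.mem_singleton_iff]
    constructor
    · rintro ⟨hp, hval⟩
      by_contra hcon
      push_neg at hcon
      exact absurd hval (ne_of_lt ((hle p hp).2 hcon.1 hcon.2))
    · rintro (rfl | rfl)
      · exact ⟨he2, hv2⟩
      · exact ⟨he3, hv3⟩
end

section
/- Let A ∈ ℕ^{d×n} have the all-ones vector in its row span and let M_A ⊆ Δ_{n−1} be its toric model. Suppose p ∈ Δ_{n−1} is a local maximizer of the function u ↦ D_{M_A}(u) on Δ_{n−1}, and suppose q ∈ M_A satisfies D(p‖q) = D_{M_A}(p) (i.e., q is a maximum likelihood estimate of p) and supp(q) = {1,…,n}. Then p is a projection point of q: p_i = q_i / (Σ_{j ∈ supp(p)} q_j) for every i ∈ supp(p), and p_i = 0 for i ∉ supp(p). -/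
open scoped BigOperators Pointwise

attribute [local instance] Classical.propDecidable

namespace Stmt5Aux

open Filter Topology

noncomputable def LL {n : ℕ} (u r : Fin n → ℝ) : ℝ := ∑ j, u j * Real.log (r j)

noncomputable def phi {n : ℕ} (u : Fin n → ℝ) : ℝ := ∑ j, u j * Real.log (u j)

noncomputable def Psi {d n : ℕ} (A : Matrix (Fin d) (Fin n) ℕ) (u : Fin n → ℝ) : ℝ :=
  sSup (LL u '' EA A)

variable {d n : ℕ}

lemma EA_pos [Nonempty (Fin n)] {A : Matrix (Fin d) (Fin n) ℕ} {r : Fin n → ℝ}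
    (hr : r ∈ EA A) (j : Fin n) : 0 < r j := by
  obtain ⟨θ, hθ⟩ := hr
  rw [hθ j]
  exact div_pos (Real.exp_pos _)
    (Finset.sum_pos (fun l _ => Real.exp_pos _) Finset.univ_nonempty)

lemma EA_sum_one [Nonempty (Fin n)] {A : Matrix (Fin d) (Fin n) ℕ} {r : Fin n → ℝ}
    (hr : r ∈ EA A) : ∑ j, r j = 1 := by
  obtain ⟨θ, hθ⟩ := hr
  have hZ : (0:ℝ) < ∑ l, Real.exp (∑ i, θ i * (A i l : ℝ)) :=
    Finset.sum_pos (fun l _ => Real.exp_pos _) Finset.univ_nonempty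
  rw [Finset.sum_congr rfl (fun j _ => hθ j), ← Finset.sum_div, div_self hZ.ne']

lemma EA_le_one [Nonempty (Fin n)] {A : Matrix (Fin d) (Fin n) ℕ} {r : Fin n → ℝ}
    (hr : r ∈ EA A) (j : Fin n) : r j ≤ 1 := by
  calc r j ≤ ∑ l, r l :=
        Finset.single_le_sum (fun l _ => (EA_pos hr l).le) (Finset.mem_univ j)
  _ = 1 := EA_sum_one hr

lemma EA_subset_simplex [Nonempty (Fin n)] (A : Matrix (Fin d) (Fin n) ℕ) :
    EA A ⊆ simplex (Fin n) :=
  fun _ hr => ⟨fun j => (EA_pos hr j).le, EA_sum_one hr⟩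

lemma EA_nonempty (A : Matrix (Fin d) (Fin n) ℕ) : (EA A).Nonempty :=
  ⟨fun j => Real.exp (∑ i, (fun _ : Fin d => (0:ℝ)) i * (A i j : ℝ)) /
      ∑ l, Real.exp (∑ i, (fun _ : Fin d => (0:ℝ)) i * (A i l : ℝ)),
    ⟨fun _ => 0, fun _ => rfl⟩⟩

lemma simplex_isClosed (n : ℕ) : IsClosed (simplex (Fin n)) := by
  have h : simplex (Fin n)
      = (⋂ i, {p : Fin n → ℝ | 0 ≤ p i}) ∩ {p : Fin n → ℝ | ∑ i, p i = 1} := by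
    ext x
    simp [simplex, Set.mem_iInter]
  rw [h]
  exact (isClosed_iInter fun i => isClosed_le continuous_const (continuous_apply i)).inter
    (isClosed_eq (continuous_finset_sum _ fun i _ => continuous_apply i) continuous_const)

lemma LL_bddAbove [Nonempty (Fin n)] (A : Matrix (Fin d) (Fin n) ℕ) {u : Fin n → ℝ}
    (hu : ∀ j, 0 ≤ u j) : BddAbove (LL u '' EA A) := by
  refine ⟨0, ?_⟩
  rintro x ⟨r, hr, rfl⟩
  exact Finset.sum_nonpos fun j _ =>
    mul_nonpos_iff.mpr (Or.inl ⟨hu j, Real.log_nonpos (EA_pos hr j).le (EA_le_one hr j)⟩)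

lemma le_Psi [Nonempty (Fin n)] (A : Matrix (Fin d) (Fin n) ℕ) {u : Fin n → ℝ}
    (hu : ∀ j, 0 ≤ u j) {r : Fin n → ℝ} (hr : r ∈ EA A) : LL u r ≤ Psi A u :=
  le_csSup (LL_bddAbove A hu) ⟨r, hr, rfl⟩

lemma tendsto_LL {u rlim : Fin n → ℝ} {s : ℕ → Fin n → ℝ}
    (h : ∀ j, u j ≠ 0 → rlim j ≠ 0) (hs : Tendsto s atTop (𝓝 rlim)) :
    Tendsto (fun k => LL u (s k)) atTop (𝓝 (LL u rlim)) := by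
  apply tendsto_finset_sum
  intro j _
  by_cases hj : u j = 0
  · simp [hj]
  · exact (((Real.continuousAt_log (h j hj)).tendsto).comp
      (tendsto_pi_nhds.mp hs j)).const_mul (u j)

lemma KL_eq {n : ℕ} (u r : Fin n → ℝ) (h : ∀ j, u j ≠ 0 → r j ≠ 0) :
    KL u r = ((phi u - LL u r : ℝ) : EReal) := by
  have hc : ∀ i, r i = 0 → u i = 0 := by
    intro i hi
    by_contra hne
    exact h i hne hi
  simp only [KL, if_pos hc]
  congr 1
  rw [phi, LL, ← Finset.sum_sub_distrib]
  apply Finset.sum_congr rfl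
  intro j _
  by_cases hj : u j = 0
  · simp [hj]
  · rw [Real.log_div hj (h j hj)]
    ring

lemma KL_lower [Nonempty (Fin n)] (A : Matrix (Fin d) (Fin n) ℕ) {u : Fin n → ℝ}
    (hu : ∀ j, 0 ≤ u j) {r : Fin n → ℝ} (hr : r ∈ closure (EA A)) :
    ((phi u - Psi A u : ℝ) : EReal) ≤ KL u r := by
  by_cases hc : ∀ i, r i = 0 → u i = 0
  · have h' : ∀ j, u j ≠ 0 → r j ≠ 0 := fun j hj h0 => hj (hc j h0)
    rw [KL_eq u r h', EReal.coe_le_coe_iff]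
    have hLL : LL u r ≤ Psi A u := by
      obtain ⟨s, hsmem, hslim⟩ := mem_closure_iff_seq_limit.mp hr
      exact le_of_tendsto' (tendsto_LL h' hslim) fun k => le_Psi A hu (hsmem k)
    linarith
  · simp only [KL, if_neg hc]
    exact le_top

lemma hellinger_core [Nonempty (Fin n)] (p : Fin n → ℝ) (hp1 : ∑ j, p j = 1)
    (Ψp : ℝ) (x1 x2 : Fin n → ℝ) (q1 q2 rmid : Fin n → ℝ)
    (hq1 : ∀ j, q1 j = Real.exp (x1 j) / ∑ l, Real.exp (x1 l))
    (hq2 : ∀ j, q2 j = Real.exp (x2 j) / ∑ l, Real.exp (x2 l))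
    (hrmid : ∀ j, rmid j = Real.exp ((x1 j + x2 j)/2) / ∑ l, Real.exp ((x1 l + x2 l)/2))
    (hopt1 : LL p rmid ≤ Ψp) :
    Real.exp (LL p q1 / 2 + LL p q2 / 2 - Ψp) ≤ ∑ j, Real.sqrt (q1 j * q2 j) := by
  set Z1 : ℝ := ∑ l, Real.exp (x1 l) with hZ1
  set Z2 : ℝ := ∑ l, Real.exp (x2 l) with hZ2
  set Zm : ℝ := ∑ l, Real.exp ((x1 l + x2 l)/2) with hZm
  have hZ1pos : 0 < Z1 := Finset.sum_pos (fun l _ => Real.exp_pos _) Finset.univ_nonempty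
  have hZ2pos : 0 < Z2 := Finset.sum_pos (fun l _ => Real.exp_pos _) Finset.univ_nonempty
  have hZmpos : 0 < Zm := Finset.sum_pos (fun l _ => Real.exp_pos _) Finset.univ_nonempty
  have hLLgen : ∀ (x : Fin n → ℝ) (Z : ℝ), 0 < Z → ∀ (r : Fin n → ℝ),
      (∀ j, r j = Real.exp (x j) / Z) → LL p r = (∑ j, p j * x j) - Real.log Z := by
    intro x Z hZ r hrx
    have h : ∀ j, p j * Real.log (r j) = p j * x j - p j * Real.log Z := by
      intro j
      rw [hrx j, Real.log_div (Real.exp_ne_zero _) hZ.ne', Real.log_exp]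
      ring
    rw [LL, Finset.sum_congr rfl fun j _ => h j, Finset.sum_sub_distrib,
      ← Finset.sum_mul, hp1, one_mul]
  have hLL1 : LL p q1 = (∑ j, p j * x1 j) - Real.log Z1 := hLLgen x1 Z1 hZ1pos q1 hq1
  have hLL2 : LL p q2 = (∑ j, p j * x2 j) - Real.log Z2 := hLLgen x2 Z2 hZ2pos q2 hq2
  have hLLm : LL p rmid = (∑ j, p j * ((x1 j + x2 j)/2)) - Real.log Zm :=
    hLLgen _ Zm hZmpos rmid hrmid
  have hmidsum : ∑ j, p j * ((x1 j + x2 j)/2)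
      = (∑ j, p j * x1 j)/2 + (∑ j, p j * x2 j)/2 := by
    rw [Finset.sum_div, Finset.sum_div, ← Finset.sum_add_distrib]
    apply Finset.sum_congr rfl
    intro j _
    ring
  have hsq : ∀ j, Real.sqrt (q1 j * q2 j)
      = Real.exp ((x1 j + x2 j)/2) / (Real.sqrt Z1 * Real.sqrt Z2) := by
    intro j
    rw [hq1 j, hq2 j, div_mul_div_comm, ← Real.exp_add,
      Real.sqrt_div' _ (mul_nonneg hZ1pos.le hZ2pos.le), Real.sqrt_mul hZ1pos.le]
    congr 1
    have h : Real.exp (x1 j + x2 j) = (Real.exp ((x1 j + x2 j)/2))^2 := by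
      rw [sq, ← Real.exp_add]
      ring_nf
    rw [h, Real.sqrt_sq (Real.exp_nonneg _)]
  have hS : ∑ j, Real.sqrt (q1 j * q2 j) = Zm / (Real.sqrt Z1 * Real.sqrt Z2) := by
    rw [Finset.sum_congr rfl fun j _ => hsq j, ← Finset.sum_div]
  have hsqrt1 : (0:ℝ) < Real.sqrt Z1 := Real.sqrt_pos.mpr hZ1pos
  have hsqrt2 : (0:ℝ) < Real.sqrt Z2 := Real.sqrt_pos.mpr hZ2pos
  have hSpos : 0 < ∑ j, Real.sqrt (q1 j * q2 j) := by
    rw [hS]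
    positivity
  have hlogS : Real.log (∑ j, Real.sqrt (q1 j * q2 j))
      = Real.log Zm - (Real.log Z1 / 2 + Real.log Z2 / 2) := by
    rw [hS, Real.log_div hZmpos.ne' (mul_pos hsqrt1 hsqrt2).ne',
      Real.log_mul hsqrt1.ne' hsqrt2.ne', Real.log_sqrt hZ1pos.le, Real.log_sqrt hZ2pos.le]
  rw [← Real.exp_log hSpos]
  apply Real.exp_le_exp.mpr
  rw [hlogS]
  rw [hLLm, hmidsum] at hopt1
  linarith [hLL1, hLL2]

lemma hellinger [Nonempty (Fin n)] (A : Matrix (Fin d) (Fin n) ℕ)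
    (p : Fin n → ℝ) (hp1 : ∑ j, p j = 1) (Ψp : ℝ)
    (hopt : ∀ r ∈ EA A, LL p r ≤ Ψp)
    {q1 q2 : Fin n → ℝ} (h1 : q1 ∈ EA A) (h2 : q2 ∈ EA A) :
    Real.exp (LL p q1 / 2 + LL p q2 / 2 - Ψp) ≤ ∑ j, Real.sqrt (q1 j * q2 j) := by
  obtain ⟨θ1, hθ1⟩ := h1
  obtain ⟨θ2, hθ2⟩ := h2
  have hxm : ∀ j, ((∑ i, θ1 i * (A i j : ℝ)) + (∑ i, θ2 i * (A i j : ℝ)))/2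
      = ∑ i, (fun i => (θ1 i + θ2 i)/2) i * (A i j : ℝ) := by
    intro j
    rw [← Finset.sum_add_distrib, Finset.sum_div]
    apply Finset.sum_congr rfl
    intro i _
    ring
  have hrmidEA : (fun j => Real.exp (((∑ i, θ1 i * (A i j:ℝ)) + (∑ i, θ2 i * (A i j:ℝ)))/2)
      / ∑ l, Real.exp (((∑ i, θ1 i * (A i l:ℝ)) + (∑ i, θ2 i * (A i l:ℝ)))/2)) ∈ EA A := by
    refine ⟨fun i => (θ1 i + θ2 i)/2, fun j => ?_⟩
    simp only [hxm]
  exact hellinger_core p hp1 Ψp _ _ q1 q2 _ hθ1 hθ2 (fun _ => rfl) (hopt _ hrmidEA)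

end Stmt5Aux

open Stmt5Aux Filter Topology

/-- A local maximizer `p` of the divergence from a toric model `M_A`, whose MLE
`q ∈ M_A` has full support, is a projection point of `q`:
`p_i = q_i / Σ_{j ∈ supp p} q_j` on the support of `p`. -/
theorem stmt5 {d n : ℕ} (A : Matrix (Fin d) (Fin n) ℕ)
    (hone : ∃ c : Fin d → ℝ, ∀ j, ∑ i, c i * (A i j : ℝ) = 1)
    (M : Set (Fin n → ℝ)) (hM : M = closure (EA A))
    (p : Fin n → ℝ) (hp : p ∈ simplex (Fin n))
    (hloc : IsLocalMaxOn (divFrom M) (simplex (Fin n)) p)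
    (q : Fin n → ℝ) (hqM : q ∈ M) (hKL : KL p q = divFrom M p)
    (hq : ∀ i, q i ≠ 0) :
    ∀ i, p i ≠ 0 → p i = q i / (∑ j, if p j = 0 then 0 else q j) := by
  classical
  obtain ⟨hp0, hp1⟩ := hp
  intro i0 hi0
  haveI hne : Nonempty (Fin n) := ⟨i0⟩
  have hqcl : q ∈ closure (EA A) := by rw [← hM]; exact hqM
  have hqsimp : q ∈ simplex (Fin n) :=
    closure_minimal (EA_subset_simplex A) (simplex_isClosed n) hqcl
  have hq0 : ∀ j, 0 < q j := fun j => lt_of_le_of_ne (hqsimp.1 j) (Ne.symm (hq j))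
  obtain ⟨s, hsEA, hslim⟩ := mem_closure_iff_seq_limit.mp hqcl
  have hdivp : divFrom M p = ((phi p - LL p q : ℝ) : EReal) := by
    rw [← hKL, KL_eq p q (fun j _ => hq j)]
  have hqopt : ∀ r ∈ EA A, LL p r ≤ LL p q := by
    intro r hrEA
    have hrM : r ∈ M := by rw [hM]; exact subset_closure hrEA
    have h1 : divFrom M p ≤ KL p r := by
      unfold divFrom
      exact iInf₂_le r hrM
    rw [hdivp, KL_eq p r (fun j _ => (EA_pos hrEA j).ne')] at h1
    have h2 := EReal.coe_le_coe_iff.mp h1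
    linarith
  obtain ⟨ε, hε, hball⟩ := Metric.mem_nhdsWithin_iff.mp hloc
  -- MAIN CLAIM: first-order condition
  have hmain : ∀ v : Fin n → ℝ, (∀ j, p j = 0 → v j = 0) → (∑ j, v j) = 0 →
      (∑ j, v j * Real.log (p j)) ≤ ∑ j, v j * Real.log (q j) := by
    intro v hv0 hvsum
    obtain ⟨C, hC0, hCv⟩ : ∃ C : ℝ, 0 ≤ C ∧ ∀ j, |v j| ≤ C * p j := by
      refine ⟨∑ j, (if p j = 0 then 0 else |v j| / p j), ?_, ?_⟩
      · apply Finset.sum_nonneg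
        intro j _
        by_cases h : p j = 0
        · simp [h]
        · simp only [if_neg h]
          exact div_nonneg (abs_nonneg _) (hp0 j)
      · intro j
        by_cases hpj : p j = 0
        · simp [hv0 j hpj, hpj]
        · have hpj' : 0 < p j := lt_of_le_of_ne (hp0 j) (Ne.symm hpj)
          have h1 : |v j| / p j ≤ ∑ l, (if p l = 0 then 0 else |v l| / p l) := by
            have := Finset.single_le_sum (f := fun l => if p l = 0 then 0 else |v l| / p l)
              (fun l _ => by
                by_cases h : p l = 0
                · simp [h]
                · simp only [if_neg h]
                  exact div_nonneg (abs_nonneg _) (hp0 l)) (Finset.mem_univ j)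
            simpa [hpj] using this
          calc |v j| = (|v j| / p j) * p j := by field_simp
          _ ≤ _ := mul_le_mul_of_nonneg_right h1 hpj'.le
    set B : ℝ := (∑ j, |v j|) + 1 with hB
    have hsumabs : (0:ℝ) ≤ ∑ j, |v j| := Finset.sum_nonneg fun j _ => abs_nonneg _
    have hBpos : 0 < B := by rw [hB]; linarith
    have hvB : ∀ j, |v j| < B := by
      intro j
      have := Finset.single_le_sum (f := fun l => |v l|) (fun l _ => abs_nonneg (v l))
        (Finset.mem_univ j)
      rw [hB]
      linarith
    set t0 : ℝ := min (min 1 (1/(2*C+1))) (ε/(2*B)) with ht0def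
    have ht0pos : 0 < t0 :=
      lt_min (lt_min one_pos (by positivity)) (by positivity)
    have ht0le1 : t0 ≤ 1 := le_trans (min_le_left _ _) (min_le_left _ _)
    have ht0C : t0 * C ≤ 1/2 := by
      have h1 : t0 ≤ 1/(2*C+1) := le_trans (min_le_left _ _) (min_le_right _ _)
      have h2 : (0:ℝ) < 2*C+1 := by linarith
      rw [le_div_iff₀ h2] at h1
      nlinarith
    have ht0B : t0 * B < ε := by
      have h1 : t0 ≤ ε/(2*B) := min_le_right _ _
      rw [le_div_iff₀ (by linarith : (0:ℝ) < 2*B)] at h1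
      nlinarith
    set t : ℕ → ℝ := fun m => t0 * (1/(m+1)) with htdef
    have htpos : ∀ m, 0 < t m := fun m => mul_pos ht0pos (by positivity)
    have htle : ∀ m, t m ≤ t0 := by
      intro m
      have h1 : 1/((m:ℝ)+1) ≤ 1 := by
        rw [div_le_one (by positivity)]
        linarith [Nat.cast_nonneg (α := ℝ) m]
      calc t m = t0 * (1/((m:ℝ)+1)) := rfl
      _ ≤ t0 * 1 := mul_le_mul_of_nonneg_left h1 ht0pos.le
      _ = t0 := mul_one t0
    have htlim : Tendsto t atTop (𝓝 0) := by
      rw [htdef]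
      have h := tendsto_one_div_add_atTop_nhds_zero_nat.const_mul t0
      simpa [one_div] using h
    have htm1 : ∀ m, t m ≤ 1 := fun m => (htle m).trans ht0le1
    have htmC : ∀ m, t m * C ≤ 1/2 :=
      fun m => le_trans (mul_le_mul_of_nonneg_right (htle m) hC0) ht0C
    set u : ℕ → Fin n → ℝ := fun m j => p j + t m * v j with hudef
    have hu0 : ∀ m j, 0 ≤ u m j := by
      intro m j
      by_cases hpj : p j = 0
      · simp [hudef, hpj, hv0 j hpj]
      · have hpj' : 0 < p j := lt_of_le_of_ne (hp0 j) (Ne.symm hpj)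
        have h1 : t m * |v j| ≤ t m * (C * p j) :=
          mul_le_mul_of_nonneg_left (hCv j) (htpos m).le
        have h3 : -(v j) ≤ |v j| := neg_le_abs (v j)
        have h4 := mul_le_mul_of_nonneg_right (htmC m) hpj'.le
        have h5 := mul_le_mul_of_nonneg_left h3 (htpos m).le
        show 0 ≤ p j + t m * v j
        nlinarith [htpos m]
    have husum : ∀ m, ∑ j, u m j = 1 := by
      intro m
      simp only [hudef]
      rw [Finset.sum_add_distrib, hp1, ← Finset.mul_sum, hvsum, mul_zero, add_zero]
    have husimplex : ∀ m, u m ∈ simplex (Fin n) := fun m => ⟨hu0 m, husum m⟩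
    have huball : ∀ m, u m ∈ Metric.ball p ε := by
      intro m
      rw [Metric.mem_ball, dist_pi_lt_iff hε]
      intro j
      have hd : dist (u m j) (p j) = t m * |v j| := by
        rw [Real.dist_eq]
        simp only [hudef]
        rw [add_sub_cancel_left, abs_mul, abs_of_pos (htpos m)]
      rw [hd]
      calc t m * |v j| ≤ t0 * |v j| := mul_le_mul_of_nonneg_right (htle m) (abs_nonneg _)
      _ < t0 * B := mul_lt_mul_of_pos_left (hvB j) ht0pos
      _ < ε := ht0B
    have hloc2 : ∀ m, phi (u m) - Psi A (u m) ≤ phi p - LL p q := by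
      intro m
      have h1 : divFrom M (u m) ≤ divFrom M p := hball ⟨huball m, husimplex m⟩
      have h2 : ((phi (u m) - Psi A (u m) : ℝ) : EReal) ≤ divFrom M (u m) := by
        unfold divFrom
        apply le_iInf₂
        intro rr hrM
        exact KL_lower A (hu0 m) (by rw [← hM]; exact hrM)
      exact EReal.coe_le_coe_iff.mp (h2.trans (h1.trans_eq hdivp))
    have hchoice : ∀ m, ∃ rr, rr ∈ EA A ∧ Psi A (u m) - t m ^ 2 < LL (u m) rr := by
      intro m
      have hne2 : (LL (u m) '' EA A).Nonempty := (EA_nonempty A).image _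
      have hlt : Psi A (u m) - t m ^ 2 < Psi A (u m) := by nlinarith [htpos m]
      obtain ⟨x, ⟨rr, hrr, rfl⟩, hx⟩ := exists_lt_of_lt_csSup hne2 hlt
      exact ⟨rr, hrr, hx⟩
    choose r hrEA hrlt using hchoice
    have hLLdec : ∀ m (r' : Fin n → ℝ), LL (u m) r' = LL p r' + t m * LL v r' := by
      intro m r'
      simp only [LL, hudef]
      rw [Finset.mul_sum, ← Finset.sum_add_distrib]
      apply Finset.sum_congr rfl
      intro j _
      ring
    have hΨlb : ∀ m, LL p q + t m * LL v q ≤ Psi A (u m) := by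
      intro m
      have h1 : Tendsto (fun k => LL (u m) (s k)) atTop (𝓝 (LL (u m) q)) :=
        tendsto_LL (fun j _ => hq j) hslim
      have h2 : ∀ k, LL (u m) (s k) ≤ Psi A (u m) := fun k => le_Psi A (hu0 m) (hsEA k)
      have h3 := le_of_tendsto' h1 h2
      rwa [hLLdec m q] at h3
    have hbub : ∀ m, LL p (r m) ≤ LL p q := fun m => hqopt _ (hrEA m)
    have hlogr : ∀ m j, Real.log (r m j) ≤ 0 :=
      fun m j => Real.log_nonpos (EA_pos (hrEA m) j).le (EA_le_one (hrEA m) j)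
    have hLLvb : ∀ m, |LL v (r m)| ≤ -(C * LL p (r m)) := by
      intro m
      have h1 : |LL v (r m)| ≤ ∑ j, |v j * Real.log (r m j)| := by
        rw [LL]
        exact Finset.abs_sum_le_sum_abs _ _
      have h2 : ∀ j, |v j * Real.log (r m j)| ≤ C * (p j * (-Real.log (r m j))) := by
        intro j
        rw [abs_mul, abs_of_nonpos (hlogr m j)]
        calc |v j| * -Real.log (r m j) ≤ (C * p j) * -Real.log (r m j) :=
              mul_le_mul_of_nonneg_right (hCv j) (by linarith [hlogr m j])
        _ = C * (p j * -Real.log (r m j)) := by ring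
      have h3 : ∑ j, C * (p j * (-Real.log (r m j))) = -(C * LL p (r m)) := by
        rw [LL, Finset.mul_sum, ← neg_eq_iff_eq_neg]
        rw [← Finset.sum_neg_distrib]
        apply Finset.sum_congr rfl
        intro j _
        ring
      calc |LL v (r m)| ≤ ∑ j, C * (p j * (-Real.log (r m j))) :=
            h1.trans (Finset.sum_le_sum fun j _ => h2 j)
      _ = -(C * LL p (r m)) := h3
    have hblb : ∀ m, LL p q - (2*(|LL v q| + 1 + C*|LL p q|)) * t m ≤ LL p (r m) := by
      intro m
      have h1 := (hrlt m).le
      rw [hLLdec m (r m)] at h1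
      have h2 : t m * LL v (r m) ≤ t m * -(C * LL p (r m)) :=
        mul_le_mul_of_nonneg_left ((le_abs_self _).trans (hLLvb m)) (htpos m).le
      have h3 : LL p q + t m * LL v q - t m ^ 2 ≤ LL p (r m) + t m * -(C * LL p (r m)) := by
        have h4 := hΨlb m
        linarith
      have f1 : (0:ℝ) ≤ t m * (|LL v q| + LL v q) :=
        mul_nonneg (htpos m).le (by linarith [neg_abs_le (LL v q)])
      have f2 : (0:ℝ) ≤ t m * (1 - t m) := mul_nonneg (htpos m).le (by linarith [htm1 m])
      have f3 : (0:ℝ) ≤ (1/2 - t m * C) * (LL p q - LL p (r m)) :=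
        mul_nonneg (by linarith [htmC m]) (by linarith [hbub m])
      have f4 : (0:ℝ) ≤ t m * C * (|LL p q| + LL p q) :=
        mul_nonneg (mul_nonneg (htpos m).le hC0) (by linarith [neg_abs_le (LL p q)])
      nlinarith [h3, f1, f2, f3, f4]
    have hbconv : Tendsto (fun m => LL p (r m)) atTop (𝓝 (LL p q)) := by
      have hK : Tendsto (fun m => LL p q - (2*(|LL v q| + 1 + C*|LL p q|)) * t m) atTop
          (𝓝 (LL p q)) := by
        have h5 := htlim.const_mul (2*(|LL v q| + 1 + C*|LL p q|))
        have h6 : Tendsto (fun _ : ℕ => LL p q) atTop (𝓝 (LL p q)) := tendsto_const_nhds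
        have h7 := h6.sub h5
        rw [mul_zero, sub_zero] at h7
        exact h7
      exact tendsto_of_tendsto_of_tendsto_of_le_of_le hK tendsto_const_nhds hblb hbub
    have haLL : Tendsto (fun k => LL p (s k)) atTop (𝓝 (LL p q)) :=
      tendsto_LL (fun j _ => hq j) hslim
    have hhell : ∀ m, Real.exp ((LL p (r m) - LL p q)/2) ≤ ∑ j, Real.sqrt (q j * r m j) := by
      intro m
      have h1 : ∀ k, Real.exp (LL p (s k)/2 + LL p (r m)/2 - LL p q)
          ≤ ∑ j, Real.sqrt (s k j * r m j) :=
        fun k => hellinger A p hp1 (LL p q) hqopt (hsEA k) (hrEA m)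
      have h2 : Tendsto (fun k => ∑ j, Real.sqrt (s k j * r m j)) atTop
          (𝓝 (∑ j, Real.sqrt (q j * r m j))) := by
        apply tendsto_finset_sum
        intro j _
        exact (Real.continuous_sqrt.tendsto _).comp ((tendsto_pi_nhds.mp hslim j).mul_const _)
      have h3 : Tendsto (fun k => Real.exp (LL p (s k)/2 + LL p (r m)/2 - LL p q)) atTop
          (𝓝 (Real.exp (LL p q/2 + LL p (r m)/2 - LL p q))) :=
        (Real.continuous_exp.tendsto _).comp (((haLL.div_const 2).add_const _).sub_const _)
      have h4 := le_of_tendsto_of_tendsto' h3 h2 h1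
      have h5 : (LL p (r m) - LL p q)/2 = LL p q/2 + LL p (r m)/2 - LL p q := by ring
      rw [h5]
      exact h4
    have hrconv : ∀ j, Tendsto (fun m => r m j) atTop (𝓝 (q j)) := by
      have hρ : Tendsto (fun m => 2 - 2*Real.exp ((LL p (r m) - LL p q)/2)) atTop (𝓝 0) := by
        have hinner : Tendsto (fun m => (LL p (r m) - LL p q)/2) atTop (𝓝 0) := by
          have := (hbconv.sub_const (LL p q)).div_const 2
          simpa using this
        have h2 : Tendsto (fun m => Real.exp ((LL p (r m) - LL p q)/2)) atTop (𝓝 1) := by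
          have := (Real.continuous_exp.tendsto 0).comp hinner
          simpa [Function.comp_def] using this
        have h6 : Tendsto (fun _ : ℕ => (2:ℝ)) atTop (𝓝 2) := tendsto_const_nhds
        have h7 := h6.sub (h2.const_mul 2)
        simpa using h7
      have hsqineq : ∀ m j, (Real.sqrt (q j) - Real.sqrt (r m j))^2
          ≤ 2 - 2*Real.exp ((LL p (r m) - LL p q)/2) := by
        intro m j
        have hsum : ∑ l, (Real.sqrt (q l) - Real.sqrt (r m l))^2
            = 2 - 2 * ∑ l, Real.sqrt (q l * r m l) := by
          have hterm : ∀ l, (Real.sqrt (q l) - Real.sqrt (r m l))^2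
              = q l + r m l - 2 * Real.sqrt (q l * r m l) := by
            intro l
            rw [sub_sq, Real.sq_sqrt (hqsimp.1 l), Real.sq_sqrt (EA_pos (hrEA m) l).le,
              Real.sqrt_mul (hqsimp.1 l)]
            ring
          rw [Finset.sum_congr rfl fun l _ => hterm l]
          rw [Finset.sum_sub_distrib, Finset.sum_add_distrib, hqsimp.2,
            EA_sum_one (hrEA m), ← Finset.mul_sum]
          ring
        have h6 : (Real.sqrt (q j) - Real.sqrt (r m j))^2
            ≤ ∑ l, (Real.sqrt (q l) - Real.sqrt (r m l))^2 :=
          Finset.single_le_sum (f := fun l => (Real.sqrt (q l) - Real.sqrt (r m l))^2)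
            (fun l _ => sq_nonneg _) (Finset.mem_univ j)
        rw [hsum] at h6
        linarith [hhell m]
      intro j
      have h8 : ∀ m, |Real.sqrt (q j) - Real.sqrt (r m j)|
          ≤ Real.sqrt (2 - 2*Real.exp ((LL p (r m) - LL p q)/2)) := by
        intro m
        rw [← Real.sqrt_sq_eq_abs]
        exact Real.sqrt_le_sqrt (hsqineq m j)
      have h9 : Tendsto (fun m => Real.sqrt (2 - 2*Real.exp ((LL p (r m) - LL p q)/2)))
          atTop (𝓝 0) := by
        have := (Real.continuous_sqrt.tendsto 0).comp hρ
        simpa [Function.comp_def] using this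
      have h7 : Tendsto (fun m => Real.sqrt (q j) - Real.sqrt (r m j)) atTop (𝓝 0) := by
        refine tendsto_of_tendsto_of_tendsto_of_le_of_le (g := fun m =>
          -(Real.sqrt (2 - 2*Real.exp ((LL p (r m) - LL p q)/2)))) ?_ h9 ?_ ?_
        · simpa using h9.neg
        · exact fun m => by linarith [(abs_le.mp (h8 m)).1]
        · exact fun m => (abs_le.mp (h8 m)).2
      have h10 : Tendsto (fun m => Real.sqrt (r m j)) atTop (𝓝 (Real.sqrt (q j))) := by
        have h11 : Tendsto (fun _ : ℕ => Real.sqrt (q j)) atTop (𝓝 (Real.sqrt (q j))) :=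
          tendsto_const_nhds
        have h12 := h11.sub h7
        simpa using h12
      have h12 : Tendsto (fun m => Real.sqrt (r m j)^2) atTop (𝓝 (Real.sqrt (q j)^2)) :=
        h10.pow 2
      have h13 : Real.sqrt (q j)^2 = q j := Real.sq_sqrt (hqsimp.1 j)
      rw [← h13]
      refine h12.congr fun m => Real.sq_sqrt (EA_pos (hrEA m) j).le
    -- derivative and slopes
    have hderiv : HasDerivAt (fun τ : ℝ => ∑ j, (p j + τ * v j) * Real.log (p j + τ * v j))
        (∑ j, v j * (Real.log (p j) + 1)) 0 := by
      apply HasDerivAt.fun_sum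
      intro j _
      by_cases hpj : p j = 0
      · have hvj := hv0 j hpj
        have heq : (fun τ : ℝ => (p j + τ * v j) * Real.log (p j + τ * v j))
            = fun _ : ℝ => 0 := by
          funext τ
          simp [hpj, hvj]
        rw [heq]
        simpa [hvj] using (hasDerivAt_const (0:ℝ) (0:ℝ))
      · have h1 : HasDerivAt (fun τ : ℝ => p j + τ * v j) (v j) 0 := by
          simpa using ((hasDerivAt_id (0:ℝ)).mul_const (v j)).const_add (p j)
        have h2 : HasDerivAt (fun x : ℝ => x * Real.log x) (Real.log (p j) + 1)
            ((fun τ : ℝ => p j + τ * v j) 0) := by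
          simpa using Real.hasDerivAt_mul_log hpj
        have h3 := h2.comp 0 h1
        simpa [Function.comp_def, mul_comm] using h3
    have htm0 : Tendsto t atTop (𝓝[≠] 0) := by
      rw [tendsto_nhdsWithin_iff]
      exact ⟨htlim, Filter.Eventually.of_forall fun m => (htpos m).ne'⟩
    have hslope : Tendsto (fun m =>
        ((∑ j, (p j + t m * v j) * Real.log (p j + t m * v j))
          - ∑ j, p j * Real.log (p j)) / t m)
        atTop (𝓝 (∑ j, v j * (Real.log (p j) + 1))) := by
      have h1 := (hasDerivAt_iff_tendsto_slope.mp hderiv).comp htm0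
      refine Tendsto.congr (fun m => ?_) h1
      show slope (fun τ : ℝ => ∑ j, (p j + τ * v j) * Real.log (p j + τ * v j)) 0 (t m) = _
      rw [slope_def_field]
      norm_num
    have hc : Tendsto (fun m => LL v (r m) + t m) atTop (𝓝 (LL v q)) := by
      have h1 : Tendsto (fun m => LL v (r m)) atTop (𝓝 (LL v q)) := by
        apply tendsto_finset_sum
        intro j _
        exact (((Real.continuousAt_log (hq j)).tendsto).comp (hrconv j)).const_mul (v j)
      have := h1.add htlim
      simpa using this
    have hle : ∀ m, ((∑ j, (p j + t m * v j) * Real.log (p j + t m * v j))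
        - ∑ j, p j * Real.log (p j)) / t m ≤ LL v (r m) + t m := by
      intro m
      have h1 := hloc2 m
      have h2 : Psi A (u m) ≤ LL p (r m) + t m * LL v (r m) + t m^2 := by
        have h2a := (hrlt m).le
        rw [hLLdec m (r m)] at h2a
        linarith
      have h4 : phi (u m) = ∑ j, (p j + t m * v j) * Real.log (p j + t m * v j) := by
        simp only [phi, hudef]
      have h5 : phi p = ∑ j, p j * Real.log (p j) := rfl
      have h3 : (∑ j, (p j + t m * v j) * Real.log (p j + t m * v j))
          - ∑ j, p j * Real.log (p j) ≤ t m * LL v (r m) + t m^2 := by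
        have h6 := hbub m
        linarith
      rw [div_le_iff₀ (htpos m)]
      nlinarith [h3]
    have hfinal : (∑ j, v j * (Real.log (p j) + 1)) ≤ LL v q :=
      le_of_tendsto_of_tendsto' hslope hc hle
    have hsum1 : ∑ j, v j * (Real.log (p j) + 1) = ∑ j, v j * Real.log (p j) := by
      rw [Finset.sum_congr rfl (fun j _ => mul_add (v j) (Real.log (p j)) 1)]
      rw [Finset.sum_add_distrib]
      simp [hvsum]
    calc ∑ j, v j * Real.log (p j) = ∑ j, v j * (Real.log (p j) + 1) := hsum1.symm
    _ ≤ LL v q := hfinal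
  -- FINAL ALGEBRA
  have hkey : ∀ j, p j ≠ 0 → p j * q i0 = q j * p i0 := by
    intro j hpj
    set v : Fin n → ℝ := fun l => (if l = j then (1:ℝ) else 0) - (if l = i0 then 1 else 0)
      with hvdef
    have hv0 : ∀ l, p l = 0 → v l = 0 := by
      intro l hl
      have h1 : l ≠ j := fun h => hpj (h ▸ hl)
      have h2 : l ≠ i0 := fun h => hi0 (h ▸ hl)
      simp [hvdef, h1, h2]
    have hvsum : ∑ l, v l = 0 := by
      simp [hvdef, Finset.sum_sub_distrib]
    have hsumv : ∀ w : Fin n → ℝ, ∑ l, v l * Real.log (w l)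
        = Real.log (w j) - Real.log (w i0) := by
      intro w
      simp only [hvdef, sub_mul, ite_mul, one_mul, zero_mul]
      rw [Finset.sum_sub_distrib, Finset.sum_ite_eq' Finset.univ j (fun l => Real.log (w l)),
        Finset.sum_ite_eq' Finset.univ i0 (fun l => Real.log (w l))]
      simp
    have h1 := hmain v hv0 hvsum
    have h2 := hmain (fun l => -(v l)) (fun l hl => by simp [hv0 l hl])
      (by rw [Finset.sum_neg_distrib, hvsum, neg_zero])
    have h2b : ∑ l, v l * Real.log (q l) ≤ ∑ l, v l * Real.log (p l) := by
      simp only [neg_mul, Finset.sum_neg_distrib, neg_le_neg_iff] at h2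
      exact h2
    have h3 : ∑ l, v l * Real.log (p l) = ∑ l, v l * Real.log (q l) :=
      le_antisymm h1 h2b
    rw [hsumv p, hsumv q] at h3
    have hpj' : 0 < p j := lt_of_le_of_ne (hp0 j) (Ne.symm hpj)
    have hpi' : 0 < p i0 := lt_of_le_of_ne (hp0 i0) (Ne.symm hi0)
    have h4 : Real.log (p j * q i0) = Real.log (q j * p i0) := by
      rw [Real.log_mul hpj'.ne' (hq i0), Real.log_mul (hq j) hpi'.ne']
      linarith
    calc p j * q i0 = Real.exp (Real.log (p j * q i0)) :=
          (Real.exp_log (mul_pos hpj' (hq0 i0))).symm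
    _ = Real.exp (Real.log (q j * p i0)) := by rw [h4]
    _ = q j * p i0 := Real.exp_log (mul_pos (hq0 j) hpi')
  have hQ : p i0 * (∑ l, if p l = 0 then 0 else q l) = q i0 := by
    rw [Finset.mul_sum]
    have h1 : ∀ l, p i0 * (if p l = 0 then 0 else q l) = q i0 * p l := by
      intro l
      by_cases hl : p l = 0
      · simp [hl]
      · rw [if_neg hl]
        have h2 := hkey l hl
        linarith
    rw [Finset.sum_congr rfl fun l _ => h1 l, ← Finset.mul_sum, hp1, mul_one]
  have hQne : (∑ l, if p l = 0 then 0 else q l) ≠ 0 := by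
    intro h0
    rw [h0, mul_zero] at hQ
    exact hq i0 hQ.symm
  rw [eq_div_iff hQne]
  exact hQ
end

section
/- Let A ∈ ℕ^{d×n} have the all-ones vector in its row span, with discrete exponential family E_A, let b ∈ ℝ^d, and let Q_b = {u ∈ Δ_{n−1} : Au = b}. Let v be an extreme point of Q_b and let F ⊆ Q_b be a nonempty face of Q_b (a convex subset that is extreme in Q_b) with supp(F) = {1,…,n} \ supp(v), where supp(F) = ⋃_{f∈F} supp(f). Let L_{v,F} = ⋃_{f∈F} {v + t·(f − v) : t ∈ ℝ} be the union of the lines through v and the points of F. Then there exists q ∈ E_A with Aq = b and v_i = q_i/(Σ_{j∈supp(v)} q_j) for all i ∈ supp(v) (i.e., v is a projection point) if and only if L_{v,F} ∩ E_A ≠ ∅. -/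
open scoped BigOperators Pointwise

attribute [local instance] Classical.propDecidable

lemma EA_facts {κ ι : Type*} [Fintype κ] [Fintype ι] [Nonempty ι]
    (A : Matrix κ ι ℕ) {q : ι → ℝ} (hq : q ∈ EA A) :
    (∀ j, 0 < q j) ∧ ∑ j, q j = 1 := by
  obtain ⟨θ, hθ⟩ := hq
  have hS : 0 < ∑ l, Real.exp (∑ i, θ i * (A i l : ℝ)) :=
    Finset.sum_pos (fun l _ => Real.exp_pos _) Finset.univ_nonempty
  refine ⟨fun j => by rw [hθ j]; positivity, ?_⟩
  simp only [hθ]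
  rw [← Finset.sum_div, div_self hS.ne']


/-- A complementary vertex `v` of the logarithmic Voronoi polytope `Q_b` with
complementary face `F` is a projection point (of a point `q ∈ E_A` with `Aq = b`) if and only
if the union `L_{v,F}` of lines through `v` and points of `F` meets `E_A`. -/
theorem stmt6 {d n : ℕ} (A : Matrix (Fin d) (Fin n) ℕ)
    (hone : ∃ c : Fin d → ℝ, ∀ j, ∑ i, c i * (A i j : ℝ) = 1)
    (b : Fin d → ℝ)
    (Qb : Set (Fin n → ℝ))
    (hQb : Qb = {u | u ∈ simplex (Fin n) ∧ (A.map (Nat.cast : ℕ → ℝ)).mulVec u = b})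
    (v : Fin n → ℝ) (hv : v ∈ Set.extremePoints ℝ Qb)
    (F : Set (Fin n → ℝ)) (hFne : F.Nonempty) (hFconv : Convex ℝ F)
    (hFface : IsExtreme ℝ Qb F)
    (hsupp : (⋃ f ∈ F, Function.support f) = (Function.support v)ᶜ) :
    (∃ q ∈ EA A, (A.map (Nat.cast : ℕ → ℝ)).mulVec q = b ∧
        ∀ i, v i ≠ 0 → v i = q i / (∑ j, if v j = 0 then 0 else q j)) ↔
      ((⋃ f ∈ F, {x | ∃ t : ℝ, x = v + t • (f - v)}) ∩ EA A).Nonempty := by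
  set M := A.map (Nat.cast : ℕ → ℝ) with hM
  -- basic facts about v
  have hvQ : v ∈ Qb := hv.1
  have hvQ' : v ∈ simplex (Fin n) ∧ M.mulVec v = b := by rwa [hQb] at hvQ
  have hvnn : ∀ i, 0 ≤ v i := hvQ'.1.1
  have hvsum : ∑ i, v i = 1 := hvQ'.1.2
  have hvb : M.mulVec v = b := hvQ'.2
  have hne : Nonempty (Fin n) := by
    by_contra h
    rw [not_nonempty_iff] at h
    rw [Finset.univ_eq_empty, Finset.sum_empty] at hvsum
    norm_num at hvsum
  -- v has some nonzero coordinate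
  have hvsupp : ∃ i, v i ≠ 0 := by
    by_contra h
    push_neg at h
    rw [Finset.sum_congr rfl (fun i _ => h i), Finset.sum_const, smul_zero] at hvsum
    norm_num at hvsum
  -- each f ∈ F vanishes on supp v
  have hFvanish : ∀ f ∈ F, ∀ i, v i ≠ 0 → f i = 0 := by
    intro f hf i hvi
    by_contra hfi
    have : i ∈ ⋃ f ∈ F, Function.support f := Set.mem_iUnion₂.2 ⟨f, hf, hfi⟩
    rw [hsupp] at this
    exact this hvi
  constructor
  · rintro ⟨q, hqE, hqb, hqproj⟩
    obtain ⟨hqpos, hqsum⟩ := EA_facts A hqE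
    set s : ℝ := ∑ j, if v j = 0 then 0 else q j with hs
    have hspos : 0 < s := by
      obtain ⟨i0, hi0⟩ := hvsupp
      have h1 : (if v i0 = 0 then (0:ℝ) else q i0) ≤ s :=
        Finset.single_le_sum (f := fun j => if v j = 0 then (0:ℝ) else q j)
          (fun j _ => by by_cases h : v j = 0 <;> simp [h, (hqpos j).le]) (Finset.mem_univ i0)
      rw [if_neg hi0] at h1
      exact lt_of_lt_of_le (hqpos i0) h1
    have hT0 : ∃ j, v j = 0 := by
      obtain ⟨f, hf⟩ := hFne
      have hfQ' : f ∈ simplex (Fin n) ∧ M.mulVec f = b := by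
        have := hFface.1 hf; rwa [hQb] at this
      have : ∃ j, f j ≠ 0 := by
        by_contra h
        push_neg at h
        have := hfQ'.1.2
        rw [Finset.sum_congr rfl (fun i _ => h i), Finset.sum_const, smul_zero] at this
        norm_num at this
      obtain ⟨j, hj⟩ := this
      have hmem : j ∈ ⋃ f ∈ F, Function.support f := Set.mem_iUnion₂.2 ⟨f, hf, hj⟩
      rw [hsupp] at hmem
      exact ⟨j, by simpa [Function.mem_support, not_not] using hmem⟩
    have hrest : (∑ j, if v j = 0 then q j else 0) = 1 - s := by
      have : ∀ j, (if v j = 0 then q j else 0) = q j - (if v j = 0 then 0 else q j) := by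
        intro j; by_cases h : v j = 0 <;> simp [h]
      rw [Finset.sum_congr rfl (fun j _ => this j), Finset.sum_sub_distrib, hqsum]
    have hs1 : s < 1 := by
      obtain ⟨j0, hj0⟩ := hT0
      have h2 : (if v j0 = 0 then q j0 else 0) ≤ ∑ j, if v j = 0 then q j else 0 :=
        Finset.single_le_sum (f := fun j => if v j = 0 then q j else 0)
          (fun j _ => by by_cases h : v j = 0 <;> simp [h, (hqpos j).le]) (Finset.mem_univ j0)
      rw [if_pos hj0, hrest] at h2
      linarith [hqpos j0]
    have h1s : (0:ℝ) < 1 - s := by linarith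
    have hqv : ∀ i, v i ≠ 0 → q i = s * v i := by
      intro i hi
      have h1 := hqproj i hi
      field_simp [hspos.ne'] at h1
      linarith
    set w : Fin n → ℝ := fun i => if v i = 0 then q i / (1 - s) else 0 with hw
    have hq_eq : q = s • v + (1 - s) • w := by
      funext i
      simp only [Pi.add_apply, Pi.smul_apply, smul_eq_mul, hw]
      by_cases h : v i = 0
      · rw [if_pos h, h]; field_simp; ring
      · rw [if_neg h, hqv i h]; ring
    have hwnn : ∀ i, 0 ≤ w i := by
      intro i
      simp only [hw]
      by_cases h : v i = 0
      · rw [if_pos h]; exact div_nonneg (hqpos i).le h1s.le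
      · rw [if_neg h]
    have hwle : ∀ i, w i * (1 - s) ≤ 1 := by
      intro i
      simp only [hw]
      by_cases h : v i = 0
      · rw [if_pos h, div_mul_cancel₀ _ h1s.ne']
        calc q i ≤ ∑ j, q j := Finset.single_le_sum (fun j _ => (hqpos j).le) (Finset.mem_univ i)
        _ = 1 := hqsum
      · rw [if_neg h]; linarith
    have hwsum : ∑ i, w i = 1 := by
      have : ∀ i, w i = (if v i = 0 then q i else 0) / (1 - s) := by
        intro i
        simp only [hw]
        by_cases h : v i = 0 <;> simp [h]
      rw [Finset.sum_congr rfl (fun i _ => this i), ← Finset.sum_div, hrest,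
        div_self h1s.ne']
    have hwb : M.mulVec w = b := by
      have h1 := hqb
      rw [hq_eq, Matrix.mulVec_add, Matrix.mulVec_smul, Matrix.mulVec_smul, hvb] at h1
      funext k
      have h2 := congrFun h1 k
      simp only [Pi.add_apply, Pi.smul_apply, smul_eq_mul] at h2
      have h3 : (1 - s) * (M.mulVec w) k = (1 - s) * b k := by linarith
      exact mul_left_cancel₀ h1s.ne' h3
    have hwQ : w ∈ Qb := by rw [hQb]; exact ⟨⟨hwnn, hwsum⟩, hwb⟩
    -- construct f0 ∈ F with full support on {v = 0}
    set T : Finset (Fin n) := Finset.univ.filter (fun j => v j = 0) with hTdef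
    have hTne : T.Nonempty := by
      obtain ⟨j, hj⟩ := hT0
      exact ⟨j, by simp [hTdef, hj]⟩
    have hcard : (0:ℝ) < T.card := by exact_mod_cast Finset.card_pos.2 hTne
    have hch : ∀ j : Fin n, ∃ f, f ∈ F ∧ (v j = 0 → f j ≠ 0) := by
      intro j
      by_cases h : v j = 0
      · have hmem : j ∈ (Function.support v)ᶜ := by simp [Function.mem_support, h]
        rw [← hsupp] at hmem
        obtain ⟨f, hf, hfj⟩ := Set.mem_iUnion₂.1 hmem
        exact ⟨f, hf, fun _ => hfj⟩
      · exact ⟨hFne.choose, hFne.choose_spec, fun h' => absurd h' h⟩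
    choose g hgF hgj using hch
    have hgQ : ∀ j, g j ∈ simplex (Fin n) ∧ M.mulVec (g j) = b := by
      intro j
      have := hFface.1 (hgF j); rwa [hQb] at this
    set f0 : Fin n → ℝ := ∑ j ∈ T, ((T.card : ℝ)⁻¹) • g j with hf0
    have hf0F : f0 ∈ F := by
      apply hFconv.sum_mem (fun j _ => inv_nonneg.2 (Nat.cast_nonneg _))
      · rw [Finset.sum_const, nsmul_eq_mul, mul_inv_cancel₀ hcard.ne']
      · exact fun j _ => hgF j
    have hf0app : ∀ i, f0 i = ∑ j ∈ T, ((T.card : ℝ)⁻¹) * g j i := by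
      intro i
      rw [hf0]
      simp [Finset.sum_apply]
    have hf0pos : ∀ j, v j = 0 → 0 < f0 j := by
      intro j hj
      rw [hf0app]
      apply Finset.sum_pos' (fun k _ => mul_nonneg (inv_nonneg.2 (Nat.cast_nonneg _)) ((hgQ k).1.1 j))
      · refine ⟨j, by simp [hTdef, hj], ?_⟩
        have h1 : g j j ≠ 0 := hgj j hj
        have h2 : 0 ≤ g j j := (hgQ j).1.1 j
        have : 0 < g j j := lt_of_le_of_ne h2 (Ne.symm h1)
        exact mul_pos (inv_pos.2 hcard) this
    have hf0Q : f0 ∈ simplex (Fin n) ∧ M.mulVec f0 = b := by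
      have := hFface.1 hf0F; rwa [hQb] at this
    set m : ℝ := T.inf' hTne f0 with hm
    have hmpos : 0 < m := by
      rw [hm, Finset.lt_inf'_iff]
      intro j hj
      exact hf0pos j (by simpa [hTdef] using hj)
    have hmle : ∀ j, v j = 0 → m ≤ f0 j := by
      intro j hj
      exact Finset.inf'_le _ (by simp [hTdef, hj])
    set ε : ℝ := min (1/2) (m * (1 - s)) with hε
    have hεpos : 0 < ε := lt_min (by norm_num) (by positivity)
    have hε1 : ε < 1 := lt_of_le_of_lt (min_le_left _ _) (by norm_num)
    have h1ε : (0:ℝ) < 1 - ε := by linarith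
    have hkey : ∀ i, ε * w i ≤ f0 i := by
      intro i
      by_cases h : v i = 0
      · have h1 : ε ≤ m * (1 - s) := min_le_right _ _
        have h2 : m ≤ f0 i := hmle i h
        have h3 := hwle i
        have h4 := hwnn i
        nlinarith [mul_le_mul_of_nonneg_right h1 h4]
      · have : w i = 0 := by simp [hw, h]
        rw [this, mul_zero]
        have := hmle
        by_cases h2 : v i = 0
        · exact absurd h2 h
        · calc (0:ℝ) ≤ ∑ j ∈ T, ((T.card : ℝ)⁻¹) * g j i := by
                apply Finset.sum_nonneg
                intro k _
                have := (hgQ k).1.1 i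
                exact mul_nonneg (inv_nonneg.2 (Nat.cast_nonneg _)) this
          _ = f0 i := (hf0app i).symm
    set z : Fin n → ℝ := (1 - ε)⁻¹ • (f0 - ε • w) with hz
    have hzapp : ∀ i, z i = (1 - ε)⁻¹ * (f0 i - ε * w i) := by
      intro i; simp [hz]
    have hzQ : z ∈ Qb := by
      rw [hQb]
      refine ⟨⟨fun i => ?_, ?_⟩, ?_⟩
      · rw [hzapp]
        exact mul_nonneg (by positivity) (by linarith [hkey i])
      · rw [Finset.sum_congr rfl (fun i _ => hzapp i), ← Finset.mul_sum]
        rw [Finset.sum_sub_distrib, ← Finset.mul_sum, hf0Q.1.2, hwsum, mul_one]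
        field_simp
      · rw [hz, Matrix.mulVec_smul, Matrix.mulVec_sub, Matrix.mulVec_smul, hf0Q.2, hwb]
        funext k
        simp only [Pi.smul_apply, Pi.sub_apply, smul_eq_mul]
        field_simp
    have hseg : f0 ∈ openSegment ℝ z w := by
      refine ⟨1 - ε, ε, h1ε, hεpos, by ring, ?_⟩
      rw [hz, smul_smul, mul_inv_cancel₀ h1ε.ne', one_smul]
      abel
    have hwF : w ∈ F := hFface.right_mem_of_mem_openSegment hzQ hwQ hf0F hseg
    refine ⟨q, Set.mem_inter (Set.mem_iUnion₂.2 ⟨w, hwF, 1 - s, ?_⟩) hqE⟩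
    funext i
    simp only [Pi.add_apply, Pi.smul_apply, Pi.sub_apply, smul_eq_mul, hw]
    by_cases h : v i = 0
    · rw [if_pos h, h]; field_simp; ring
    · rw [if_neg h, hqv i h]; ring
  · rintro ⟨x, hxL, hxE⟩
    obtain ⟨f, hfF, t, hx⟩ := Set.mem_iUnion₂.1 hxL
    obtain ⟨hxpos, hxsum⟩ := EA_facts A hxE
    have hfv : ∀ i, v i ≠ 0 → f i = 0 := hFvanish f hfF
    have hfQ : f ∈ Qb := hFface.1 hfF
    have hfQ' : f ∈ simplex (Fin n) ∧ M.mulVec f = b := by rwa [hQb] at hfQ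
    have hxi : ∀ i, v i ≠ 0 → x i = (1 - t) * v i := by
      intro i hvi
      have : x i = v i + t * (f i - v i) := by rw [hx]; simp
      rw [hfv i hvi] at this
      rw [this]; ring
    have ht1 : t ≠ 1 := by
      intro ht
      obtain ⟨i, hi⟩ := hvsupp
      have := hxi i hi
      rw [ht] at this
      simp at this
      exact (hxpos i).ne' this
    have hS : (∑ j, if v j = 0 then 0 else x j) = 1 - t := by
      have : ∀ j, (if v j = 0 then (0:ℝ) else x j) = (1 - t) * v j := by
        intro j
        by_cases h : v j = 0
        · simp [h]
        · rw [if_neg h, hxi j h]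
      rw [Finset.sum_congr rfl (fun j _ => this j), ← Finset.mul_sum, hvsum, mul_one]
    refine ⟨x, hxE, ?_, ?_⟩
    · rw [hx, Matrix.mulVec_add, Matrix.mulVec_smul, Matrix.mulVec_sub, hfQ'.2, hvb]
      simp
    · intro i hvi
      rw [hS, hxi i hvi]; field_simp [sub_ne_zero.2 (Ne.symm ht1)]
end

section
/- Let A ∈ ℕ^{d×n} be a matrix of rank d = n−1 whose row span contains the all-ones vector, and suppose the kernel of A (over ℝ) is spanned by a vector c ∈ ℤⁿ with c_i > 0 for 1 ≤ i ≤ r and c_i < 0 for r+1 ≤ i ≤ n. Define p, p̃ ∈ Δ_{n−1} by p_i = c_i/(Σ_{j≤r} c_j) for i ≤ r and p_i = 0 for i > r, and p̃_i = 0 for i ≤ r and p̃_i = −c_i/(Σ_{j>r} (−c_j)) for i > r. Then sup_{x∈Δ_{n−1}} D_{M_A}(x) = max(D_{M_A}(p), D_{M_A}(p̃)), and every global maximizer of D_{M_A} over Δ_{n−1} equals p or p̃. -/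
open scoped BigOperators Pointwise

attribute [local instance] Classical.propDecidable

namespace Stmt7Aux

noncomputable def Cfun {n : ℕ} (x : Fin n → ℝ) : ℝ := ∑ j, x j * Real.log (x j)



lemma continuous_Cfun {n : ℕ} : Continuous (Cfun (n := n)) := by
  refine continuous_finset_sum _ (fun j _ => ?_)
  exact Real.continuous_mul_log.comp (continuous_apply j)

lemma Cfun_nonpos {n : ℕ} {x : Fin n → ℝ} (hx : x ∈ simplex (Fin n)) : Cfun x ≤ 0 := by
  refine Finset.sum_nonpos (fun j _ => ?_)
  rcases eq_or_lt_of_le (hx.1 j) with h | h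
  · simp [← h]
  · have hle : x j ≤ 1 := by
      rw [← hx.2]
      exact Finset.single_le_sum (fun i _ => hx.1 i) (Finset.mem_univ j)
    have : Real.log (x j) ≤ 0 := Real.log_nonpos (le_of_lt h) hle
    exact mul_nonpos_of_nonneg_of_nonpos (le_of_lt h) this

/-- EReal helper: if `a ≤ b + ε` (coerced) for all positive ε then `a ≤ b`. -/
lemma ereal_le_coe_of_forall_eps {a : EReal} {b : ℝ}
    (h : ∀ ε : ℝ, 0 < ε → a ≤ ((b + ε : ℝ) : EReal)) : a ≤ (b : EReal) := by
  have hne : a ≠ ⊤ := by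
    intro hti
    have := h 1 one_pos
    rw [hti] at this
    exact (EReal.coe_ne_top _) (top_le_iff.mp this)
  rcases eq_or_ne a ⊥ with hb | hb
  · simp [hb]
  · lift a to ℝ using ⟨hne, hb⟩
    rw [EReal.coe_le_coe_iff]
    refine le_of_forall_pos_le_add (fun ε hε => ?_)
    have := h ε hε
    rwa [EReal.coe_le_coe_iff] at this

lemma isClosed_simplex {n : ℕ} : IsClosed (simplex (Fin n)) := by
  have : simplex (Fin n) = (⋂ i, {x : Fin n → ℝ | 0 ≤ x i}) ∩ {x | ∑ i, x i = 1} := by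
    ext x; simp [simplex, Set.mem_iInter]
  rw [this]
  refine IsClosed.inter (isClosed_iInter (fun i => ?_)) ?_
  · exact isClosed_le continuous_const (continuous_apply i)
  · exact isClosed_eq (continuous_finset_sum _ (fun i _ => continuous_apply i)) continuous_const

lemma isCompact_simplex {n : ℕ} : IsCompact (simplex (Fin n)) := by
  have hsub : simplex (Fin n) ⊆ Set.univ.pi (fun _ : Fin n => Set.Icc (0:ℝ) 1) := by
    intro x hx i _
    refine ⟨hx.1 i, ?_⟩
    rw [← hx.2]
    exact Finset.single_le_sum (fun i _ => hx.1 i) (Finset.mem_univ i)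
  exact (isCompact_univ_pi (fun _ => isCompact_Icc)).of_isClosed_subset isClosed_simplex hsub


structure Ctx (d n r : ℕ) where
  A : Matrix (Fin d) (Fin n) ℕ
  c : Fin n → ℤ
  hdn : d + 1 = n
  hr : 0 < r
  hrn : r < n
  hrank : (A.map (Nat.cast : ℕ → ℝ)).rank = d
  hone : ∃ cc : Fin d → ℝ, ∀ j, ∑ i, cc i * (A i j : ℝ) = 1
  hker : LinearMap.ker (A.map (Nat.cast : ℕ → ℝ)).mulVecLin
      = Submodule.span ℝ {fun i => ((c i : ℝ))}
  hcpos : ∀ i : Fin n, (i : ℕ) < r → 0 < c i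
  hcneg : ∀ i : Fin n, r ≤ (i : ℕ) → c i < 0

namespace Ctx

variable {d n r : ℕ} (ct : Ctx d n r)

lemma hn (ct : Ctx d n r) : 0 < n := lt_trans ct.hr ct.hrn

def cb : Fin n → ℝ := fun j => (ct.c j : ℝ)

lemma cb_pos {i : Fin n} (h : (i:ℕ) < r) : 0 < ct.cb i := by
  have := ct.hcpos i h
  simp only [cb]
  exact_mod_cast this

lemma cb_neg {i : Fin n} (h : r ≤ (i:ℕ)) : ct.cb i < 0 := by
  have := ct.hcneg i h
  simp only [cb]
  exact_mod_cast this

lemma cb_ne {i : Fin n} : ct.cb i ≠ 0 := by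
  rcases lt_or_ge (i:ℕ) r with h | h
  · exact ne_of_gt (ct.cb_pos h)
  · exact ne_of_lt (ct.cb_neg h)

noncomputable def dotA (θ : Fin d → ℝ) (j : Fin n) : ℝ := ∑ i, θ i * (ct.A i j : ℝ)

noncomputable def Zf (θ : Fin d → ℝ) : ℝ := ∑ l, Real.exp (ct.dotA θ l)

noncomputable def Qm (θ : Fin d → ℝ) : Fin n → ℝ := fun j => Real.exp (ct.dotA θ j) / ct.Zf θ

noncomputable def Fn (x : Fin n → ℝ) (θ : Fin d → ℝ) : ℝ :=
  Real.log (ct.Zf θ) - ∑ j, x j * ct.dotA θ j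

noncomputable def psi (x : Fin n → ℝ) : ℝ := ⨅ θ : Fin d → ℝ, ct.Fn x θ

noncomputable def val (x : Fin n → ℝ) : ℝ := Cfun x + ct.psi x

lemma Zf_pos (θ : Fin d → ℝ) : 0 < ct.Zf θ := by
  have : Nonempty (Fin n) := ⟨⟨0, ct.hn⟩⟩
  exact Finset.sum_pos (fun l _ => Real.exp_pos _) Finset.univ_nonempty

lemma Qm_pos (θ : Fin d → ℝ) (j : Fin n) : 0 < ct.Qm θ j :=
  div_pos (Real.exp_pos _) (ct.Zf_pos θ)

lemma Qm_sum (θ : Fin d → ℝ) : ∑ j, ct.Qm θ j = 1 := by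
  simp only [Qm]
  rw [← Finset.sum_div]
  exact div_self (ne_of_gt (ct.Zf_pos θ))

lemma Qm_mem_simplex (θ : Fin d → ℝ) : ct.Qm θ ∈ simplex (Fin n) :=
  ⟨fun j => le_of_lt (ct.Qm_pos θ j), ct.Qm_sum θ⟩

lemma Qm_mem_EA (θ : Fin d → ℝ) : ct.Qm θ ∈ EA ct.A := ⟨θ, fun _ => rfl⟩

lemma log_Qm (θ : Fin d → ℝ) (j : Fin n) :
    Real.log (ct.Qm θ j) = ct.dotA θ j - Real.log (ct.Zf θ) := by
  simp only [Qm]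
  rw [Real.log_div (Real.exp_ne_zero _) (ne_of_gt (ct.Zf_pos θ)), Real.log_exp]

end Ctx

/-- Gibbs inequality. -/
lemma gibbs {x q : Fin n → ℝ} (hx : x ∈ simplex (Fin n)) (hq0 : ∀ i, 0 ≤ q i)
    (hqs : ∑ i, q i ≤ 1) (hsupp : ∀ i, x i ≠ 0 → q i ≠ 0) :
    ∑ i, x i * Real.log (q i) ≤ ∑ i, x i * Real.log (x i) := by
  have h1 : ∀ i : Fin n, x i * Real.log (q i) - x i * Real.log (x i) ≤ q i - x i := by
    intro i
    by_cases hxi : x i = 0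
    · simp [hxi, hq0 i]
    · have hxpos : 0 < x i := lt_of_le_of_ne (hx.1 i) (Ne.symm hxi)
      have hqpos : 0 < q i := lt_of_le_of_ne (hq0 i) (Ne.symm (hsupp i hxi))
      have hlog : Real.log (q i) - Real.log (x i) = Real.log (q i / x i) :=
        (Real.log_div (ne_of_gt hqpos) (ne_of_gt hxpos)).symm
      have h2 : Real.log (q i / x i) ≤ q i / x i - 1 :=
        Real.log_le_sub_one_of_pos (div_pos hqpos hxpos)
      have h3 : x i * Real.log (q i / x i) ≤ x i * (q i / x i - 1) :=
        mul_le_mul_of_nonneg_left h2 (le_of_lt hxpos)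
      have h4 : x i * (q i / x i - 1) = q i - x i := by
        field_simp
      calc x i * Real.log (q i) - x i * Real.log (x i) = x i * Real.log (q i / x i) := by
            rw [← mul_sub, hlog]
        _ ≤ q i - x i := by rw [← h4]; exact h3
  have h5 : ∑ i, (x i * Real.log (q i) - x i * Real.log (x i)) ≤ ∑ i, (q i - x i) :=
    Finset.sum_le_sum (fun i _ => h1 i)
  rw [Finset.sum_sub_distrib, Finset.sum_sub_distrib, hx.2] at h5
  linarith

namespace Ctx
variable {d n r : ℕ} (ct : Ctx d n r)

lemma Fn_eq {x : Fin n → ℝ} (hx : x ∈ simplex (Fin n)) (θ : Fin d → ℝ) :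
    ct.Fn x θ = - ∑ j, x j * Real.log (ct.Qm θ j) := by
  have : ∑ j, x j * Real.log (ct.Qm θ j)
      = ∑ j, x j * ct.dotA θ j - (∑ j, x j) * Real.log (ct.Zf θ) := by
    rw [Finset.sum_mul, ← Finset.sum_sub_distrib]
    refine Finset.sum_congr rfl (fun j _ => ?_)
    rw [ct.log_Qm θ j]; ring
  rw [Fn, this, hx.2]; ring

lemma Fn_ge {x : Fin n → ℝ} (hx : x ∈ simplex (Fin n)) (θ : Fin d → ℝ) :
    - Cfun x ≤ ct.Fn x θ := by
  rw [ct.Fn_eq hx θ, neg_le_neg_iff, Cfun]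
  exact gibbs hx (fun i => le_of_lt (ct.Qm_pos θ i)) (le_of_eq (ct.Qm_sum θ))
    (fun i _ => ne_of_gt (ct.Qm_pos θ i))

lemma Fn_bddBelow {x : Fin n → ℝ} (hx : x ∈ simplex (Fin n)) :
    BddBelow (Set.range (ct.Fn x)) :=
  ⟨- Cfun x, fun y ⟨θ, hθ⟩ => hθ ▸ ct.Fn_ge hx θ⟩

lemma psi_ge {x : Fin n → ℝ} (hx : x ∈ simplex (Fin n)) : - Cfun x ≤ ct.psi x :=
  le_ciInf (ct.Fn_ge hx)

lemma psi_le {x : Fin n → ℝ} (hx : x ∈ simplex (Fin n)) (θ : Fin d → ℝ) :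
    ct.psi x ≤ ct.Fn x θ :=
  ciInf_le (ct.Fn_bddBelow hx) θ

lemma val_nonneg {x : Fin n → ℝ} (hx : x ∈ simplex (Fin n)) : 0 ≤ ct.val x := by
  have := ct.psi_ge hx; rw [val]; linarith

end Ctx
end Stmt7Aux

namespace Stmt7Aux
namespace Ctx
variable {d n r : ℕ} (ct : Ctx d n r)

lemma EA_eq_Qm {q : Fin n → ℝ} (hq : q ∈ EA ct.A) : ∃ θ, q = ct.Qm θ := by
  obtain ⟨θ, hθ⟩ := hq
  exact ⟨θ, funext hθ⟩

lemma closure_nonneg {q : Fin n → ℝ} (hq : q ∈ closure (EA ct.A)) (i : Fin n) : 0 ≤ q i := by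
  have hcl : IsClosed {f : Fin n → ℝ | ∀ i, 0 ≤ f i} := by
    have : {f : Fin n → ℝ | ∀ i, 0 ≤ f i} = ⋂ i, {f : Fin n → ℝ | 0 ≤ f i} := by
      ext f; simp [Set.mem_iInter]
    rw [this]
    exact isClosed_iInter (fun i => isClosed_le continuous_const (continuous_apply i))
  have hsub : EA ct.A ⊆ {f : Fin n → ℝ | ∀ i, 0 ≤ f i} := by
    intro f hf
    obtain ⟨θ, rfl⟩ := ct.EA_eq_Qm hf
    exact fun i => le_of_lt (ct.Qm_pos θ i)
  have := closure_mono hsub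
  rw [hcl.closure_eq] at this
  exact this hq i

lemma KL_Qm {x : Fin n → ℝ} (hx : x ∈ simplex (Fin n)) (θ : Fin d → ℝ) :
    KL x (ct.Qm θ) = ((Cfun x + ct.Fn x θ : ℝ) : EReal) := by
  rw [KL, if_pos (fun i hi => absurd hi (ne_of_gt (ct.Qm_pos θ i)))]
  congr 1
  have : ∀ i : Fin n, x i * Real.log (x i / ct.Qm θ i)
      = x i * Real.log (x i) - x i * Real.log (ct.Qm θ i) := by
    intro i
    by_cases hxi : x i = 0
    · simp [hxi]
    · rw [Real.log_div hxi (ne_of_gt (ct.Qm_pos θ i))]; ring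
  rw [Finset.sum_congr rfl (fun i _ => this i), Finset.sum_sub_distrib, ct.Fn_eq hx θ, Cfun]
  ring

lemma divFrom_le {x : Fin n → ℝ} (hx : x ∈ simplex (Fin n)) :
    divFrom (closure (EA ct.A)) x ≤ ((Cfun x + ct.psi x : ℝ) : EReal) := by
  refine ereal_le_coe_of_forall_eps (fun ε hε => ?_)
  have h1 : ct.psi x < ct.psi x + ε := lt_add_of_pos_right _ hε
  obtain ⟨θ, hθ⟩ := exists_lt_of_ciInf_lt h1
  have h2 : divFrom (closure (EA ct.A)) x ≤ KL x (ct.Qm θ) := by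
    refine iInf₂_le _ ?_
    exact subset_closure (ct.Qm_mem_EA θ)
  rw [ct.KL_Qm hx θ] at h2
  refine h2.trans ?_
  rw [EReal.coe_le_coe_iff]
  linarith

lemma divFrom_ge {x : Fin n → ℝ} (hx : x ∈ simplex (Fin n)) {q : Fin n → ℝ}
    (hq : q ∈ closure (EA ct.A)) :
    ((Cfun x + ct.psi x : ℝ) : EReal) ≤ KL x q := by
  by_cases hb : ∀ i, q i = 0 → x i = 0
  · rw [KL, if_pos hb, EReal.coe_le_coe_iff]
    obtain ⟨f, hfEA, hconv⟩ := mem_closure_iff_seq_limit.mp hq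
    have hgle : ∀ k : ℕ, ∑ j, x j * Real.log (f k j) ≤ - ct.psi x := by
      intro k
      obtain ⟨θ, hθ⟩ := ct.EA_eq_Qm (hfEA k)
      rw [hθ]
      have h1 := ct.psi_le hx θ
      rw [ct.Fn_eq hx θ] at h1
      linarith
    have htend : Filter.Tendsto (fun k => ∑ j, x j * Real.log (f k j))
        Filter.atTop (nhds (∑ j, x j * Real.log (q j))) := by
      refine tendsto_finset_sum _ (fun j _ => ?_)
      by_cases hxj : x j = 0
      · simp only [hxj, zero_mul]
        exact tendsto_const_nhds
      · have hqj : q j ≠ 0 := fun h => hxj (hb j h)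
        have h1 : Filter.Tendsto (fun k => f k j) Filter.atTop (nhds (q j)) :=
          tendsto_pi_nhds.mp hconv j
        exact ((Real.continuousAt_log hqj).tendsto.comp h1).const_mul _
    have hle : ∑ j, x j * Real.log (q j) ≤ - ct.psi x :=
      le_of_tendsto htend (Filter.Eventually.of_forall hgle)
    have hsplit : ∑ i, x i * Real.log (x i / q i)
        = Cfun x - ∑ j, x j * Real.log (q j) := by
      rw [Cfun, ← Finset.sum_sub_distrib]
      refine Finset.sum_congr rfl (fun i _ => ?_)
      by_cases hxi : x i = 0
      · simp [hxi]
      · rw [Real.log_div hxi (fun h => hxi (hb i h))]; ring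
    rw [hsplit]
    linarith
  · rw [KL, if_neg hb]
    exact le_top

lemma divFrom_eq {x : Fin n → ℝ} (hx : x ∈ simplex (Fin n)) :
    divFrom (closure (EA ct.A)) x = ((ct.val x : ℝ) : EReal) := by
  refine le_antisymm (ct.divFrom_le hx) ?_
  rw [val, divFrom]
  exact le_iInf₂ (fun q hq => ct.divFrom_ge hx hq)

/-! ### Linear algebra -/

lemma cb_mem_ker : ct.cb ∈ LinearMap.ker (ct.A.map (Nat.cast : ℕ → ℝ)).mulVecLin := by
  rw [ct.hker]
  exact Submodule.mem_span_singleton_self _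

lemma hAc : ∀ i, ∑ j, (ct.A i j : ℝ) * ct.cb j = 0 := by
  intro i
  have h := ct.cb_mem_ker
  rw [LinearMap.mem_ker, Matrix.mulVecLin_apply] at h
  have := congrFun h i
  simpa [Matrix.mulVec, dotProduct, Matrix.map_apply] using this

lemma hdotc (θ : Fin d → ℝ) : ∑ j, ct.cb j * ct.dotA θ j = 0 := by
  simp only [dotA, Finset.mul_sum]
  rw [Finset.sum_comm]
  refine Finset.sum_eq_zero (fun i _ => ?_)
  have h := ct.hAc i
  have : ∑ j, ct.cb j * (θ i * (ct.A i j : ℝ)) = θ i * ∑ j, (ct.A i j : ℝ) * ct.cb j := by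
    rw [Finset.mul_sum]
    exact Finset.sum_congr rfl (fun j _ => by ring)
  rw [this, h, mul_zero]

lemma hsumc : ∑ j, ct.cb j = 0 := by
  obtain ⟨cc, hcc⟩ := ct.hone
  have h := ct.hdotc cc
  have : ∀ j : Fin n, ct.cb j * ct.dotA cc j = ct.cb j := by
    intro j; rw [dotA, hcc j, mul_one]
  rw [Finset.sum_congr rfl (fun j _ => this j)] at h
  exact h

/-- Row-space realization: any vector orthogonal to `c` is of form `θ ↦ dotA θ`. -/
lemma exists_theta (v : Fin n → ℝ) (hv : ∑ j, ct.cb j * v j = 0) :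
    ∃ θ : Fin d → ℝ, ∀ j, ct.dotA θ j = v j := by
  classical
  set B := (ct.A.map (Nat.cast : ℕ → ℝ)).transpose with hB
  set T := B.mulVecLin with hT
  -- the functional
  set φ := (Matrix.of fun (_ : Fin 1) (j : Fin n) => ct.cb j).mulVecLin with hφ
  have hφapp : ∀ w : Fin n → ℝ, φ w = fun _ : Fin 1 => ∑ j, ct.cb j * w j := by
    intro w
    funext i
    simp [hφ, Matrix.mulVecLin_apply, Matrix.mulVec, dotProduct]
  have hrange : LinearMap.range T ≤ LinearMap.ker φ := by
    rintro w ⟨θ, rfl⟩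
    rw [LinearMap.mem_ker, hφapp]
    funext i
    have : ∀ j, T θ j = ct.dotA θ j := by
      intro j
      simp [hT, hB, Matrix.mulVecLin_apply, Matrix.mulVec, dotProduct,
        Matrix.transpose_apply, Matrix.map_apply, dotA, Matrix.vecMul, mul_comm]
    rw [Finset.sum_congr rfl (fun j _ => by rw [this j])]
    exact ct.hdotc θ
  have hTapp : ∀ (θ : Fin d → ℝ) (j : Fin n), T θ j = ct.dotA θ j := by
    intro θ j
    simp [hT, hB, Matrix.mulVecLin_apply, Matrix.mulVec, dotProduct,
      Matrix.transpose_apply, Matrix.map_apply, dotA, Matrix.vecMul, mul_comm]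
  have hs : 0 < ∑ j, ct.cb j * ct.cb j := by
    have : Nonempty (Fin n) := ⟨⟨0, ct.hn⟩⟩
    refine Finset.sum_pos (fun j _ => ?_) Finset.univ_nonempty
    exact mul_self_pos.mpr ct.cb_ne
  have hsurj : Function.Surjective φ := by
    intro w
    refine ⟨(w 0 / (∑ j, ct.cb j * ct.cb j)) • ct.cb, ?_⟩
    rw [hφapp]
    funext i
    have hi0 : i = 0 := Subsingleton.elim _ _
    subst hi0
    have : ∀ j : Fin n, ct.cb j * ((w 0 / (∑ j, ct.cb j * ct.cb j)) • ct.cb) j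
        = (w 0 / (∑ j, ct.cb j * ct.cb j)) * (ct.cb j * ct.cb j) := by
      intro j
      simp only [Pi.smul_apply, smul_eq_mul]
      ring
    rw [Finset.sum_congr rfl (fun j _ => this j), ← Finset.mul_sum]
    exact div_mul_cancel₀ _ (ne_of_gt hs)
  have hrangeφ : LinearMap.range φ = ⊤ := LinearMap.range_eq_top.mpr hsurj
  have h1 : Module.finrank ℝ (LinearMap.range φ) = 1 := by
    rw [hrangeφ, finrank_top]
    exact Module.finrank_fin_fun ℝ
  have h2 := LinearMap.finrank_range_add_finrank_ker φ
  rw [h1, Module.finrank_fin_fun] at h2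
  have hkerφ : Module.finrank ℝ (LinearMap.ker φ) = d := by
    have := ct.hdn
    omega
  have hrangeT : Module.finrank ℝ (LinearMap.range T) = d := by
    have : Module.finrank ℝ (LinearMap.range T) = B.rank := rfl
    rw [this, hB, Matrix.rank_transpose, ct.hrank]
  have heq : LinearMap.range T = LinearMap.ker φ := by
    refine Submodule.eq_of_le_of_finrank_le hrange ?_
    rw [hrangeT, hkerφ]
  have hvker : v ∈ LinearMap.ker φ := by
    rw [LinearMap.mem_ker, hφapp]
    funext i
    simp [hv]
  rw [← heq] at hvker
  obtain ⟨θ, hθ⟩ := hvker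
  exact ⟨θ, fun j => by rw [← hTapp θ j, hθ]⟩

lemma Fn_fiber {x y : Fin n → ℝ} {s : ℝ} (hxy : ∀ j, y j = x j + s * ct.cb j)
    (θ : Fin d → ℝ) : ct.Fn y θ = ct.Fn x θ := by
  simp only [Fn]
  congr 1
  have : ∀ j, y j * ct.dotA θ j = x j * ct.dotA θ j + s * (ct.cb j * ct.dotA θ j) := by
    intro j; rw [hxy j]; ring
  rw [Finset.sum_congr rfl (fun j _ => this j), Finset.sum_add_distrib, ← Finset.mul_sum,
    ct.hdotc θ, mul_zero, add_zero]

lemma psi_fiber {x y : Fin n → ℝ} {s : ℝ} (hxy : ∀ j, y j = x j + s * ct.cb j) :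
    ct.psi y = ct.psi x := by
  simp only [psi]
  exact iInf_congr (fun θ => ct.Fn_fiber hxy θ)

lemma psi_eq_of_crit {y : Fin n → ℝ} (hy : y ∈ simplex (Fin n)) (hpos : ∀ i, 0 < y i)
    (hcrit : ∑ j, ct.cb j * Real.log (y j) = 0) : ct.psi y = - Cfun y := by
  refine le_antisymm ?_ (ct.psi_ge hy)
  obtain ⟨θ, hθ⟩ := ct.exists_theta (fun j => Real.log (y j)) hcrit
  have hZ : ct.Zf θ = 1 := by
    have : ∀ l, Real.exp (ct.dotA θ l) = y l := by
      intro l; rw [hθ l, Real.exp_log (hpos l)]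
    rw [Zf, Finset.sum_congr rfl (fun l _ => this l), hy.2]
  have hF : ct.Fn y θ = - Cfun y := by
    rw [Fn, hZ, Real.log_one, Cfun, zero_sub, neg_inj]
    exact Finset.sum_congr rfl (fun j _ => by rw [hθ j])
  rw [← hF]
  exact ct.psi_le hy θ

lemma psi_singleton {x : Fin n → ℝ} (hx : x ∈ simplex (Fin n))
    (h1 : ∃ i : Fin n, (i:ℕ) < r ∧ x i = 0) (h2 : ∃ i : Fin n, r ≤ (i:ℕ) ∧ x i = 0) :
    ct.psi x ≤ - Cfun x := by
  classical
  obtain ⟨j₀, hj₀r, hj₀x⟩ := h1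
  obtain ⟨j₁, hj₁r, hj₁x⟩ := h2
  set P : Finset (Fin n) := Finset.univ.filter (fun j => x j = 0 ∧ (j:ℕ) < r) with hP
  set Ng : Finset (Fin n) := Finset.univ.filter (fun j => x j = 0 ∧ r ≤ (j:ℕ)) with hNg
  have hPne : P.Nonempty := ⟨j₀, by simp [hP, hj₀x, hj₀r]⟩
  have hNgne : Ng.Nonempty := ⟨j₁, by simp [hNg, hj₁x, hj₁r]⟩
  set α : ℝ := -(∑ j ∈ Ng, ct.cb j) with hα
  set β : ℝ := ∑ j ∈ P, ct.cb j with hβ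
  have hαpos : 0 < α := by
    rw [hα, neg_pos]
    refine Finset.sum_neg (fun j hj => ?_) hNgne
    exact ct.cb_neg (Finset.mem_filter.mp hj).2.2
  have hβpos : 0 < β := by
    refine Finset.sum_pos (fun j hj => ?_) hPne
    exact ct.cb_pos (Finset.mem_filter.mp hj).2.2
  set η : Fin n → ℝ := fun j => if x j = 0 then (if (j:ℕ) < r then -α else -β) else 0 with hη
  have hηneg : ∀ j, x j = 0 → η j < 0 := by
    intro j hj
    simp only [hη, if_pos hj]
    split_ifs
    · exact neg_lt_zero.mpr hαpos
    · exact neg_lt_zero.mpr hβpos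
  have hηzero : ∀ j, x j ≠ 0 → η j = 0 := by
    intro j hj; simp only [hη, if_neg hj]
  have hηc : ∑ j, ct.cb j * η j = 0 := by
    have hdisj : Disjoint P Ng := by
      rw [Finset.disjoint_left]
      intro a haP haNg
      have h1 := (Finset.mem_filter.mp haP).2.2
      have h2 := (Finset.mem_filter.mp haNg).2.2
      omega
    have hzero : ∀ j ∈ Finset.univ, j ∉ P ∪ Ng → ct.cb j * η j = 0 := by
      intro j _ hj
      rw [Finset.mem_union] at hj
      push_neg at hj
      by_cases hxj : x j = 0
      · rcases lt_or_ge (j:ℕ) r with h | h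
        · exact absurd (Finset.mem_filter.mpr ⟨Finset.mem_univ _, hxj, h⟩) hj.1
        · exact absurd (Finset.mem_filter.mpr ⟨Finset.mem_univ _, hxj, h⟩) hj.2
      · rw [hηzero j hxj, mul_zero]
    rw [← Finset.sum_subset (Finset.subset_univ (P ∪ Ng)) hzero,
      Finset.sum_union hdisj]
    have hsumP : ∑ j ∈ P, ct.cb j * η j = -α * β := by
      rw [hβ, Finset.mul_sum]
      refine Finset.sum_congr rfl (fun j hj => ?_)
      have := Finset.mem_filter.mp hj
      rw [hη]
      simp only [if_pos this.2.1, if_pos this.2.2]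
      ring
    have hsumNg : ∑ j ∈ Ng, ct.cb j * η j = -β * (-α) := by
      have h' : ∑ j ∈ Ng, ct.cb j * η j = -β * ∑ j ∈ Ng, ct.cb j := by
        rw [Finset.mul_sum]
        refine Finset.sum_congr rfl (fun j hj => ?_)
        have := Finset.mem_filter.mp hj
        rw [hη]
        simp only [if_pos this.2.1, if_neg (not_lt.mpr this.2.2)]
        ring
      rw [h']
      have hNgsum : ∑ j ∈ Ng, ct.cb j = -α := by rw [hα]; ring
      rw [hNgsum]
    rw [hsumP, hsumNg]
    ring
  set S : ℝ := ∑ j, (if x j = 0 then 0 else ct.cb j * Real.log (x j)) with hS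
  set δ : ℝ := -S / ct.cb j₀ with hδ
  set v : Fin n → ℝ := fun j => if x j = 0 then (if j = j₀ then δ else 0) else Real.log (x j)
    with hv
  have hvc : ∑ j, ct.cb j * v j = 0 := by
    have hterm : ∀ j : Fin n, ct.cb j * v j
        = (if x j = 0 then 0 else ct.cb j * Real.log (x j))
          + (if j = j₀ then ct.cb j₀ * δ else 0) := by
      intro j
      by_cases hj : j = j₀
      · subst hj
        simp [hv, hj₀x]
      · by_cases hxj : x j = 0
        · simp only [hv, if_pos hxj, if_neg hj, mul_zero, add_zero, zero_add]
        · simp only [hv, if_neg hxj, if_neg hj, add_zero]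
    rw [Finset.sum_congr rfl (fun j _ => hterm j), Finset.sum_add_distrib,
      Finset.sum_ite_eq' Finset.univ j₀ (fun _ => ct.cb j₀ * δ), if_pos (Finset.mem_univ _),
      hδ, ← hS]
    have hcb : ct.cb j₀ ≠ 0 := ct.cb_ne
    field_simp
    ring
  have hwc : ∀ k : ℕ, ∑ j, ct.cb j * (v j + (k:ℝ) * η j) = 0 := by
    intro k
    have : ∀ j : Fin n, ct.cb j * (v j + (k:ℝ) * η j)
        = ct.cb j * v j + (k:ℝ) * (ct.cb j * η j) := fun j => by ring
    have h2 : ∑ j, (k:ℝ) * (ct.cb j * η j) = 0 := by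
      rw [← Finset.mul_sum, hηc, mul_zero]
    rw [Finset.sum_congr rfl (fun j _ => this j), Finset.sum_add_distrib, hvc, h2, add_zero]
  have hth := fun k : ℕ => ct.exists_theta (fun j => v j + (k:ℝ) * η j) (hwc k)
  choose θf hθf using hth
  have hFk : ∀ k : ℕ, ct.Fn x (θf k)
      = Real.log (∑ j, Real.exp (v j + (k:ℝ) * η j)) - Cfun x := by
    intro k
    rw [Fn, Zf]
    congr 1
    · congr 1
      exact Finset.sum_congr rfl (fun j _ => by rw [hθf k j])
    · rw [Cfun]
      refine Finset.sum_congr rfl (fun j _ => ?_)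
      rw [hθf k j]
      by_cases hxj : x j = 0
      · simp [hxj]
      · rw [hηzero j hxj]
        simp only [hv, if_neg hxj]
        ring
  have htendZ : Filter.Tendsto (fun k : ℕ => ∑ j, Real.exp (v j + (k:ℝ) * η j))
      Filter.atTop (nhds 1) := by
    have hx2 := hx.2
    have : Filter.Tendsto (fun k : ℕ => ∑ j, Real.exp (v j + (k:ℝ) * η j))
        Filter.atTop (nhds (∑ j, x j)) := by
      refine tendsto_finset_sum _ (fun j _ => ?_)
      by_cases hxj : x j = 0
      · have hrw : ∀ k : ℕ, Real.exp (v j + (k:ℝ) * η j)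
            = Real.exp (v j) * Real.exp (η j) ^ k := by
          intro k
          rw [Real.exp_add, Real.exp_nat_mul]
        rw [funext hrw, hxj]
        have : Filter.Tendsto (fun k : ℕ => Real.exp (η j) ^ k) Filter.atTop (nhds 0) :=
          tendsto_pow_atTop_nhds_zero_of_lt_one (le_of_lt (Real.exp_pos _))
            (Real.exp_lt_one_iff.mpr (hηneg j hxj))
        have := this.const_mul (Real.exp (v j))
        rwa [mul_zero] at this
      · have hvj : ∀ k : ℕ, Real.exp (v j + (k:ℝ) * η j) = x j := by
          intro k
          rw [hηzero j hxj, mul_zero, add_zero]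
          simp only [hv, if_neg hxj]
          exact Real.exp_log (lt_of_le_of_ne (hx.1 j) (Ne.symm hxj))
        rw [funext hvj]
        exact tendsto_const_nhds
    rwa [hx2] at this
  have htendF : Filter.Tendsto (fun k : ℕ => ct.Fn x (θf k)) Filter.atTop
      (nhds (- Cfun x)) := by
    rw [funext hFk]
    have h1 : Filter.Tendsto (fun k : ℕ => Real.log (∑ j, Real.exp (v j + (k:ℝ) * η j)))
        Filter.atTop (nhds 0) := by
      have := (Real.continuousAt_log one_ne_zero).tendsto.comp htendZ
      rwa [Real.log_one] at this
    have := h1.sub_const (Cfun x)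
    rwa [zero_sub] at this
  exact ge_of_tendsto htendF (Filter.Eventually.of_forall (fun k => ct.psi_le hx (θf k)))

/-! ### The special points -/

noncomputable def Np : ℝ := ∑ j : Fin n, (if (j:ℕ) < r then ct.cb j else 0)

noncomputable def Nt : ℝ := ∑ j : Fin n, (if (j:ℕ) < r then 0 else -(ct.cb j))

noncomputable def pp : Fin n → ℝ := fun i => if (i:ℕ) < r then ct.cb i / ct.Np else 0

noncomputable def pt : Fin n → ℝ := fun i => if (i:ℕ) < r then 0 else -(ct.cb i) / ct.Nt

lemma Np_pos : 0 < ct.Np := by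
  rw [Np]
  refine Finset.sum_pos' (fun j _ => ?_) ⟨⟨0, ct.hn⟩, Finset.mem_univ _, ?_⟩
  · split_ifs with h
    · exact le_of_lt (ct.cb_pos h)
    · exact le_refl 0
  · have h0 : ((⟨0, ct.hn⟩ : Fin n) : ℕ) < r := ct.hr
    rw [if_pos h0]
    exact ct.cb_pos h0

lemma Nt_eq_Np : ct.Nt = ct.Np := by
  have h : ∀ j : Fin n, (if (j:ℕ) < r then ct.cb j else 0)
      - (if (j:ℕ) < r then 0 else -(ct.cb j)) = ct.cb j := by
    intro j; split_ifs <;> ring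
  have h2 : ct.Np - ct.Nt = 0 := by
    rw [Np, Nt, ← Finset.sum_sub_distrib, Finset.sum_congr rfl (fun j _ => h j), ct.hsumc]
  linarith

lemma Nt_pos : 0 < ct.Nt := by rw [ct.Nt_eq_Np]; exact ct.Np_pos

lemma pp_pos {i : Fin n} (h : (i:ℕ) < r) : 0 < ct.pp i := by
  rw [pp, if_pos h]
  exact div_pos (ct.cb_pos h) ct.Np_pos

lemma pp_zero {i : Fin n} (h : ¬ (i:ℕ) < r) : ct.pp i = 0 := by rw [pp, if_neg h]

lemma pt_pos {i : Fin n} (h : ¬ (i:ℕ) < r) : 0 < ct.pt i := by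
  rw [pt, if_neg h]
  refine div_pos ?_ ct.Nt_pos
  have := ct.cb_neg (le_of_not_gt h)
  linarith

lemma pt_zero {i : Fin n} (h : (i:ℕ) < r) : ct.pt i = 0 := by rw [pt, if_pos h]

lemma pp_sum : ∑ i, ct.pp i = 1 := by
  have h : ∀ i : Fin n, ct.pp i = (if (i:ℕ) < r then ct.cb i else 0) / ct.Np := by
    intro i; rw [pp]; split_ifs <;> simp
  rw [Finset.sum_congr rfl (fun i _ => h i), ← Finset.sum_div, ← Np]
  exact div_self (ne_of_gt ct.Np_pos)

lemma pt_sum : ∑ i, ct.pt i = 1 := by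
  have h : ∀ i : Fin n, ct.pt i = (if (i:ℕ) < r then 0 else -(ct.cb i)) / ct.Nt := by
    intro i; rw [pt]; split_ifs <;> simp
  rw [Finset.sum_congr rfl (fun i _ => h i), ← Finset.sum_div, ← Nt]
  exact div_self (ne_of_gt ct.Nt_pos)

lemma pp_mem : ct.pp ∈ simplex (Fin n) := by
  refine ⟨fun i => ?_, ct.pp_sum⟩
  by_cases h : (i:ℕ) < r
  · exact le_of_lt (ct.pp_pos h)
  · rw [ct.pp_zero h]

lemma pt_mem : ct.pt ∈ simplex (Fin n) := by
  refine ⟨fun i => ?_, ct.pt_sum⟩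
  by_cases h : (i:ℕ) < r
  · rw [ct.pt_zero h]
  · exact le_of_lt (ct.pt_pos h)

lemma pt_fiber : ∀ j, ct.pt j = ct.pp j + -(1 / ct.Np) * ct.cb j := by
  intro j
  rw [pt, pp, ct.Nt_eq_Np]
  have hNp := ne_of_gt ct.Np_pos
  split_ifs with h
  · field_simp; ring
  · field_simp; ring

lemma cb_eq_pp {j : Fin n} (h : (j:ℕ) < r) : ct.cb j = ct.Np * ct.pp j := by
  have hNp : ct.Np ≠ 0 := ne_of_gt ct.Np_pos
  rw [pp, if_pos h, mul_div_cancel₀ _ hNp]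

lemma cb_eq_pt {j : Fin n} (h : ¬ (j:ℕ) < r) : ct.cb j = -(ct.Np * ct.pt j) := by
  have hNp : ct.Np ≠ 0 := ne_of_gt ct.Np_pos
  rw [pt, if_neg h, ct.Nt_eq_Np, mul_div_cancel₀ _ hNp, neg_neg]

lemma val_pp_pos : 0 < ct.val ct.pp := by
  set a : ℝ := - Cfun ct.pp with ha
  set b : ℝ := - Cfun ct.pt with hb
  set E : ℝ := Real.exp a + Real.exp b with hE
  have hEpos : 0 < E := by positivity
  have hEgt : Real.exp a < E := by
    rw [hE]
    nlinarith [Real.exp_pos b]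
  set lam : ℝ := Real.exp a / E with hlam
  have hlampos : 0 < lam := div_pos (Real.exp_pos _) hEpos
  have hlam1 : 1 - lam = Real.exp b / E := by
    rw [hlam, hE]
    field_simp; ring
  have hlam1pos : 0 < 1 - lam := by rw [hlam1]; exact div_pos (Real.exp_pos _) hEpos
  have hloglam : Real.log lam = a - Real.log E := by
    rw [hlam, Real.log_div (Real.exp_ne_zero _) (ne_of_gt hEpos), Real.log_exp]
  have hloglam1 : Real.log (1 - lam) = b - Real.log E := by
    rw [hlam1, Real.log_div (Real.exp_ne_zero _) (ne_of_gt hEpos), Real.log_exp]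
  set y : Fin n → ℝ := fun i => if (i:ℕ) < r then lam * ct.pp i else (1 - lam) * ct.pt i
    with hy
  have hypos : ∀ i, 0 < y i := by
    intro i
    rw [hy]
    dsimp only
    split_ifs with h
    · exact mul_pos hlampos (ct.pp_pos h)
    · exact mul_pos hlam1pos (ct.pt_pos h)
  have hysum : ∑ i, y i = 1 := by
    have h : ∀ i : Fin n, y i = lam * ct.pp i + (1 - lam) * ct.pt i := by
      intro i
      rw [hy]
      dsimp only
      split_ifs with h
      · rw [ct.pt_zero h]; ring
      · rw [ct.pp_zero h]; ring
    rw [Finset.sum_congr rfl (fun i _ => h i), Finset.sum_add_distrib, ← Finset.mul_sum,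
      ← Finset.mul_sum, ct.pp_sum, ct.pt_sum]
    ring
  have hymem : y ∈ simplex (Fin n) := ⟨fun i => le_of_lt (hypos i), hysum⟩
  have hfib : ∀ j, y j = ct.pp j + (-(1 - lam) / ct.Np) * ct.cb j := by
    intro j
    rw [hy]
    dsimp only
    have hfj := ct.pt_fiber j
    have hNp := ne_of_gt ct.Np_pos
    split_ifs with h
    · rw [ct.cb_eq_pp h]
      field_simp
      ring
    · rw [ct.pp_zero h] at hfj ⊢
      rw [hfj, ct.cb_eq_pt h]
      field_simp
      ring
  -- the critical equation
  have hcrit : ∑ j, ct.cb j * Real.log (y j) = 0 := by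
    have hterm : ∀ j : Fin n, ct.cb j * Real.log (y j)
        = (if (j:ℕ) < r then ct.cb j * Real.log lam else ct.cb j * Real.log (1 - lam))
          + (ct.Np * (ct.pp j * Real.log (ct.pp j))
              - ct.Np * (ct.pt j * Real.log (ct.pt j))) := by
      intro j
      rw [hy]
      dsimp only
      split_ifs with h
      · rw [Real.log_mul (ne_of_gt hlampos) (ne_of_gt (ct.pp_pos h)), ct.pt_zero h,
          ct.cb_eq_pp h]
        simp
        ring
      · rw [Real.log_mul (ne_of_gt hlam1pos) (ne_of_gt (ct.pt_pos h)), ct.pp_zero h,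
          ct.cb_eq_pt h]
        simp
        ring
    have hU : ∀ j : Fin n, (if (j:ℕ) < r then ct.cb j * Real.log lam
        else ct.cb j * Real.log (1 - lam))
        = Real.log lam * (if (j:ℕ) < r then ct.cb j else 0)
          + Real.log (1 - lam) * (if (j:ℕ) < r then 0 else ct.cb j) := by
      intro j; split_ifs <;> ring
    have hsplit2 : ∑ j : Fin n, (if (j:ℕ) < r then (0:ℝ) else ct.cb j) = - ct.Np := by
      have h : ∀ j : Fin n, (if (j:ℕ) < r then (0:ℝ) else ct.cb j)
          = ct.cb j - (if (j:ℕ) < r then ct.cb j else 0) := by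
        intro j; split_ifs <;> ring
      rw [Finset.sum_congr rfl (fun j _ => h j), Finset.sum_sub_distrib, ct.hsumc, ← Np]
      ring
    rw [Finset.sum_congr rfl (fun j _ => hterm j), Finset.sum_add_distrib,
      Finset.sum_congr rfl (fun j _ => hU j), Finset.sum_add_distrib,
      ← Finset.mul_sum, ← Finset.mul_sum, ← Np, hsplit2, Finset.sum_sub_distrib,
      ← Finset.mul_sum, ← Finset.mul_sum, ← Cfun, ← Cfun]
    have hCp : Cfun ct.pp = -a := by rw [ha]; ring
    have hCt : Cfun ct.pt = -b := by rw [hb]; ring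
    rw [hCp, hCt, hloglam, hloglam1]
    ring
  have hCy : Cfun y = - Real.log E := by
    have hterm : ∀ j : Fin n, y j * Real.log (y j)
        = lam * Real.log lam * ct.pp j + lam * (ct.pp j * Real.log (ct.pp j))
          + ((1 - lam) * Real.log (1 - lam) * ct.pt j
              + (1 - lam) * (ct.pt j * Real.log (ct.pt j))) := by
      intro j
      rw [hy]
      dsimp only
      split_ifs with h
      · rw [Real.log_mul (ne_of_gt hlampos) (ne_of_gt (ct.pp_pos h)), ct.pt_zero h]
        simp
        ring
      · rw [Real.log_mul (ne_of_gt hlam1pos) (ne_of_gt (ct.pt_pos h)), ct.pp_zero h]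
        simp
        ring
    rw [Cfun, Finset.sum_congr rfl (fun j _ => hterm j), Finset.sum_add_distrib,
      Finset.sum_add_distrib, Finset.sum_add_distrib, ← Finset.mul_sum, ← Finset.mul_sum,
      ← Finset.mul_sum, ← Finset.mul_sum, ct.pp_sum, ct.pt_sum, ← Cfun, ← Cfun]
    have hCp : Cfun ct.pp = -a := by rw [ha]; ring
    have hCt : Cfun ct.pt = -b := by rw [hb]; ring
    rw [hCp, hCt, hloglam, hloglam1]
    ring
  have hpsiy : ct.psi y = - Cfun y := ct.psi_eq_of_crit hymem hypos hcrit
  have hpsip : ct.psi ct.pp = ct.psi y := (ct.psi_fiber hfib).symm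
  rw [val, hpsip, hpsiy, hCy]
  have hgt : a < Real.log E := by
    have := Real.log_lt_log (Real.exp_pos a) hEgt
    rwa [Real.log_exp] at this
  have hCpa : Cfun ct.pp = -a := by rw [ha]; ring
  rw [hCpa]
  linarith

/-! ### Interior critical point on a nondegenerate fiber -/

set_option maxHeartbeats 1600000 in
lemma exists_crit {x : Fin n → ℝ} (hx : x ∈ simplex (Fin n))
    (hnd : ¬((∃ i : Fin n, (i:ℕ) < r ∧ x i = 0) ∧ (∃ i : Fin n, r ≤ (i:ℕ) ∧ x i = 0))) :
    ∃ s₀ : ℝ, (∀ i, 0 < x i + s₀ * ct.cb i) ∧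
      ∑ j, ct.cb j * Real.log (x j + s₀ * ct.cb j) = 0 := by
  classical
  set sP : Finset (Fin n) := Finset.univ.filter (fun i : Fin n => (i:ℕ) < r) with hsP
  set sN : Finset (Fin n) := Finset.univ.filter (fun i : Fin n => r ≤ (i:ℕ)) with hsN
  have hPne : sP.Nonempty :=
    ⟨⟨0, ct.hn⟩, Finset.mem_filter.mpr ⟨Finset.mem_univ _, ct.hr⟩⟩
  have hNne : sN.Nonempty :=
    ⟨⟨r, ct.hrn⟩, Finset.mem_filter.mpr ⟨Finset.mem_univ _, le_refl r⟩⟩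
  set sm : ℝ := sP.sup' hPne (fun i => -(x i / ct.cb i)) with hsm
  set sp : ℝ := sN.inf' hNne (fun i => x i / (-(ct.cb i))) with hsp
  have hm0 : sm ≤ 0 := by
    refine Finset.sup'_le hPne _ (fun i hi => ?_)
    have hir := (Finset.mem_filter.mp hi).2
    have := div_nonneg (hx.1 i) (le_of_lt (ct.cb_pos hir))
    linarith
  have hp0 : 0 ≤ sp := by
    refine Finset.le_inf' hNne _ (fun i hi => ?_)
    have hir := (Finset.mem_filter.mp hi).2
    have hneg := ct.cb_neg hir
    exact div_nonneg (hx.1 i) (by linarith)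
  have hchar : ∀ s : ℝ, sm < s → s < sp → ∀ i, 0 < x i + s * ct.cb i := by
    intro s h1 h2 i
    rcases lt_or_ge (i:ℕ) r with hir | hir
    · have hmem : i ∈ sP := Finset.mem_filter.mpr ⟨Finset.mem_univ _, hir⟩
      have hle : -(x i / ct.cb i) ≤ sm := by
        rw [hsm]; exact Finset.le_sup' (fun i => -(x i / ct.cb i)) hmem
      have hcb := ct.cb_pos hir
      have : -(x i / ct.cb i) < s := lt_of_le_of_lt hle h1
      have h3 : -(x i / ct.cb i) * ct.cb i < s * ct.cb i :=
        mul_lt_mul_of_pos_right this hcb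
      rw [neg_mul, div_mul_cancel₀ _ (ne_of_gt hcb)] at h3
      linarith
    · have hmem : i ∈ sN := Finset.mem_filter.mpr ⟨Finset.mem_univ _, hir⟩
      have hle : sp ≤ x i / (-(ct.cb i)) := by
        rw [hsp]; exact Finset.inf'_le (fun i => x i / (-(ct.cb i))) hmem
      have hcb := ct.cb_neg hir
      have hpos : 0 < -(ct.cb i) := by linarith
      have : s < x i / (-(ct.cb i)) := lt_of_lt_of_le h2 hle
      have h3 : s * (-(ct.cb i)) < x i := (lt_div_iff₀ hpos).mp this
      nlinarith
  have hlt : sm < sp := by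
    by_cases hP : ∃ i : Fin n, (i:ℕ) < r ∧ x i = 0
    · have hQ : ¬ ∃ i : Fin n, r ≤ (i:ℕ) ∧ x i = 0 := fun hQ => hnd ⟨hP, hQ⟩
      push_neg at hQ
      have hsppos : 0 < sp := by
        rw [hsp, Finset.lt_inf'_iff]
        intro i hi
        have hir := (Finset.mem_filter.mp hi).2
        have hxi : 0 < x i := lt_of_le_of_ne (hx.1 i) (Ne.symm (hQ i hir))
        have hcb := ct.cb_neg hir
        exact div_pos hxi (by linarith)
      exact lt_of_le_of_lt hm0 hsppos
    · push_neg at hP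
      have hsmneg : sm < 0 := by
        rw [hsm, Finset.sup'_lt_iff]
        intro i hi
        have hir := (Finset.mem_filter.mp hi).2
        have hxi : 0 < x i := lt_of_le_of_ne (hx.1 i) (Ne.symm (hP i hir))
        have hcb := ct.cb_pos hir
        have := div_pos hxi hcb
        linarith
      exact lt_of_lt_of_le hsmneg hp0
  set m : ℝ := (sm + sp) / 2 with hm
  have hmlo : sm < m := by rw [hm]; linarith
  have hmhi : m < sp := by rw [hm]; linarith
  set G : ℝ → ℝ := fun s => ∑ j, ct.cb j * Real.log (x j + s * ct.cb j) with hG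
  -- choose v near sp with G v > 0
  obtain ⟨i₂, hi₂mem, hi₂⟩ := Finset.exists_mem_eq_inf' hNne (fun i => x i / (-(ct.cb i)))
  have hi₂r := (Finset.mem_filter.mp hi₂mem).2
  set γ : ℝ := -(ct.cb i₂) with hγ
  have hγpos : 0 < γ := by have := ct.cb_neg hi₂r; rw [hγ]; linarith
  have hxi₂ : x i₂ = sp * γ := by
    have h1 : sp = x i₂ / γ := by rw [hsp]; exact hi₂
    rw [h1, div_mul_cancel₀ _ (ne_of_gt hγpos)]
  set K : ℝ := ∑ j ∈ Finset.univ.erase i₂, ct.cb j * Real.log (x j + m * ct.cb j) with hK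
  have hGlb : ∀ s : ℝ, m ≤ s → s < sp →
      ct.cb i₂ * Real.log (x i₂ + s * ct.cb i₂) + K ≤ G s := by
    intro s hs1 hs2
    have hsm_s : sm < s := lt_of_lt_of_le hmlo hs1
    have hGs : G s = ct.cb i₂ * Real.log (x i₂ + s * ct.cb i₂)
        + ∑ j ∈ Finset.univ.erase i₂, ct.cb j * Real.log (x j + s * ct.cb j) := by
      rw [hG]
      exact (Finset.add_sum_erase _ _ (Finset.mem_univ i₂)).symm
    rw [hGs]
    have hmono : ∀ j ∈ Finset.univ.erase i₂,
        ct.cb j * Real.log (x j + m * ct.cb j) ≤ ct.cb j * Real.log (x j + s * ct.cb j) := by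
      intro j hj
      have hposm : 0 < x j + m * ct.cb j := hchar m hmlo hmhi j
      have hposs : 0 < x j + s * ct.cb j := hchar s hsm_s hs2 j
      rcases lt_or_ge (j:ℕ) r with hjr | hjr
      · have hcb := ct.cb_pos hjr
        have hcoord : x j + m * ct.cb j ≤ x j + s * ct.cb j := by nlinarith
        exact mul_le_mul_of_nonneg_left (Real.log_le_log hposm hcoord) (le_of_lt hcb)
      · have hcb := ct.cb_neg hjr
        have hcoord : x j + s * ct.cb j ≤ x j + m * ct.cb j := by nlinarith
        have := Real.log_le_log hposs hcoord
        nlinarith [mul_le_mul_of_nonpos_left this (le_of_lt hcb)]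
    have := Finset.sum_le_sum hmono
    rw [← hK] at this
    linarith
  set ε : ℝ := min ((sp - m)/2) (Real.exp ((K - 1)/γ) / γ) with hε
  have hεpos : 0 < ε := lt_min (by linarith) (div_pos (Real.exp_pos _) hγpos)
  set v : ℝ := sp - ε with hv
  have hvm : m ≤ v := by
    have h1 : ε ≤ (sp - m)/2 := min_le_left _ _
    rw [hv]; linarith
  have hvsp : v < sp := by rw [hv]; linarith
  have hcb₂ : ct.cb i₂ = -γ := by rw [hγ]; ring
  have hcoordv : x i₂ + v * ct.cb i₂ = γ * ε := by
    rw [hxi₂, hcb₂, hv]; ring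
  have hGv : 0 < G v := by
    have hlb := hGlb v hvm hvsp
    have hloge : Real.log (γ * ε) ≤ (K - 1)/γ := by
      have h1 : γ * ε ≤ Real.exp ((K - 1)/γ) := by
        have h2 : ε ≤ Real.exp ((K - 1)/γ) / γ := min_le_right _ _
        calc γ * ε ≤ γ * (Real.exp ((K - 1)/γ) / γ) :=
              mul_le_mul_of_nonneg_left h2 (le_of_lt hγpos)
          _ = Real.exp ((K - 1)/γ) := by field_simp
      have h3 := Real.log_le_log (mul_pos hγpos hεpos) h1
      rwa [Real.log_exp] at h3
    have hterm : -K + 1 ≤ ct.cb i₂ * Real.log (x i₂ + v * ct.cb i₂) := by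
      rw [hcoordv, hcb₂]
      have h5 := mul_le_mul_of_nonneg_left hloge (le_of_lt hγpos)
      have h4 : γ * ((K - 1)/γ) = K - 1 := by field_simp
      rw [h4] at h5
      linarith
    linarith
  -- choose u near sm with G u < 0
  obtain ⟨i₁, hi₁mem, hi₁⟩ := Finset.exists_mem_eq_sup' hPne (fun i => -(x i / ct.cb i))
  have hi₁r := (Finset.mem_filter.mp hi₁mem).2
  set γ' : ℝ := ct.cb i₁ with hγ'
  have hγ'pos : 0 < γ' := ct.cb_pos hi₁r
  have hxi₁ : x i₁ = -sm * γ' := by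
    have h1 : sm = -(x i₁ / γ') := by rw [hsm]; exact hi₁
    rw [h1, neg_neg, div_mul_cancel₀ _ (ne_of_gt hγ'pos)]
  set K' : ℝ := ∑ j ∈ Finset.univ.erase i₁, ct.cb j * Real.log (x j + m * ct.cb j) with hK'
  have hGub : ∀ s : ℝ, sm < s → s ≤ m →
      G s ≤ ct.cb i₁ * Real.log (x i₁ + s * ct.cb i₁) + K' := by
    intro s hs1 hs2
    have hs_sp : s < sp := lt_of_le_of_lt hs2 hmhi
    have hGs : G s = ct.cb i₁ * Real.log (x i₁ + s * ct.cb i₁)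
        + ∑ j ∈ Finset.univ.erase i₁, ct.cb j * Real.log (x j + s * ct.cb j) := by
      rw [hG]
      exact (Finset.add_sum_erase _ _ (Finset.mem_univ i₁)).symm
    rw [hGs]
    have hmono : ∀ j ∈ Finset.univ.erase i₁,
        ct.cb j * Real.log (x j + s * ct.cb j) ≤ ct.cb j * Real.log (x j + m * ct.cb j) := by
      intro j hj
      have hposm : 0 < x j + m * ct.cb j := hchar m hmlo hmhi j
      have hposs : 0 < x j + s * ct.cb j := hchar s hs1 hs_sp j
      rcases lt_or_ge (j:ℕ) r with hjr | hjr
      · have hcb := ct.cb_pos hjr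
        have hcoord : x j + s * ct.cb j ≤ x j + m * ct.cb j := by nlinarith
        exact mul_le_mul_of_nonneg_left (Real.log_le_log hposs hcoord) (le_of_lt hcb)
      · have hcb := ct.cb_neg hjr
        have hcoord : x j + m * ct.cb j ≤ x j + s * ct.cb j := by nlinarith
        have := Real.log_le_log hposm hcoord
        nlinarith [mul_le_mul_of_nonpos_left this (le_of_lt hcb)]
    have := Finset.sum_le_sum hmono
    rw [← hK'] at this
    linarith
  set ε' : ℝ := min ((m - sm)/2) (Real.exp ((-K' - 1)/γ') / γ') with hε'
  have hε'pos : 0 < ε' := lt_min (by linarith) (div_pos (Real.exp_pos _) hγ'pos)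
  set u : ℝ := sm + ε' with hu
  have hum : u ≤ m := by
    have h1 : ε' ≤ (m - sm)/2 := min_le_left _ _
    rw [hu]; linarith
  have husm : sm < u := by rw [hu]; linarith
  have hcoordu : x i₁ + u * ct.cb i₁ = γ' * ε' := by
    rw [hxi₁, hγ', hu]; ring
  have hGu : G u < 0 := by
    have hub := hGub u husm hum
    have hloge : Real.log (γ' * ε') ≤ (-K' - 1)/γ' := by
      have h1 : γ' * ε' ≤ Real.exp ((-K' - 1)/γ') := by
        have h2 : ε' ≤ Real.exp ((-K' - 1)/γ') / γ' := min_le_right _ _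
        calc γ' * ε' ≤ γ' * (Real.exp ((-K' - 1)/γ') / γ') :=
              mul_le_mul_of_nonneg_left h2 (le_of_lt hγ'pos)
          _ = Real.exp ((-K' - 1)/γ') := by field_simp
      have h3 := Real.log_le_log (mul_pos hγ'pos hε'pos) h1
      rwa [Real.log_exp] at h3
    have hterm : ct.cb i₁ * Real.log (x i₁ + u * ct.cb i₁) ≤ -K' - 1 := by
      rw [hcoordu, ← hγ']
      have h5 := mul_le_mul_of_nonneg_left hloge (le_of_lt hγ'pos)
      have h4 : γ' * ((-K' - 1)/γ') = -K' - 1 := by field_simp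
      rw [h4] at h5
      linarith
    linarith
  have huv : u ≤ v := by
    calc u ≤ m := hum
      _ ≤ v := hvm
  have hGcont : ContinuousOn G (Set.Icc u v) := by
    refine continuousOn_finset_sum _ (fun j _ => ?_)
    refine ContinuousOn.mul continuousOn_const ?_
    refine ContinuousOn.log ?_ ?_
    · exact (continuous_const.add (continuous_id.mul continuous_const)).continuousOn
    · intro s hs
      have h1 : sm < s := lt_of_lt_of_le husm hs.1
      have h2 : s < sp := lt_of_le_of_lt hs.2 hvsp
      exact ne_of_gt (hchar s h1 h2 j)
  have hsub := intermediate_value_Ioo huv hGcont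
  have h0mem : (0:ℝ) ∈ Set.Ioo (G u) (G v) := ⟨hGu, hGv⟩
  obtain ⟨s₀, hs₀mem, hs₀⟩ := hsub h0mem
  refine ⟨s₀, fun i => ?_, hs₀⟩
  have h1 : sm < s₀ := lt_of_lt_of_le husm (le_of_lt hs₀mem.1)
  have h2 : s₀ < sp := lt_trans hs₀mem.2 hvsp
  exact hchar s₀ h1 h2 i

/-! ### First-order conditions at a maximizer -/

set_option maxHeartbeats 800000 in
lemma firstorder {x₀ y₀ : Fin n → ℝ} {s₀ : ℝ} (hx : x₀ ∈ simplex (Fin n))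
    (hy : y₀ ∈ simplex (Fin n)) (hypos : ∀ i, 0 < y₀ i)
    (hfib : ∀ j, y₀ j = x₀ j + s₀ * ct.cb j)
    (hcrit : ∑ j, ct.cb j * Real.log (y₀ j) = 0)
    (hmax : ∀ y ∈ simplex (Fin n), ct.val y ≤ ct.val x₀)
    {i j : Fin n} (hi : x₀ i ≠ 0) (hj : x₀ j ≠ 0) (hij : i ≠ j) :
    x₀ i * y₀ j = x₀ j * y₀ i := by
  classical
  have hxi : 0 < x₀ i := lt_of_le_of_ne (hx.1 i) (Ne.symm hi)
  have hxj : 0 < x₀ j := lt_of_le_of_ne (hx.1 j) (Ne.symm hj)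
  have hpsix : ct.psi x₀ = - Cfun y₀ := by
    rw [← ct.psi_fiber hfib]
    exact ct.psi_eq_of_crit hy hypos hcrit
  set w : Fin n → ℝ := fun k => (if k = i then (1:ℝ) else 0) - (if k = j then 1 else 0)
    with hw
  have hwi : w i = 1 := by simp [hw, hij]
  have hwj : w j = -1 := by simp [hw, Ne.symm hij]
  have hwo : ∀ k, k ≠ i → k ≠ j → w k = 0 := by
    intro k h1 h2; simp [hw, h1, h2]
  have hsumw : ∑ k, w k = 0 := by
    rw [hw, Finset.sum_sub_distrib]
    rw [Finset.sum_ite_eq' Finset.univ i (fun _ => (1:ℝ)),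
      Finset.sum_ite_eq' Finset.univ j (fun _ => (1:ℝ))]
    simp
  have hsumwh : ∀ h : Fin n → ℝ, ∑ k, w k * h k = h i - h j := by
    intro h
    have : ∀ k : Fin n, w k * h k
        = (if k = i then h k else 0) - (if k = j then h k else 0) := by
      intro k
      by_cases h1 : k = i
      · by_cases h2 : k = j
        · exact absurd (h1.symm.trans h2) hij
        · simp [hw, h1, h2, hij, Ne.symm hij]
      · by_cases h2 : k = j
        · simp [hw, h1, h2, hij, Ne.symm hij]
        · simp [hw, h1, h2]
    rw [Finset.sum_congr rfl (fun k _ => this k), Finset.sum_sub_distrib,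
      Finset.sum_ite_eq' Finset.univ i h, Finset.sum_ite_eq' Finset.univ j h]
    simp
  set e : ℝ := min (min (x₀ i) (x₀ j)) (min (y₀ i) (y₀ j)) with he
  have hepos : 0 < e := lt_min (lt_min hxi hxj) (lt_min (hypos i) (hypos j))
  have hmemx : ∀ t : ℝ, |t| ≤ e → (fun k => x₀ k + t * w k) ∈ simplex (Fin n) := by
    intro t ht
    have habs := abs_le.mp ht
    constructor
    · intro k
      dsimp only
      by_cases h1 : k = i
      · subst h1
        rw [hwi, mul_one]
        have : e ≤ x₀ k := le_trans (min_le_left _ _) (min_le_left _ _)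
        linarith [habs.1]
      · by_cases h2 : k = j
        · subst h2
          rw [hwj]
          have : e ≤ x₀ k := le_trans (min_le_left _ _) (min_le_right _ _)
          linarith [habs.2]
        · rw [hwo k h1 h2, mul_zero, add_zero]
          exact hx.1 k
    · dsimp only
      rw [Finset.sum_add_distrib, hx.2, ← Finset.mul_sum, hsumw, mul_zero, add_zero]
  have hmemy : ∀ t : ℝ, |t| ≤ e → (fun k => y₀ k + t * w k) ∈ simplex (Fin n) := by
    intro t ht
    have habs := abs_le.mp ht
    constructor
    · intro k
      dsimp only
      by_cases h1 : k = i
      · subst h1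
        rw [hwi, mul_one]
        have : e ≤ y₀ k := le_trans (min_le_right _ _) (min_le_left _ _)
        linarith [habs.1]
      · by_cases h2 : k = j
        · subst h2
          rw [hwj]
          have : e ≤ y₀ k := le_trans (min_le_right _ _) (min_le_right _ _)
          linarith [habs.2]
        · rw [hwo k h1 h2, mul_zero, add_zero]
          exact le_of_lt (hypos k)
    · dsimp only
      rw [Finset.sum_add_distrib, hy.2, ← Finset.mul_sum, hsumw, mul_zero, add_zero]
  set φ : ℝ → ℝ := fun t => Cfun (fun k => x₀ k + t * w k) - Cfun (fun k => y₀ k + t * w k)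
    with hφ
  have hloc : IsLocalMax φ 0 := by
    have hball : Metric.ball (0:ℝ) e ∈ nhds (0:ℝ) := Metric.ball_mem_nhds 0 hepos
    refine Filter.eventually_of_mem hball (fun t ht => ?_)
    have habs : |t| ≤ e := by
      rw [Metric.mem_ball, Real.dist_eq, sub_zero] at ht
      exact le_of_lt ht
    have hxt := hmemx t habs
    have hyt := hmemy t habs
    have hfibt : ∀ k, y₀ k + t * w k = (x₀ k + t * w k) + s₀ * ct.cb k := by
      intro k; rw [hfib k]; ring
    have h1 : ct.psi (fun k => x₀ k + t * w k) = ct.psi (fun k => y₀ k + t * w k) :=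
      (ct.psi_fiber hfibt).symm
    have h2 : - Cfun (fun k => y₀ k + t * w k) ≤ ct.psi (fun k => y₀ k + t * w k) :=
      ct.psi_ge hyt
    have h3 := hmax _ hxt
    have hval : ct.val x₀ = Cfun x₀ - Cfun y₀ := by
      rw [val, hpsix]; ring
    have hφt : φ t ≤ ct.val (fun k => x₀ k + t * w k) := by
      rw [hφ, val]
      dsimp only
      rw [h1]
      linarith
    have hφ0 : φ 0 = Cfun x₀ - Cfun y₀ := by
      rw [hφ]
      dsimp only
      simp only [zero_mul, add_zero]
    rw [hφ0]
    calc φ t ≤ ct.val (fun k => x₀ k + t * w k) := hφt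
      _ ≤ ct.val x₀ := h3
      _ = Cfun x₀ - Cfun y₀ := hval
  -- derivative of φ at 0
  have hdC : ∀ z : Fin n → ℝ, (∀ k, w k ≠ 0 → z k ≠ 0) →
      HasDerivAt (fun t => Cfun (fun k => z k + t * w k))
        (∑ k, w k * (Real.log (z k) + 1)) 0 := by
    intro z hz
    have : ∀ k ∈ Finset.univ, HasDerivAt (fun t : ℝ => (z k + t * w k) * Real.log (z k + t * w k))
        (w k * (Real.log (z k) + 1)) 0 := by
      intro k _
      by_cases hwk : w k = 0
      · simp only [hwk, mul_zero, add_zero, zero_mul]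
        exact hasDerivAt_const 0 _
      · have hzk : z k ≠ 0 := hz k hwk
        have hinner : HasDerivAt (fun t : ℝ => z k + t * w k) (w k) 0 := by
          have := ((hasDerivAt_id (0:ℝ)).mul_const (w k)).const_add (z k)
          simpa using this
        have hval : z k + 0 * w k = z k := by ring
        have houter : HasDerivAt (fun u : ℝ => u * Real.log u)
            (Real.log (z k) + 1) (z k + 0 * w k) := by
          rw [hval]
          exact Real.hasDerivAt_mul_log hzk
        have hcomp := HasDerivAt.comp 0 houter hinner
        have heq : (fun u : ℝ => u * Real.log u) ∘ (fun t => z k + t * w k)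
            = fun t : ℝ => (z k + t * w k) * Real.log (z k + t * w k) := rfl
        rw [heq] at hcomp
        rwa [mul_comm (Real.log (z k) + 1) (w k)] at hcomp
    have hsum := HasDerivAt.fun_sum this
    exact hsum
  have hdx : HasDerivAt (fun t => Cfun (fun k => x₀ k + t * w k))
      (Real.log (x₀ i) + 1 - (Real.log (x₀ j) + 1)) 0 := by
    have := hdC x₀ (fun k hwk => by
      by_cases h1 : k = i
      · subst h1; exact hi
      · by_cases h2 : k = j
        · subst h2; exact hj
        · exact absurd (hwo k h1 h2) hwk)
    rwa [hsumwh (fun k => Real.log (x₀ k) + 1)] at this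
  have hdy : HasDerivAt (fun t => Cfun (fun k => y₀ k + t * w k))
      (Real.log (y₀ i) + 1 - (Real.log (y₀ j) + 1)) 0 := by
    have := hdC y₀ (fun k _ => ne_of_gt (hypos k))
    rwa [hsumwh (fun k => Real.log (y₀ k) + 1)] at this
  have hdφ : HasDerivAt φ
      ((Real.log (x₀ i) + 1 - (Real.log (x₀ j) + 1))
        - (Real.log (y₀ i) + 1 - (Real.log (y₀ j) + 1))) 0 := hdx.sub hdy
  have hzero := hloc.deriv_eq_zero
  rw [hdφ.deriv] at hzero
  have hlogeq : Real.log (x₀ i) + Real.log (y₀ j) = Real.log (x₀ j) + Real.log (y₀ i) := by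
    linarith
  have := congrArg Real.exp hlogeq
  rwa [Real.exp_add, Real.exp_add, Real.exp_log hxi, Real.exp_log hxj,
    Real.exp_log (hypos i), Real.exp_log (hypos j)] at this

/-! ### Existence of a maximizer -/

lemma exists_max : ∃ x₀ ∈ simplex (Fin n), ∀ y ∈ simplex (Fin n), ct.val y ≤ ct.val x₀ := by
  classical
  have hne : (ct.val '' simplex (Fin n)).Nonempty := ⟨_, ⟨ct.pp, ct.pp_mem, rfl⟩⟩
  have hub : ∀ y ∈ simplex (Fin n), ct.val y ≤ Real.log (ct.Zf 0) := by
    intro y hy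
    have h1 : Cfun y ≤ 0 := Cfun_nonpos hy
    have h2 : ct.psi y ≤ ct.Fn y 0 := ct.psi_le hy 0
    have h3 : ct.Fn y 0 = Real.log (ct.Zf 0) := by
      rw [Fn]
      have : ∀ j : Fin n, y j * ct.dotA 0 j = 0 := by
        intro j
        have : ct.dotA 0 j = 0 := by
          rw [dotA]
          exact Finset.sum_eq_zero (fun i _ => by simp)
        rw [this, mul_zero]
      rw [Finset.sum_congr rfl (fun j _ => this j)]
      simp
    rw [val]
    linarith
  have hbdd : BddAbove (ct.val '' simplex (Fin n)) := by
    refine ⟨Real.log (ct.Zf 0), fun z hz => ?_⟩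
    obtain ⟨y, hy, rfl⟩ := hz
    exact hub y hy
  set S : ℝ := sSup (ct.val '' simplex (Fin n)) with hS
  have hseq : ∀ k : ℕ, ∃ y, y ∈ simplex (Fin n) ∧ S - 1/(k+1) < ct.val y := by
    intro k
    have h1 : S - 1/(k+1) < S := by
      have : (0:ℝ) < 1/(k+1) := by positivity
      linarith
    obtain ⟨z, hz, hz2⟩ := exists_lt_of_lt_csSup hne h1
    obtain ⟨y, hy, rfl⟩ := hz
    exact ⟨y, hy, hz2⟩
  choose yseq hymem hygt using hseq
  have hyle : ∀ k : ℕ, ct.val (yseq k) ≤ S := by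
    intro k
    exact le_csSup hbdd ⟨yseq k, hymem k, rfl⟩
  have htlo : Filter.Tendsto (fun k : ℕ => S - 1/(k+1)) Filter.atTop (nhds S) := by
    have h0 : Filter.Tendsto (fun k : ℕ => 1/((k:ℝ)+1)) Filter.atTop (nhds 0) :=
      tendsto_one_div_add_atTop_nhds_zero_nat
    have := (tendsto_const_nhds (x := S) (f := Filter.atTop (α := ℕ))).sub h0
    rwa [sub_zero] at this
  have htends : Filter.Tendsto (fun k : ℕ => ct.val (yseq k)) Filter.atTop (nhds S) := by
    refine tendsto_of_tendsto_of_tendsto_of_le_of_le htlo tendsto_const_nhds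
      (fun k => le_of_lt (hygt k)) (fun k => hyle k)
  obtain ⟨x₀, hx₀mem, ψf, hψmono, hconv⟩ := isCompact_simplex.tendsto_subseq hymem
  have hsublim : Filter.Tendsto (fun k : ℕ => ct.val (yseq (ψf k))) Filter.atTop (nhds S) :=
    htends.comp hψmono.tendsto_atTop
  have hSle : S ≤ ct.val x₀ := by
    refine le_of_forall_pos_le_add (fun ε hε => ?_)
    have h1 : ct.psi x₀ < ct.psi x₀ + ε/2 := by linarith
    obtain ⟨θ, hθ⟩ := exists_lt_of_ciInf_lt h1
    have hcontu : Continuous (fun y : Fin n → ℝ => Cfun y + ct.Fn y θ) := by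
      refine continuous_Cfun.add ?_
      refine continuous_const.sub ?_
      exact continuous_finset_sum _ (fun j _ => (continuous_apply j).mul continuous_const)
    have hle : ∀ k : ℕ, ct.val (yseq (ψf k))
        ≤ Cfun (yseq (ψf k)) + ct.Fn (yseq (ψf k)) θ := by
      intro k
      rw [val]
      have := ct.psi_le (hymem (ψf k)) θ
      linarith
    have hlim2 : Filter.Tendsto (fun k : ℕ => Cfun (yseq (ψf k)) + ct.Fn (yseq (ψf k)) θ)
        Filter.atTop (nhds (Cfun x₀ + ct.Fn x₀ θ)) :=
      (hcontu.tendsto x₀).comp hconv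
    have h2 : S ≤ Cfun x₀ + ct.Fn x₀ θ :=
      le_of_tendsto_of_tendsto' hsublim hlim2 hle
    rw [val]
    linarith
  exact ⟨x₀, hx₀mem, fun y hy => le_trans (le_csSup hbdd ⟨y, hy, rfl⟩) hSle⟩

/-! ### Characterization of maximizers -/

set_option maxHeartbeats 800000 in
lemma maximizer_char {x₀ : Fin n → ℝ} (hx : x₀ ∈ simplex (Fin n))
    (hmax : ∀ y ∈ simplex (Fin n), ct.val y ≤ ct.val x₀) :
    x₀ = ct.pp ∨ x₀ = ct.pt := by
  classical
  have hvp : 0 < ct.val ct.pp := ct.val_pp_pos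
  have hvx : 0 < ct.val x₀ := lt_of_lt_of_le hvp (hmax _ ct.pp_mem)
  by_cases hsing : (∃ i : Fin n, (i:ℕ) < r ∧ x₀ i = 0) ∧ (∃ i : Fin n, r ≤ (i:ℕ) ∧ x₀ i = 0)
  · exfalso
    have := ct.psi_singleton hx hsing.1 hsing.2
    rw [val] at hvx
    linarith
  · obtain ⟨s₀, hpos, hcrit⟩ := ct.exists_crit hx hsing
    set y₀ : Fin n → ℝ := fun jj => x₀ jj + s₀ * ct.cb jj with hy₀
    have hfib : ∀ j, y₀ j = x₀ j + s₀ * ct.cb j := fun j => rfl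
    have hy₀pos : ∀ i, 0 < y₀ i := fun i => by rw [hfib i]; exact hpos i
    have hysum : ∑ j, y₀ j = 1 := by
      rw [hy₀]
      dsimp only
      rw [Finset.sum_add_distrib, hx.2, ← Finset.mul_sum, ct.hsumc, mul_zero, add_zero]
    have hymem : y₀ ∈ simplex (Fin n) := ⟨fun i => le_of_lt (hy₀pos i), hysum⟩
    have hpsix : ct.psi x₀ = - Cfun y₀ := by
      rw [← ct.psi_fiber hfib]
      exact ct.psi_eq_of_crit hymem hy₀pos hcrit
    by_cases hs0 : s₀ = 0
    · exfalso
      have hyx : y₀ = x₀ := by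
        funext k
        rw [hfib k, hs0]
        ring
      rw [val, hpsix, hyx] at hvx
      linarith
    · have hratio : ∀ k l : Fin n, x₀ k ≠ 0 → x₀ l ≠ 0 → x₀ k * y₀ l = x₀ l * y₀ k := by
        intro k l hk hl
        by_cases hkl : k = l
        · subst hkl; ring
        · exact ct.firstorder hx hymem hy₀pos hfib hcrit hmax hk hl hkl
      have hex : ∃ k : Fin n, x₀ k ≠ 0 := by
        by_contra h
        push_neg at h
        have : ∑ j, x₀ j = 0 := Finset.sum_eq_zero (fun k _ => h k)
        rw [hx.2] at this
        norm_num at this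
      obtain ⟨i₁, hi₁⟩ := hex
      set β : ℝ := x₀ i₁ / y₀ i₁ with hβ
      have hβk : ∀ k, x₀ k ≠ 0 → x₀ k = β * y₀ k := by
        intro k hk
        have h1 := hratio k i₁ hk hi₁
        have h2 : y₀ i₁ ≠ 0 := ne_of_gt (hy₀pos i₁)
        rw [hβ]
        field_simp
        linarith [h1]
      have hon : ∀ k, x₀ k ≠ 0 → (β - 1) * y₀ k = -s₀ * ct.cb k := by
        intro k hk
        have h1 := hβk k hk
        have h2 := hfib k
        linear_combination - h1 - h2
      have hβne : β ≠ 1 := by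
        intro hβ1
        have h1 := hon i₁ hi₁
        rw [hβ1] at h1
        have h0 : -s₀ * ct.cb i₁ = 0 := by linear_combination - h1
        rcases mul_eq_zero.mp h0 with h | h
        · exact hs0 (neg_eq_zero.mp h)
        · exact ct.cb_ne h
      have hβ1ne : β - 1 ≠ 0 := sub_ne_zero.mpr hβne
      have hoff : ∀ k, x₀ k = 0 → y₀ k = s₀ * ct.cb k := by
        intro k hk
        rw [hfib k, hk, zero_add]
      rcases lt_or_gt_of_ne hs0 with hsneg | hspos
      · -- s₀ < 0 : maximizer is pp
        left
        have hsuppr : ∀ k : Fin n, (k:ℕ) < r → x₀ k ≠ 0 := by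
          intro k hkr hk0
          have h2 := hpos k
          rw [hk0, zero_add] at h2
          have h3 := ct.cb_pos hkr
          nlinarith
        set k₀ : Fin n := ⟨0, ct.hn⟩ with hk₀
        have hk₀r : (k₀ : ℕ) < r := ct.hr
        have hβgt : 1 < β := by
          by_contra hle
          push_neg at hle
          have h1 := hon k₀ (hsuppr k₀ hk₀r)
          have h2 := hy₀pos k₀
          have h3 := ct.cb_pos hk₀r
          have h4 : 0 < -s₀ * ct.cb k₀ := mul_pos (neg_pos.mpr hsneg) h3
          have h5 : (β - 1) * y₀ k₀ ≤ 0 :=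
            mul_nonpos_of_nonpos_of_nonneg (by linarith) (le_of_lt h2)
          linarith
        have hsupp : ∀ k : Fin n, x₀ k ≠ 0 → (k:ℕ) < r := by
          intro k hk
          by_contra hge
          have h1 := hon k hk
          have h2 := hy₀pos k
          have h3 := ct.cb_neg (le_of_not_gt hge)
          have h4 : -s₀ * ct.cb k < 0 := mul_neg_of_pos_of_neg (neg_pos.mpr hsneg) h3
          have h5 : 0 < (β - 1) * y₀ k := mul_pos (by linarith) h2
          linarith
        set γ : ℝ := β * (-s₀) / (β - 1) with hγ
        have hxk : ∀ k : Fin n, (k:ℕ) < r → x₀ k = γ * ct.cb k := by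
          intro k hkr
          have hk := hsuppr k hkr
          have h1 := hβk k hk
          have h2 := hon k hk
          have h4 : y₀ k = -s₀ * ct.cb k / (β - 1) := by
            rw [eq_div_iff hβ1ne]
            linear_combination h2
          rw [hγ, h1, h4]
          ring
        have hxk0 : ∀ k : Fin n, ¬ (k:ℕ) < r → x₀ k = 0 := by
          intro k hkr
          by_contra hk
          exact hkr (hsupp k hk)
        have hsum1 : γ * ct.Np = 1 := by
          have h1 := hx.2
          have h2 : ∀ k : Fin n, x₀ k = γ * (if (k:ℕ) < r then ct.cb k else 0) := by
            intro k
            by_cases hkr : (k:ℕ) < r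
            · rw [if_pos hkr]; exact hxk k hkr
            · rw [if_neg hkr, mul_zero]; exact hxk0 k hkr
          rw [Finset.sum_congr rfl (fun k _ => h2 k), ← Finset.mul_sum, ← Np] at h1
          exact h1
        have hNp : ct.Np ≠ 0 := ne_of_gt ct.Np_pos
        have hγeq : γ = 1 / ct.Np := by
          rw [eq_div_iff hNp]
          exact hsum1
        funext k
        rw [pp]
        by_cases hkr : (k:ℕ) < r
        · rw [if_pos hkr, hxk k hkr, hγeq]
          ring
        · rw [if_neg hkr]
          exact hxk0 k hkr
      · -- s₀ > 0 : maximizer is pt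
        right
        have hsuppr : ∀ k : Fin n, r ≤ (k:ℕ) → x₀ k ≠ 0 := by
          intro k hkr hk0
          have h2 := hpos k
          rw [hk0, zero_add] at h2
          have h3 := ct.cb_neg hkr
          nlinarith
        set k₁ : Fin n := ⟨r, ct.hrn⟩ with hk₁
        have hk₁r : r ≤ (k₁ : ℕ) := le_refl r
        have hβgt : 1 < β := by
          by_contra hle
          push_neg at hle
          have h1 := hon k₁ (hsuppr k₁ hk₁r)
          have h2 := hy₀pos k₁
          have h3 := ct.cb_neg hk₁r
          have h4 : 0 < -s₀ * ct.cb k₁ := mul_pos_of_neg_of_neg (by linarith) h3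
          have h5 : (β - 1) * y₀ k₁ ≤ 0 :=
            mul_nonpos_of_nonpos_of_nonneg (by linarith) (le_of_lt h2)
          linarith
        have hsupp : ∀ k : Fin n, x₀ k ≠ 0 → ¬ (k:ℕ) < r := by
          intro k hk hlt
          have h1 := hon k hk
          have h2 := hy₀pos k
          have h3 := ct.cb_pos hlt
          have h4 : -s₀ * ct.cb k < 0 := mul_neg_of_neg_of_pos (by linarith) h3
          have h5 : 0 < (β - 1) * y₀ k := mul_pos (by linarith) h2
          linarith
        set γ : ℝ := β * s₀ / (β - 1) with hγ
        have hxk : ∀ k : Fin n, ¬ (k:ℕ) < r → x₀ k = γ * (-(ct.cb k)) := by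
          intro k hkr
          have hk := hsuppr k (le_of_not_gt hkr)
          have h1 := hβk k hk
          have h2 := hon k hk
          have h4 : y₀ k = -s₀ * ct.cb k / (β - 1) := by
            rw [eq_div_iff hβ1ne]
            linear_combination h2
          rw [hγ, h1, h4]
          ring
        have hxk0 : ∀ k : Fin n, (k:ℕ) < r → x₀ k = 0 := by
          intro k hkr
          by_contra hk
          exact (hsupp k hk) hkr
        have hsum1 : γ * ct.Nt = 1 := by
          have h1 := hx.2
          have h2 : ∀ k : Fin n, x₀ k = γ * (if (k:ℕ) < r then 0 else -(ct.cb k)) := by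
            intro k
            by_cases hkr : (k:ℕ) < r
            · rw [if_pos hkr, mul_zero]; exact hxk0 k hkr
            · rw [if_neg hkr]; exact hxk k hkr
          rw [Finset.sum_congr rfl (fun k _ => h2 k), ← Finset.mul_sum, ← Nt] at h1
          exact h1
        have hNt : ct.Nt ≠ 0 := ne_of_gt ct.Nt_pos
        have hγeq : γ = 1 / ct.Nt := by
          rw [eq_div_iff hNt]
          exact hsum1
        funext k
        rw [pt]
        by_cases hkr : (k:ℕ) < r
        · rw [if_pos hkr]
          exact hxk0 k hkr
        · rw [if_neg hkr, hxk k hkr, hγeq]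
          ring
end Ctx
end Stmt7Aux

/-- For a codimension-one toric model (rank `d = n−1`, kernel spanned by an
integer vector `c` positive on the first `r` coordinates and negative on the rest), the maximum
divergence is `max(D(p), D(p̃))` for the two normalized points `p, p̃` supported on the positive
resp. negative part of `c`, and every global maximizer equals `p` or `p̃`. -/
theorem stmt7 {d n r : ℕ} (hdn : d + 1 = n) (hr : 0 < r) (hrn : r < n)
    (A : Matrix (Fin d) (Fin n) ℕ)
    (hrank : (A.map (Nat.cast : ℕ → ℝ)).rank = d)
    (hone : ∃ cc : Fin d → ℝ, ∀ j, ∑ i, cc i * (A i j : ℝ) = 1)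
    (c : Fin n → ℤ)
    (hker : LinearMap.ker (A.map (Nat.cast : ℕ → ℝ)).mulVecLin
      = Submodule.span ℝ {fun i => (c i : ℝ)})
    (hcpos : ∀ i : Fin n, (i : ℕ) < r → 0 < c i)
    (hcneg : ∀ i : Fin n, r ≤ (i : ℕ) → c i < 0)
    (M : Set (Fin n → ℝ)) (hM : M = closure (EA A))
    (p ptil : Fin n → ℝ)
    (hp : ∀ i : Fin n, p i =
      if (i : ℕ) < r then (c i : ℝ) / (∑ j : Fin n, if j.val < r then (c j : ℝ) else 0) else 0)
    (hptil : ∀ i : Fin n, ptil i =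
      if (i : ℕ) < r then 0 else (-(c i : ℝ)) / (∑ j : Fin n, if j.val < r then 0 else (-(c j : ℝ)))) :
    (⨆ x ∈ simplex (Fin n), divFrom M x) = max (divFrom M p) (divFrom M ptil) ∧
    ∀ x ∈ simplex (Fin n), (∀ y ∈ simplex (Fin n), divFrom M y ≤ divFrom M x) →
      x = p ∨ x = ptil := by
  classical
  let ct : Stmt7Aux.Ctx d n r := ⟨A, c, hdn, hr, hrn, hrank, hone, hker, hcpos, hcneg⟩
  have hpp : p = ct.pp := by
    funext i
    rw [hp i]
    rfl
  have hpt : ptil = ct.pt := by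
    funext i
    rw [hptil i]
    rfl
  have hMc : M = closure (EA ct.A) := hM
  have hdiv : ∀ y, y ∈ simplex (Fin n) → divFrom M y = ((ct.val y : ℝ) : EReal) := by
    intro y hy
    rw [hMc]
    exact ct.divFrom_eq hy
  have hppmem : p ∈ simplex (Fin n) := by rw [hpp]; exact ct.pp_mem
  have hptmem : ptil ∈ simplex (Fin n) := by rw [hpt]; exact ct.pt_mem
  obtain ⟨x₀, hx₀, hmax⟩ := ct.exists_max
  have hchar := ct.maximizer_char hx₀ hmax
  constructor
  · apply le_antisymm
    · refine iSup₂_le fun x hx => ?_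
      rw [hdiv x hx]
      have h1 : ct.val x ≤ ct.val x₀ := hmax x hx
      rcases hchar with h | h
      · have h2 : divFrom M p = ((ct.val x₀ : ℝ) : EReal) := by
          rw [hdiv p hppmem, hpp, h]
        calc ((ct.val x : ℝ) : EReal) ≤ ((ct.val x₀ : ℝ) : EReal) :=
              EReal.coe_le_coe_iff.mpr h1
          _ = divFrom M p := h2.symm
          _ ≤ max (divFrom M p) (divFrom M ptil) := le_max_left _ _
      · have h2 : divFrom M ptil = ((ct.val x₀ : ℝ) : EReal) := by
          rw [hdiv ptil hptmem, hpt, h]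
        calc ((ct.val x : ℝ) : EReal) ≤ ((ct.val x₀ : ℝ) : EReal) :=
              EReal.coe_le_coe_iff.mpr h1
          _ = divFrom M ptil := h2.symm
          _ ≤ max (divFrom M p) (divFrom M ptil) := le_max_right _ _
    · refine max_le ?_ ?_
      · exact le_iSup₂ (f := fun x (_ : x ∈ simplex (Fin n)) => divFrom M x) p hppmem
      · exact le_iSup₂ (f := fun x (_ : x ∈ simplex (Fin n)) => divFrom M x) ptil hptmem
  · intro x hx hmx
    have hmax' : ∀ y ∈ simplex (Fin n), ct.val y ≤ ct.val x := by
      intro y hy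
      have := hmx y hy
      rw [hdiv y hy, hdiv x hx, EReal.coe_le_coe_iff] at this
      exact this
    rcases ct.maximizer_char hx hmax' with h | h
    · exact Or.inl (h.trans hpp.symm)
    · exact Or.inr (h.trans hpt.symm)
end
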